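/- arXiv:1208.1026 — 7 statements merged into one kernel-verified Lean document; each statement's English description precedes it below -/
import Mathlib

section
/- For every finite subset S ⊂ ℝ² and every ε > 0, there exists T > 0 such that for every t > T there is a rotation ρ of ℝ² about the origin with dist(ρ(t·z), ℤ²) < ε for all z ∈ S. -/
open Complex Metric

def intLattice (k : ℕ) : Set (EuclideanSpace ℝ (Fin k)) :=
  {v | ∀ i, ∃ n : ℤ, v i = (n : ℝ)}

noncomputable def rot (θ : ℝ) (v : EuclideanSpace ℝ (Fin 2)) : EuclideanSpace ℝ (Fin 2) :=
  WithLp.toLp 2 ![Real.cos θ * v 0 - Real.sin θ * v 1, Real.sin θ * v 0 + Real.cos θ * v 1]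
open scoped Real
open intervalIntegral

noncomputable section AuxSTall


lemma aux_sin_lower {σ θ : ℝ} (hσ : 0 < σ) (hσ' : σ ≤ π/4) (h1 : σ ≤ θ) (h2 : θ ≤ π - σ) :
    Real.sin σ ≤ Real.sin θ := by
  have hpi := Real.pi_pos
  rcases le_total θ (π/2) with h | h
  · exact Real.strictMonoOn_sin.monotoneOn ⟨by linarith, by linarith⟩ ⟨by linarith, by linarith⟩ h1
  · rw [← Real.sin_pi_sub θ]
    exact Real.strictMonoOn_sin.monotoneOn ⟨by linarith, by linarith⟩ ⟨by linarith, by linarith⟩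
      (by linarith)

lemma aux_osc_mid (R σ : ℝ) (hR : 0 < R) (hσ : 0 < σ) (hσ' : σ ≤ π/4) :
    ‖∫ θ in σ..(π - σ), Complex.exp ((R * Real.cos θ : ℝ) * Complex.I)‖ ≤
      2 / (R * Real.sin σ) + π / (R * Real.sin σ ^ 2) := by
  have hpi := Real.pi_pos
  have hσle : σ ≤ π - σ := by linarith
  have hs0 : 0 < Real.sin σ := Real.sin_pos_of_pos_of_lt_pi hσ (by linarith)
  have hIcc : Set.uIcc σ (π - σ) = Set.Icc σ (π - σ) := Set.uIcc_of_le hσle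
  have hsin : ∀ x ∈ Set.uIcc σ (π - σ), Real.sin σ ≤ Real.sin x := by
    intro x hx; rw [hIcc] at hx; exact aux_sin_lower hσ hσ' hx.1 hx.2
  have hsinpos : ∀ x ∈ Set.uIcc σ (π - σ), 0 < Real.sin x := fun x hx => lt_of_lt_of_le hs0 (hsin x hx)
  set v : ℝ → ℂ := fun θ => Complex.exp ((R * Real.cos θ : ℝ) * Complex.I) with hv
  set u : ℝ → ℂ := fun θ => Complex.I * (((R * Real.sin θ)⁻¹ : ℝ) : ℂ) with hu
  set u' : ℝ → ℂ := fun θ => Complex.I * ((-(R * Real.cos θ) / (R * Real.sin θ) ^ 2 : ℝ) : ℂ) with hu'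
  set v' : ℝ → ℂ := fun θ => ((-(R * Real.sin θ) : ℝ) : ℂ) * Complex.I * v θ with hv'
  have hud : ∀ x ∈ Set.uIcc σ (π - σ), HasDerivAt u (u' x) x := by
    intro x hx
    have hsx := hsinpos x hx
    have h1 : HasDerivAt (fun y : ℝ => R * Real.sin y) (R * Real.cos x) x :=
      (Real.hasDerivAt_sin x).const_mul R
    have h2 := h1.inv ((by positivity : (0:ℝ) < R * Real.sin x).ne')
    exact (h2.ofReal_comp).const_mul Complex.I
  have hvd : ∀ x ∈ Set.uIcc σ (π - σ), HasDerivAt v (v' x) x := by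
    intro x _
    have h1 : HasDerivAt (fun y : ℝ => R * Real.cos y) (-(R * Real.sin x)) x := by
      simpa [mul_comm] using (Real.hasDerivAt_cos x).const_mul R
    have h2 : HasDerivAt (fun y : ℝ => ((R * Real.cos y : ℝ) : ℂ) * Complex.I)
        (((-(R * Real.sin x) : ℝ) : ℂ) * Complex.I) x := (h1.ofReal_comp).mul_const Complex.I
    have h3 := h2.cexp
    simp only [hv, hv']
    convert h3 using 1
    ring
  have hcont_u' : ContinuousOn u' (Set.uIcc σ (π - σ)) := by
    apply ContinuousOn.mul continuousOn_const
    apply Complex.continuous_ofReal.comp_continuousOn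
    apply ContinuousOn.div
    · exact (continuous_const.mul Real.continuous_cos).neg.continuousOn
    · exact ((continuous_const.mul Real.continuous_sin).pow 2).continuousOn
    · intro x hx; have := hsinpos x hx; positivity
  have hint_u' : IntervalIntegrable u' MeasureTheory.volume σ (π - σ) :=
    hcont_u'.intervalIntegrable
  have hint_v' : IntervalIntegrable v' MeasureTheory.volume σ (π - σ) := by
    apply Continuous.intervalIntegrable
    apply Continuous.mul
    · exact (Complex.continuous_ofReal.comp (continuous_const.mul Real.continuous_sin).neg).mul continuous_const
    · exact Complex.continuous_exp.comp ((Complex.continuous_ofReal.comp (continuous_const.mul Real.continuous_cos)).mul continuous_const)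
  have heq : ∫ θ in σ..(π - σ), v θ = ∫ θ in σ..(π - σ), u θ * v' θ := by
    apply intervalIntegral.integral_congr
    intro x hx
    have hsx : Real.sin x ≠ 0 := (hsinpos x hx).ne'
    simp only [hu, hv']
    have hre : ((R * Real.sin x)⁻¹) * (-(R * Real.sin x)) = (-1 : ℝ) := by field_simp
    have this : (((R * Real.sin x)⁻¹ : ℝ) : ℂ) * ((-(R * Real.sin x) : ℝ) : ℂ) = -1 := by
      rw [← Complex.ofReal_mul, hre]; norm_num
    calc v x = (Complex.I * (((R * Real.sin x)⁻¹ : ℝ) : ℂ)) * (((-(R * Real.sin x) : ℝ) : ℂ) * Complex.I) * v x := by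
          rw [show (Complex.I * (((R * Real.sin x)⁻¹ : ℝ) : ℂ)) * (((-(R * Real.sin x) : ℝ) : ℂ) * Complex.I)
              = (Complex.I * Complex.I) * ((((R * Real.sin x)⁻¹ : ℝ) : ℂ) * ((-(R * Real.sin x) : ℝ) : ℂ)) by ring,
            this, Complex.I_mul_I]
          ring
      _ = _ := by ring
  rw [heq, intervalIntegral.integral_mul_deriv_eq_deriv_mul hud hvd hint_u' hint_v']
  have hnorm_v : ∀ x : ℝ, ‖v x‖ = 1 := by
    intro x
    simp only [hv]
    exact Complex.norm_exp_ofReal_mul_I _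
  have hnorm_u : ∀ x ∈ Set.uIcc σ (π - σ), ‖u x‖ ≤ 1 / (R * Real.sin σ) := by
    intro x hx
    have h1 : 0 < R * Real.sin x := by have := hsinpos x hx; positivity
    have h2 : R * Real.sin σ ≤ R * Real.sin x := by
      have := hsin x hx; nlinarith
    simp only [hu, norm_mul, Complex.norm_I, one_mul, Complex.norm_real, Real.norm_eq_abs,
      abs_inv, abs_of_pos h1]
    rw [one_div]
    exact inv_anti₀ (by positivity) h2
  have hnorm_u' : ∀ x ∈ Set.uIoc σ (π - σ), ‖u' x‖ ≤ 1 / (R * Real.sin σ ^ 2) := by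
    intro x hx
    have hx' : x ∈ Set.uIcc σ (π - σ) := Set.uIoc_subset_uIcc hx
    have h1 : 0 < Real.sin x := hsinpos x hx'
    have h2 : Real.sin σ ≤ Real.sin x := hsin x hx'
    simp only [hu', norm_mul, Complex.norm_I, one_mul, Complex.norm_real, Real.norm_eq_abs]
    rw [abs_div, abs_neg, abs_of_pos (by positivity : (0:ℝ) < (R * Real.sin x) ^ 2)]
    rw [div_le_div_iff₀ (by positivity) (by positivity)]
    have hcos : |R * Real.cos x| ≤ R := by
      rw [abs_mul, abs_of_pos hR]
      exact mul_le_of_le_one_right hR.le (Real.abs_cos_le_one x)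
    have hss : Real.sin σ ^ 2 ≤ Real.sin x ^ 2 := by nlinarith
    have hkey : R * Real.sin σ ^ 2 * R ≤ (R * Real.sin x)^2 := by nlinarith [sq_nonneg R]
    calc |R * Real.cos x| * (R * Real.sin σ ^ 2) ≤ R * (R * Real.sin σ ^ 2) := by
          have h3 : (0:ℝ) ≤ R * Real.sin σ ^ 2 := by positivity
          exact mul_le_mul_of_nonneg_right hcos h3
      _ ≤ (R * Real.sin x) ^ 2 * 1 := by nlinarith
      _ = 1 * (R * Real.sin x) ^ 2 := by ring
  have hmemb : (π - σ) ∈ Set.uIcc σ (π - σ) := by rw [hIcc]; exact ⟨hσle, le_refl _⟩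
  have hmema : σ ∈ Set.uIcc σ (π - σ) := by rw [hIcc]; exact ⟨le_refl _, hσle⟩
  have hb1 : ‖u (π-σ) * v (π-σ)‖ ≤ 1/(R*Real.sin σ) := by
    rw [norm_mul, hnorm_v, mul_one]; exact hnorm_u _ hmemb
  have hb2 : ‖u σ * v σ‖ ≤ 1/(R*Real.sin σ) := by
    rw [norm_mul, hnorm_v, mul_one]; exact hnorm_u _ hmema
  have hb3 : ‖∫ x in σ..(π-σ), u' x * v x‖ ≤ (1/(R*Real.sin σ^2)) * |(π-σ)-σ| := by
    apply intervalIntegral.norm_integral_le_of_norm_le_const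
    intro x hx
    rw [norm_mul, hnorm_v, mul_one]; exact hnorm_u' x hx
  have hb3' : ‖∫ x in σ..(π-σ), u' x * v x‖ ≤ π/(R*Real.sin σ^2) := by
    refine le_trans hb3 ?_
    have habs : |(π-σ)-σ| ≤ π := by
      rw [_root_.abs_of_nonneg (by linarith : (0:ℝ) ≤ (π-σ)-σ)]; linarith
    calc (1/(R*Real.sin σ^2)) * |(π-σ)-σ| ≤ (1/(R*Real.sin σ^2)) * π := by
          have : (0:ℝ) ≤ 1/(R*Real.sin σ^2) := by positivity
          exact mul_le_mul_of_nonneg_left habs this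
      _ = π/(R*Real.sin σ^2) := by ring
  calc ‖u (π-σ) * v (π-σ) - u σ * v σ - ∫ x in σ..(π-σ), u' x * v x‖
      ≤ ‖u (π-σ) * v (π-σ) - u σ * v σ‖ + ‖∫ x in σ..(π-σ), u' x * v x‖ := norm_sub_le _ _
    _ ≤ (‖u (π-σ) * v (π-σ)‖ + ‖u σ * v σ‖) + ‖∫ x in σ..(π-σ), u' x * v x‖ := by
        gcongr
        exact norm_sub_le _ _
    _ ≤ 2 / (R * Real.sin σ) + π / (R * Real.sin σ ^ 2) := by
        have := hb1; have := hb2; have := hb3'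
        have h2 : 2 / (R * Real.sin σ) = 1/(R*Real.sin σ) + 1/(R*Real.sin σ) := by ring
        rw [h2]; linarith

lemma aux_osc_circle (R σ : ℝ) (hR : 0 < R) (hσ : 0 < σ) (hσ' : σ ≤ π/4) (φ : ℝ) :
    ‖∫ θ in (0:ℝ)..(2*π), Complex.exp ((R * Real.cos (θ + φ) : ℝ) * Complex.I)‖ ≤
      4*σ + 2*(2 / (R * Real.sin σ) + π / (R * Real.sin σ ^ 2)) := by
  have hpi := Real.pi_pos
  set f : ℝ → ℂ := fun θ => Complex.exp ((R * Real.cos θ : ℝ) * Complex.I) with hf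
  have hfc : Continuous f := by
    apply Complex.continuous_exp.comp
    exact (Complex.continuous_ofReal.comp (continuous_const.mul Real.continuous_cos)).mul continuous_const
  have hper : Function.Periodic f (2*π) := by
    intro θ; simp only [hf, Real.cos_add_two_pi]
  have h0 : ∫ θ in (0:ℝ)..(2*π), f (θ + φ) = ∫ θ in (0:ℝ)..(2*π), f θ := by
    rw [intervalIntegral.integral_comp_add_right f φ]
    rw [show (0:ℝ) + φ = φ by ring, show 2*π + φ = φ + 2*π by ring]
    rw [hper.intervalIntegral_add_eq φ 0, zero_add]
  have hnorm1 : ∀ x : ℝ, ‖f x‖ = 1 := by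
    intro x
    simp only [hf]
    exact Complex.norm_exp_ofReal_mul_I _
  have hint : ∀ a b : ℝ, IntervalIntegrable f MeasureTheory.volume a b :=
    fun a b => hfc.intervalIntegrable a b
  have h2 : ∫ θ in π..(2*π), f θ = ∫ θ in (0:ℝ)..π, f θ := by
    have hcs := intervalIntegral.integral_comp_sub_left (a := (0:ℝ)) (b := π) f (2*π)
    rw [show 2*π - π = π by ring, show 2*π - (0:ℝ) = 2*π by ring] at hcs
    rw [← hcs]
    apply intervalIntegral.integral_congr
    intro x _
    simp only [hf, Real.cos_two_pi_sub]
  have hsplit : ∫ θ in (0:ℝ)..(2*π), f θ = (∫ θ in (0:ℝ)..π, f θ) + ∫ θ in (0:ℝ)..π, f θ := by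
    rw [← intervalIntegral.integral_add_adjacent_intervals (hint 0 π) (hint π (2*π)), h2]
  have hsplit2 : ∫ θ in (0:ℝ)..π, f θ =
      ((∫ θ in (0:ℝ)..σ, f θ) + ∫ θ in σ..(π - σ), f θ) + ∫ θ in (π - σ)..π, f θ := by
    rw [intervalIntegral.integral_add_adjacent_intervals (hint 0 σ) (hint σ (π - σ)),
      intervalIntegral.integral_add_adjacent_intervals (hint 0 (π - σ)) (hint (π - σ) π)]
  have hb1 : ‖∫ θ in (0:ℝ)..σ, f θ‖ ≤ σ := by
    have := intervalIntegral.norm_integral_le_of_norm_le_const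
      (C := 1) (f := f) (a := 0) (b := σ) (fun x _ => (hnorm1 x).le)
    rw [one_mul, _root_.abs_of_nonneg (by linarith : (0:ℝ) ≤ σ - 0)] at this
    linarith
  have hb2 : ‖∫ θ in (π - σ)..π, f θ‖ ≤ σ := by
    have := intervalIntegral.norm_integral_le_of_norm_le_const
      (C := 1) (f := f) (a := π - σ) (b := π) (fun x _ => (hnorm1 x).le)
    rw [one_mul, _root_.abs_of_nonneg (by linarith : (0:ℝ) ≤ π - (π - σ))] at this
    calc ‖∫ θ in (π - σ)..π, f θ‖ ≤ π - (π - σ) := this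
      _ = σ := by ring
  have hmid := aux_osc_mid R σ hR hσ hσ'
  calc ‖∫ θ in (0:ℝ)..(2*π), f (θ + φ)‖ = ‖(∫ θ in (0:ℝ)..π, f θ) + ∫ θ in (0:ℝ)..π, f θ‖ := by
        rw [h0, hsplit]
    _ ≤ ‖∫ θ in (0:ℝ)..π, f θ‖ + ‖∫ θ in (0:ℝ)..π, f θ‖ := norm_add_le _ _
    _ = 2 * ‖∫ θ in (0:ℝ)..π, f θ‖ := by ring
    _ ≤ 2 * (σ + ‖∫ θ in σ..(π - σ), f θ‖ + σ) := by
        have : ‖∫ θ in (0:ℝ)..π, f θ‖ ≤ σ + ‖∫ θ in σ..(π - σ), f θ‖ + σ := by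
          rw [hsplit2]
          calc ‖((∫ θ in (0:ℝ)..σ, f θ) + ∫ θ in σ..(π - σ), f θ) + ∫ θ in (π - σ)..π, f θ‖
              ≤ ‖(∫ θ in (0:ℝ)..σ, f θ) + ∫ θ in σ..(π - σ), f θ‖ + ‖∫ θ in (π - σ)..π, f θ‖ :=
                norm_add_le _ _
            _ ≤ (‖∫ θ in (0:ℝ)..σ, f θ‖ + ‖∫ θ in σ..(π - σ), f θ‖) + ‖∫ θ in (π - σ)..π, f θ‖ := by
                gcongr; exact norm_add_le _ _
            _ ≤ σ + ‖∫ θ in σ..(π - σ), f θ‖ + σ := by linarith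
        linarith
    _ ≤ 4*σ + 2*(2 / (R * Real.sin σ) + π / (R * Real.sin σ ^ 2)) := by
        have h := hmid
        linarith

lemma aux_osc_final (ρ : ℝ) (hρ : 0 < ρ) : ∃ R₀ : ℝ, 0 < R₀ ∧ ∀ R : ℝ, R₀ ≤ R → ∀ φ : ℝ,
    ‖∫ θ in (0:ℝ)..(2*π), Complex.exp ((R * Real.cos (θ + φ) : ℝ) * Complex.I)‖ ≤ ρ := by
  have hpi := Real.pi_pos
  set σ := min (ρ/8) (π/4) with hσdef
  have hσ : 0 < σ := lt_min (by linarith) (by linarith)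
  have hσ' : σ ≤ π/4 := min_le_right _ _
  have hσρ : σ ≤ ρ/8 := min_le_left _ _
  have hs0 : 0 < Real.sin σ := Real.sin_pos_of_pos_of_lt_pi hσ (by linarith)
  set C := 2*(2/Real.sin σ + π/Real.sin σ^2) with hC
  have hCpos : 0 < C := by
    have : 0 < 2/Real.sin σ := by positivity
    have : 0 < π/Real.sin σ^2 := by positivity
    rw [hC]; linarith
  refine ⟨max 1 (2*C/ρ), lt_of_lt_of_le one_pos (le_max_left _ _), ?_⟩
  intro R hR φ
  have hR1 : (1:ℝ) ≤ R := le_trans (le_max_left _ _) hR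
  have hRpos : 0 < R := by linarith
  have hR2 : 2*C/ρ ≤ R := le_trans (le_max_right _ _) hR
  have key := aux_osc_circle R σ hRpos hσ hσ' φ
  have heq : 2*(2 / (R * Real.sin σ) + π / (R * Real.sin σ ^ 2)) = C/R := by
    rw [hC]; field_simp
  have hCR : C/R ≤ ρ/2 := by
    rw [div_le_iff₀ hRpos]
    have : ρ/2 * (2*C/ρ) ≤ ρ/2 * R := by
      apply mul_le_mul_of_nonneg_left hR2; linarith
    calc C = ρ/2 * (2*C/ρ) := by field_simp
      _ ≤ ρ/2 * R := this
  calc ‖∫ θ in (0:ℝ)..(2*π), Complex.exp ((R * Real.cos (θ + φ) : ℝ) * Complex.I)‖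
      ≤ 4*σ + 2*(2 / (R * Real.sin σ) + π / (R * Real.sin σ ^ 2)) := key
    _ ≤ 4*(ρ/8) + C/R := by rw [heq]; linarith
    _ ≤ ρ := by linarith



def cc3 : Fin 3 → ℝ := ![1/2, 1/4, 1/4]
def ee3 : Fin 3 → ℤ := ![0, 1, -1]

lemma cc3_nonneg (s : Fin 3) : 0 ≤ cc3 s := by fin_cases s <;> norm_num [cc3]

lemma cc3_sum : ∑ s, cc3 s = 1 := by
  rw [Fin.sum_univ_three]; show (1/2:ℝ) + 1/4 + 1/4 = 1; norm_num

lemma u_expand (y : ℝ) : (((1 + Real.cos y)/2 : ℝ) : ℂ) =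
    ∑ s : Fin 3, (cc3 s : ℂ) * Complex.exp (((ee3 s : ℝ) * y : ℝ) * Complex.I) := by
  rw [Fin.sum_univ_three]
  have hc0 : cc3 0 = 1/2 := rfl
  have hc1 : cc3 1 = 1/4 := rfl
  have hc2 : cc3 2 = 1/4 := rfl
  have he0 : ee3 0 = 0 := rfl
  have he1 : ee3 1 = 1 := rfl
  have he2 : ee3 2 = -1 := rfl
  rw [hc0, hc1, hc2, he0, he1, he2]
  have e0 : (((0:ℤ) : ℝ) * y : ℝ) = (0:ℝ) := by norm_num
  have e1 : ((((1:ℤ)) : ℝ) * y : ℝ) = y := by norm_num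
  have e2 : ((((-1:ℤ)) : ℝ) * y : ℝ) = -y := by norm_num
  rw [e0, e1, e2]
  rw [Complex.ofReal_zero, zero_mul, Complex.exp_zero]
  rw [Complex.exp_mul_I, Complex.ofReal_neg, Complex.exp_mul_I]
  rw [Complex.cos_neg, Complex.sin_neg]
  rw [show ((((1 + Real.cos y)/2 : ℝ)) : ℂ) = (1 + Complex.cos y)/2 by
    push_cast [Complex.ofReal_cos]; ring]
  push_cast
  ring

lemma int_char (m : ℤ) : (∫ x in (0:ℝ)..1, Complex.exp (((m : ℝ) * (2*π*x) : ℝ) * Complex.I))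
    = if m = 0 then 1 else 0 := by
  by_cases hm : m = 0
  · subst hm
    simp only [if_true]
    have : ∀ x : ℝ, Complex.exp ((((0:ℤ) : ℝ) * (2*π*x) : ℝ) * Complex.I) = 1 := by
      intro x; norm_num
    rw [intervalIntegral.integral_congr (fun x _ => this x)]
    simp
  · rw [if_neg hm]
    have hc : ((m:ℂ) * (2*π) * Complex.I) ≠ 0 := by
      apply mul_ne_zero
      apply mul_ne_zero
      · exact_mod_cast Int.cast_ne_zero.mpr hm
      · norm_num [Real.pi_ne_zero]
      · exact Complex.I_ne_zero
    have heq : ∀ x : ℝ, Complex.exp (((m : ℝ) * (2*π*x) : ℝ) * Complex.I)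
        = Complex.exp (((m:ℂ) * (2*π) * Complex.I) * (x:ℂ)) := by
      intro x; congr 1; push_cast; ring
    rw [intervalIntegral.integral_congr (fun x _ => heq x)]
    rw [integral_exp_mul_complex hc]
    have h1 : ((m:ℂ) * (2*π) * Complex.I) * ((1:ℝ):ℂ) = (m:ℂ) * (2*(π:ℂ)*Complex.I) := by
      push_cast; ring
    have h2 : ((m:ℂ) * (2*π) * Complex.I) * ((0:ℝ):ℂ) = 0 := by push_cast; ring
    rw [h1, h2, Complex.exp_zero]
    rw [show ((m:ℂ) * (2*(π:ℂ)*Complex.I)) = (m:ℂ) * (2*(π:ℂ)*Complex.I) from rfl]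
    rw [Complex.exp_int_mul_two_pi_mul_I]
    simp

lemma pow_expand (M : ℕ) (x : ℝ) :
    ((((1 + Real.cos (2*π*x))/2)^M : ℝ) : ℂ) =
      ∑ v : Fin M → Fin 3, (∏ j, (cc3 (v j) : ℂ)) *
        Complex.exp ((((∑ j, ee3 (v j) : ℤ) : ℝ) * (2*π*x) : ℝ) * Complex.I) := by
  rw [Complex.ofReal_pow, u_expand (2*π*x)]
  rw [show (∑ s : Fin 3, (cc3 s : ℂ) * Complex.exp (((ee3 s : ℝ) * (2*π*x) : ℝ) * Complex.I))^M
      = ∏ _j : Fin M, (∑ s : Fin 3, (cc3 s : ℂ) * Complex.exp (((ee3 s : ℝ) * (2*π*x) : ℝ) * Complex.I)) by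
    rw [Finset.prod_const, Finset.card_univ, Fintype.card_fin]]
  rw [Finset.prod_univ_sum]
  rw [show (Fintype.piFinset fun _ : Fin M => (Finset.univ : Finset (Fin 3))) = Finset.univ by
    simp]
  apply Finset.sum_congr rfl
  intro v _
  rw [Finset.prod_mul_distrib, ← Complex.exp_sum]
  congr 1
  have : ∑ j : Fin M, (((ee3 (v j) : ℝ) * (2*π*x) : ℝ) : ℂ) * Complex.I
      = ((((∑ j, ee3 (v j) : ℤ) : ℝ) * (2*π*x) : ℝ) : ℂ) * Complex.I := by
    rw [← Finset.sum_mul]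
    congr 1
    push_cast
    rw [← Finset.sum_mul]
  exact congrArg Complex.exp this

lemma sM_eq (M : ℕ) :
    ∑ v ∈ Finset.univ.filter (fun v : Fin M → Fin 3 => ∑ j, ee3 (v j) = 0), ∏ j, cc3 (v j)
      = ∫ x in (0:ℝ)..1, ((1 + Real.cos (2*π*x))/2)^M := by
  have hint : ∀ v : Fin M → Fin 3, IntervalIntegrable
      (fun x : ℝ => (∏ j, (cc3 (v j) : ℂ)) *
        Complex.exp ((((∑ j, ee3 (v j) : ℤ) : ℝ) * (2*π*x) : ℝ) * Complex.I))
      MeasureTheory.volume 0 1 := by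
    intro v
    apply Continuous.intervalIntegrable
    apply continuous_const.mul
    apply Complex.continuous_exp.comp
    apply Continuous.mul _ continuous_const
    apply Complex.continuous_ofReal.comp
    exact continuous_const.mul (continuous_const.mul continuous_id)
  have key : ((∫ x in (0:ℝ)..1, ((1 + Real.cos (2*π*x))/2)^M : ℝ) : ℂ)
      = ∑ v : Fin M → Fin 3, (∏ j, (cc3 (v j) : ℂ)) *
          (if (∑ j, ee3 (v j)) = 0 then 1 else 0) := by
    rw [← intervalIntegral.integral_ofReal]
    rw [intervalIntegral.integral_congr (fun x _ => pow_expand M x)]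
    rw [intervalIntegral.integral_finset_sum (fun v _ => hint v)]
    apply Finset.sum_congr rfl
    intro v _
    rw [intervalIntegral.integral_const_mul, int_char]
  have key2 : ((∫ x in (0:ℝ)..1, ((1 + Real.cos (2*π*x))/2)^M : ℝ) : ℂ)
      = ((∑ v ∈ Finset.univ.filter (fun v : Fin M → Fin 3 => ∑ j, ee3 (v j) = 0),
          ∏ j, cc3 (v j) : ℝ) : ℂ) := by
    rw [key, Finset.sum_filter]
    push_cast
    apply Finset.sum_congr rfl
    intro v _
    by_cases hv : (∑ j, ee3 (v j)) = 0 <;> simp [hv]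
  exact (Complex.ofReal_inj.mp key2).symm

lemma sM_ge (M : ℕ) : 1/(π*(2*M+1)) ≤
    ∫ x in (0:ℝ)..1, ((1 + Real.cos (2*π*x))/2)^M := by
  have hpi := Real.pi_pos
  have hpi1 : (1:ℝ) ≤ π := by linarith [Real.pi_gt_three]
  have hinv : (0:ℝ) < 1/π := by positivity
  have hinv1 : 1/π ≤ 1 := by rw [div_le_one hpi]; linarith
  have hnn : ∀ x : ℝ, 0 ≤ ((1 + Real.cos (2*π*x))/2)^M := by
    intro x
    apply pow_nonneg
    have := Real.neg_one_le_cos (2*π*x)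
    linarith
  have hcontg : Continuous (fun x : ℝ => ((1 + Real.cos (2*π*x))/2)^M) := by
    apply Continuous.pow
    apply Continuous.div_const
    exact continuous_const.add (Real.continuous_cos.comp (continuous_const.mul continuous_id))
  have hsplit : (∫ x in (0:ℝ)..1, ((1 + Real.cos (2*π*x))/2)^M)
      = (∫ x in (0:ℝ)..(1/π), ((1 + Real.cos (2*π*x))/2)^M)
        + ∫ x in (1/π)..1, ((1 + Real.cos (2*π*x))/2)^M := by
    rw [intervalIntegral.integral_add_adjacent_intervals] <;> exact hcontg.intervalIntegrable _ _
  have hpos2 : 0 ≤ ∫ x in (1/π)..1, ((1 + Real.cos (2*π*x))/2)^M := by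
    apply intervalIntegral.integral_nonneg hinv1
    intro x _; exact hnn x
  have hlow : ∀ x ∈ Set.Icc (0:ℝ) (1/π), (1 - π*x)^(2*M) ≤ ((1 + Real.cos (2*π*x))/2)^M := by
    intro x hx
    have hx0 : 0 ≤ x := hx.1
    have hx1 : π * x ≤ 1 := by
      have h2 := hx.2
      have : π * x ≤ π * (1/π) := by
        apply mul_le_mul_of_nonneg_left h2 hpi.le
      calc π * x ≤ π * (1/π) := this
        _ = 1 := by field_simp
    have hcossq : (1 + Real.cos (2*π*x))/2 = Real.cos (π*x)^2 := by
      rw [Real.cos_sq (π*x)]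
      rw [show 2*(π*x) = 2*π*x by ring]
      ring
    have hcos : 1 - π*x ≤ Real.cos (π*x) := by
      have h5 := Real.one_sub_sq_div_two_le_cos (x := π*x)
      have ha : 0 ≤ π*x := mul_nonneg hpi.le hx0
      have h6 : (π*x)*(π*x) ≤ (π*x)*1 := mul_le_mul_of_nonneg_left hx1 ha
      nlinarith
    rw [hcossq, pow_mul]
    apply pow_le_pow_left₀ (sq_nonneg _)
    nlinarith
  have hmono : (∫ x in (0:ℝ)..(1/π), (1 - π*x)^(2*M))
      ≤ ∫ x in (0:ℝ)..(1/π), ((1 + Real.cos (2*π*x))/2)^M := by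
    apply intervalIntegral.integral_mono_on hinv.le
    · apply Continuous.intervalIntegrable
      exact (continuous_const.sub (continuous_const.mul continuous_id)).pow _
    · exact hcontg.intervalIntegrable _ _
    · intro x hx; exact hlow x hx
  have hcomp : (∫ x in (0:ℝ)..(1/π), (1 - π*x)^(2*M)) = 1/(π*(2*M+1)) := by
    have hD : ∀ x ∈ Set.uIcc (0:ℝ) (1/π), HasDerivAt
        (fun y : ℝ => -((1 - π*y)^(2*M+1))/(π*(2*M+1))) ((1 - π*x)^(2*M)) x := by
      intro x _
      have h1 : HasDerivAt (fun y : ℝ => 1 - π*y) (-π) x := by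
        simpa using ((hasDerivAt_id x).const_mul π).const_sub 1
      have h2 := h1.pow (2*M+1)
      have h3 := (h2.div_const (π*(2*M+1))).neg
      rw [Nat.add_sub_cancel] at h3
      have hpos : (0:ℝ) < π*(2*(M:ℝ)+1) := by positivity
      have hfac : -((((2*M+1 : ℕ)):ℝ) * (1 - π*x)^(2*M) * -π / (π*(2*(M:ℝ)+1)))
          = (π*(2*(M:ℝ)+1) / (π*(2*(M:ℝ)+1))) * (1 - π*x)^(2*M) := by push_cast; ring
      have hend := h3
      rw [hfac, div_self hpos.ne', one_mul] at hend
      have hfun : (fun y : ℝ => -((1 - π*y)^(2*M+1))/(π*(2*M+1)))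
          = (-fun x => ((fun y => 1 - π * y) ^ (2 * M + 1)) x / (π * (2 * (M:ℝ) + 1))) := by
        funext y; simp only [Pi.neg_apply, Pi.pow_apply]; ring
      rw [hfun]; exact hend
    rw [intervalIntegral.integral_eq_sub_of_hasDerivAt hD]
    · rw [show 1 - π*(1/π) = 0 by rw [mul_one_div_cancel hpi.ne', sub_self]]
      rw [zero_pow (by omega : 2*M+1 ≠ 0)]
      have hne : π ≠ 0 := hpi.ne'
      field_simp
      simp
    · apply Continuous.intervalIntegrable
      exact (continuous_const.sub (continuous_const.mul continuous_id)).pow _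
  linarith




def smM (M : ℕ) : ℝ :=
  ∑ v ∈ Finset.univ.filter (fun v : Fin M → Fin 3 => ∑ j, ee3 (v j) = 0), ∏ j, cc3 (v j)

lemma smM_ge (M : ℕ) : 1/(π*(2*M+1)) ≤ smM M := by
  rw [smM, sM_eq]; exact sM_ge M

lemma smM_pos (M : ℕ) : 0 < smM M := by
  have h := smM_ge M
  have hpi := Real.pi_pos
  have : (0:ℝ) < 1/(π*(2*M+1)) := by positivity
  linarith

lemma near_int (x δ : ℝ) (hδ : 0 < δ) (hδ4 : δ ≤ 1/4)
    (h : Real.cos (2*π*δ) < Real.cos (2*π*x)) : |x - round x| < δ := by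
  have hpi := Real.pi_pos
  have hy2 : |x - round x| ≤ 1/2 := abs_sub_round x
  have hcos_eq : Real.cos (2*π*x) = Real.cos (2*π*|x - round x|) := by
    rw [show 2*π*x = 2*π*(x - round x) + (round x : ℤ)*(2*π) by push_cast; ring,
      Real.cos_add_int_mul_two_pi]
    rw [← Real.cos_abs (2*π*(x - round x))]
    congr 1
    rw [abs_mul, _root_.abs_of_pos (by positivity : (0:ℝ) < 2*π)]
  by_contra hge
  push_neg at hge
  have hle : Real.cos (2*π*|x - round x|) ≤ Real.cos (2*π*δ) := by
    apply Real.cos_le_cos_of_nonneg_of_le_pi (by positivity)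
    · nlinarith
    · nlinarith [abs_nonneg (x - round x)]
  rw [hcos_eq] at h
  linarith

lemma prod_le_single' {ι : Type*} [Fintype ι] [DecidableEq ι] (f : ι → ℝ) (h0 : ∀ i, 0 ≤ f i)
    (h1 : ∀ i, f i ≤ 1) (i₀ : ι) : ∏ i, f i ≤ f i₀ := by
  rw [← Finset.mul_prod_erase Finset.univ f (Finset.mem_univ i₀)]
  have hnn : (0:ℝ) ≤ ∏ i ∈ Finset.univ.erase i₀, f i :=
    Finset.prod_nonneg (fun i _ => h0 i)
  have hle : ∏ i ∈ Finset.univ.erase i₀, f i ≤ 1 :=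
    Finset.prod_le_one (fun i _ => h0 i) (fun i _ => h1 i)
  nlinarith [h0 i₀]

lemma exists_M (k : ℕ) (r : ℝ) (hr0 : 0 ≤ r) (hr1 : r < 1) :
    ∃ M : ℕ, 0 < M ∧ r^M < (1/(π*(2*M+1)))^k := by
  have hpi := Real.pi_pos
  have hsum : Summable (fun M : ℕ => (M:ℝ)^k * r^M) := by
    apply summable_pow_mul_geometric_of_norm_lt_one
    rw [Real.norm_eq_abs, _root_.abs_of_nonneg hr0]; exact hr1
  have htend : Filter.Tendsto (fun M : ℕ => (M:ℝ)^k * r^M) Filter.atTop (nhds 0) :=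
    hsum.tendsto_atTop_zero
  have htend2 : Filter.Tendsto (fun M : ℕ => ((M+1:ℕ):ℝ)^k * r^(M+1)) Filter.atTop (nhds 0) :=
    htend.comp (Filter.tendsto_add_atTop_nat 1)
  rcases eq_or_lt_of_le hr0 with hr | hr
  · refine ⟨1, one_pos, ?_⟩
    rw [← hr]
    simp only [zero_pow (one_ne_zero)]
    positivity
  · have htend3 : Filter.Tendsto (fun M : ℕ => ((M+1:ℕ):ℝ)^k * r^M) Filter.atTop (nhds 0) := by
      have := htend2.const_mul (1/r)
      rw [mul_zero] at this
      apply this.congr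
      intro M
      have hrne : r ≠ 0 := hr.ne'
      field_simp
      ring
    have hev := htend3.eventually_lt_const (show (0:ℝ) < (8:ℝ)⁻¹^k by positivity)
    rw [Filter.eventually_atTop] at hev
    obtain ⟨M₀, hM₀⟩ := hev
    refine ⟨M₀ + 1, Nat.succ_pos _, ?_⟩
    have hkey := hM₀ (M₀+1) (Nat.le_succ _)
    set M := M₀ + 1
    have hb : π*(2*(M:ℝ)+1) ≤ 8*((M:ℝ)+1) := by
      have := Real.pi_le_four
      have hM1 : (1:ℝ) ≤ (M:ℝ) := by exact_mod_cast Nat.one_le_iff_ne_zero.mpr (Nat.succ_ne_zero _)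
      nlinarith
    have hbpos : (0:ℝ) < π*(2*(M:ℝ)+1) := by positivity
    have hrM : (0:ℝ) < r^M := pow_pos hr M
    -- from hkey : ((M+1:ℕ):ℝ)^k * r^M < (8⁻¹)^k
    have h8 : ((M:ℝ)+1)^k * r^M < (8:ℝ)⁻¹^k := by
      exact_mod_cast hkey
    have hmain : (π*(2*(M:ℝ)+1))^k * r^M < 1 := by
      have h1 : (π*(2*(M:ℝ)+1))^k ≤ (8*((M:ℝ)+1))^k :=
        pow_le_pow_left₀ hbpos.le hb k
      have h2 : (π*(2*(M:ℝ)+1))^k * r^M ≤ (8*((M:ℝ)+1))^k * r^M :=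
        mul_le_mul_of_nonneg_right h1 hrM.le
      have h3 : (8*((M:ℝ)+1))^k * r^M = 8^k * (((M:ℝ)+1)^k * r^M) := by
        rw [mul_pow]; ring
      have h4 : (8:ℝ)^k * (((M:ℝ)+1)^k * r^M) < 8^k * (8:ℝ)⁻¹^k := by
        apply mul_lt_mul_of_pos_left _ (by positivity)
        exact h8
      have h5 : (8:ℝ)^k * (8:ℝ)⁻¹^k = 1 := by
        rw [← mul_pow]; norm_num
      linarith
    have hA : (0:ℝ) < (π*(2*(M:ℝ)+1))^k := by positivity
    rw [show (1/(π*(2*(M:ℝ)+1)))^k = 1/(π*(2*(M:ℝ)+1))^k by rw [div_pow]; norm_num]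
    rw [lt_div_iff₀ hA, mul_comm]
    exact hmain

lemma phase_re (V : ℂ) (t θ : ℝ) :
    ((t:ℂ) * V * Complex.exp ((θ:ℂ)*Complex.I)).re
      = (t * ‖V‖) * Real.cos (θ + Complex.arg V) := by
  conv_lhs => rw [← Complex.norm_mul_exp_arg_mul_I V]
  have h1 : (t:ℂ) * ((‖V‖ : ℝ) * Complex.exp ((Complex.arg V : ℝ) * Complex.I))
      * Complex.exp ((θ:ℂ)*Complex.I)
      = ((t * ‖V‖ : ℝ) : ℂ) * Complex.exp (((θ + Complex.arg V : ℝ) : ℂ) * Complex.I) := by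
    rw [show ((θ + Complex.arg V : ℝ) : ℂ) * Complex.I
        = (Complex.arg V : ℝ) * Complex.I + (θ:ℂ) * Complex.I by push_cast; ring]
    rw [Complex.exp_add]
    push_cast
    ring
  rw [h1, Complex.re_ofReal_mul, Complex.exp_ofReal_mul_I_re]

def WW {n : ℕ} (w : Fin n → ℂ) : Fin n × Fin 2 → ℂ :=
  fun i => if i.2 = 0 then w i.1 else -Complex.I * w i.1

def VD {n M : ℕ} (w : Fin n → ℂ) (d : (Fin n × Fin 2) × Fin M → Fin 3) : ℂ :=
  ∑ p, ((ee3 (d p) : ℝ) : ℂ) * WW w p.1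

def CD {n M : ℕ} (d : (Fin n × Fin 2) × Fin M → Fin 3) : ℝ := ∏ p, cc3 (d p)

lemma CD_nonneg {n M : ℕ} (d : (Fin n × Fin 2) × Fin M → Fin 3) : 0 ≤ CD d :=
  Finset.prod_nonneg (fun p _ => cc3_nonneg (d p))

lemma CD_total {n M : ℕ} : ∑ d : (Fin n × Fin 2) × Fin M → Fin 3, CD d = 1 := by
  have h := Finset.prod_univ_sum (fun _ : (Fin n × Fin 2) × Fin M => (Finset.univ : Finset (Fin 3)))
    (fun _ s => cc3 s)
  rw [Fintype.piFinset_univ] at h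
  rw [show (∑ d : (Fin n × Fin 2) × Fin M → Fin 3, CD d)
    = ∑ d : (Fin n × Fin 2) × Fin M → Fin 3, ∏ p, cc3 (d p) from rfl, ← h]
  rw [cc3_sum]
  exact Finset.prod_const_one

lemma CD_bal {n M : ℕ} :
    ∑ d ∈ Finset.univ.filter
      (fun d : (Fin n × Fin 2) × Fin M → Fin 3 => ∀ i, ∑ j, ee3 (d (i,j)) = 0), CD d
      = smM M ^ (Fintype.card (Fin n × Fin 2)) := by
  rw [Finset.sum_filter]
  have hpt : ∀ d : (Fin n × Fin 2) × Fin M → Fin 3,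
      (if (∀ i, ∑ j, ee3 (d (i,j)) = 0) then CD d else 0)
      = ∏ i : Fin n × Fin 2, (if (∑ j, ee3 (d (i,j)) = 0) then ∏ j, cc3 (d (i,j)) else 0) := by
    intro d
    by_cases h : ∀ i, ∑ j, ee3 (d (i,j)) = 0
    · rw [if_pos h]
      rw [show CD d = ∏ i : Fin n × Fin 2, ∏ j, cc3 (d (i,j)) from Fintype.prod_prod_type _]
      exact Finset.prod_congr rfl (fun i _ => (if_pos (h i)).symm)
    · rw [if_neg h]
      push_neg at h
      obtain ⟨i₀, hi₀⟩ := h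
      have hz : (∏ i : Fin n × Fin 2, (if (∑ j, ee3 (d (i,j)) = 0) then ∏ j, cc3 (d (i,j)) else (0:ℝ))) = 0 :=
        Finset.prod_eq_zero (Finset.mem_univ i₀) (by rw [if_neg hi₀])
      exact hz.symm
  rw [Finset.sum_congr rfl (fun d _ => hpt d)]
  have hcur := Fintype.sum_equiv (Equiv.curry (Fin n × Fin 2) (Fin M) (Fin 3))
    (fun d : (Fin n × Fin 2) × Fin M → Fin 3 =>
      ∏ i : Fin n × Fin 2, (if (∑ j, ee3 (d (i,j)) = 0) then ∏ j, cc3 (d (i,j)) else 0))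
    (fun x : (Fin n × Fin 2) → (Fin M → Fin 3) =>
      ∏ i : Fin n × Fin 2, (if (∑ j, ee3 (x i j) = 0) then ∏ j, cc3 (x i j) else 0))
    (fun d => rfl)
  rw [hcur]
  have hfac := Finset.prod_univ_sum (fun _ : Fin n × Fin 2 => (Finset.univ : Finset (Fin M → Fin 3)))
    (fun _ v => if (∑ j, ee3 (v j) = 0) then ∏ j, cc3 (v j) else 0)
  rw [Fintype.piFinset_univ] at hfac
  rw [← hfac]
  have hone : ∀ i : Fin n × Fin 2,
      (∑ v : Fin M → Fin 3, if (∑ j, ee3 (v j) = 0) then ∏ j, cc3 (v j) else 0) = smM M := by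
    intro i
    rw [smM, Finset.sum_filter]
  rw [Finset.prod_congr rfl (fun i _ => hone i)]
  rw [Finset.prod_const, Finset.card_univ]

def IndepGauss {n : ℕ} (w : Fin n → ℂ) : Prop :=
  ∀ a b : Fin n → ℤ, (∑ r, ((a r : ℂ) + (b r : ℂ) * Complex.I) * w r) = 0 → ∀ r, a r = 0 ∧ b r = 0

lemma VD_group {n M : ℕ} (w : Fin n → ℂ) (d : (Fin n × Fin 2) × Fin M → Fin 3) :
    VD w d = ∑ i : Fin n × Fin 2, ((∑ j, ee3 (d (i,j)) : ℤ) : ℂ) * WW w i := by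
  rw [VD, Fintype.sum_prod_type]
  apply Finset.sum_congr rfl
  intro i _
  have hr : (∑ y : Fin M, ((ee3 (d (i,y)) : ℝ):ℂ) * WW w (i,y).1)
      = ∑ y : Fin M, ((ee3 (d (i,y)) : ℝ):ℂ) * WW w i := rfl
  rw [hr, ← Finset.sum_mul]
  congr 1
  push_cast
  rfl

lemma VD_zero_of_bal {n M : ℕ} (w : Fin n → ℂ) (d : (Fin n × Fin 2) × Fin M → Fin 3)
    (h : ∀ i, ∑ j, ee3 (d (i,j)) = 0) : VD w d = 0 := by
  rw [VD_group]
  apply Finset.sum_eq_zero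
  intro i _
  rw [h i]
  simp

lemma VD_ne_zero_of_unbal {n M : ℕ} (w : Fin n → ℂ) (hw : IndepGauss w)
    (d : (Fin n × Fin 2) × Fin M → Fin 3)
    (h : ¬ (∀ i, ∑ j, ee3 (d (i,j)) = 0)) : VD w d ≠ 0 := by
  intro hV
  apply h
  rw [VD_group] at hV
  have hregroup : ∑ i : Fin n × Fin 2, ((∑ j, ee3 (d (i,j)) : ℤ) : ℂ) * WW w i
      = ∑ r : Fin n, (((∑ j, ee3 (d ((r,0),j)) : ℤ) : ℂ)
          + ((-(∑ j, ee3 (d ((r,1),j))) : ℤ) : ℂ) * Complex.I) * w r := by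
    rw [Fintype.sum_prod_type]
    apply Finset.sum_congr rfl
    intro r _
    rw [Fin.sum_univ_two]
    have hW0 : WW w (r, (0 : Fin 2)) = w r := by simp [WW]
    have hW1 : WW w (r, (1 : Fin 2)) = -Complex.I * w r := by simp [WW]
    rw [hW0, hW1]
    push_cast
    ring
  rw [hregroup] at hV
  have := hw (fun r => ∑ j, ee3 (d ((r,0),j))) (fun r => -(∑ j, ee3 (d ((r,1),j)))) hV
  intro i
  obtain ⟨r, k⟩ := i
  fin_cases k
  · exact ((this r).1 : _)
  · have h2 : -∑ j, ee3 (d ((r, (1 : Fin 2)), j)) = 0 := (this r).2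
    have h3 : ∑ j, ee3 (d ((r, (1 : Fin 2)), j)) = 0 := by linarith
    exact h3

def XD {n : ℕ} (w : Fin n → ℂ) (t θ : ℝ) (i : Fin n × Fin 2) : ℝ :=
  ((t:ℂ) * WW w i * Complex.exp ((θ:ℂ)*Complex.I)).re

def GD {n : ℕ} (M : ℕ) (w : Fin n → ℂ) (t θ : ℝ) : ℝ :=
  ∏ i, ((1 + Real.cos (2*π * XD w t θ i))/2)^M

lemma GD_expand {n M : ℕ} (w : Fin n → ℂ) (t θ : ℝ) :
    ((GD M w t θ : ℝ) : ℂ) = ∑ d : (Fin n × Fin 2) × Fin M → Fin 3, (CD d : ℂ) *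
      Complex.exp (((2*π*(((t:ℂ) * VD w d * Complex.exp ((θ:ℂ)*Complex.I)).re) : ℝ)) * Complex.I) := by
  rw [GD, Complex.ofReal_prod]
  have step1 : ∀ i : Fin n × Fin 2, (((((1 + Real.cos (2*π * XD w t θ i))/2)^M : ℝ)) : ℂ)
      = ∏ _j : Fin M, ∑ s : Fin 3, (cc3 s : ℂ)
          * Complex.exp (((ee3 s : ℝ) * (2*π * XD w t θ i) : ℝ) * Complex.I) := by
    intro i
    rw [Complex.ofReal_pow, u_expand (2*π * XD w t θ i)]
    rw [Finset.prod_const, Finset.card_univ, Fintype.card_fin]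
  rw [Finset.prod_congr rfl (fun i _ => step1 i)]
  rw [← Fintype.prod_prod_type
    (f := fun p : (Fin n × Fin 2) × Fin M => ∑ s : Fin 3, (cc3 s : ℂ)
      * Complex.exp (((ee3 s : ℝ) * (2*π * XD w t θ p.1) : ℝ) * Complex.I))]
  have hexp := Finset.prod_univ_sum (fun _ : (Fin n × Fin 2) × Fin M => (Finset.univ : Finset (Fin 3)))
    (fun p s => (cc3 s : ℂ) * Complex.exp (((ee3 s : ℝ) * (2*π * XD w t θ p.1) : ℝ) * Complex.I))
  rw [Fintype.piFinset_univ] at hexp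
  rw [hexp]
  apply Finset.sum_congr rfl
  intro d _
  rw [Finset.prod_mul_distrib]
  congr 1
  · rw [CD, Complex.ofReal_prod]
  · rw [← Complex.exp_sum]
    congr 1
    have hsum : ∑ p : (Fin n × Fin 2) × Fin M, (((ee3 (d p) : ℝ) * (2*π * XD w t θ p.1) : ℝ) : ℂ) * Complex.I
        = ((∑ p : (Fin n × Fin 2) × Fin M, (ee3 (d p) : ℝ) * (2*π * XD w t θ p.1) : ℝ) : ℂ) * Complex.I := by
      rw [← Finset.sum_mul, Complex.ofReal_sum]
    rw [hsum]
    congr 2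
    have hlin : (t:ℂ) * VD w d * Complex.exp ((θ:ℂ)*Complex.I)
        = ∑ p : (Fin n × Fin 2) × Fin M, ((ee3 (d p) : ℝ) : ℂ)
            * ((t:ℂ) * WW w p.1 * Complex.exp ((θ:ℂ)*Complex.I)) := by
      rw [VD, Finset.mul_sum, Finset.sum_mul]
      apply Finset.sum_congr rfl
      intro p _
      ring
    rw [hlin, Complex.re_sum, Finset.mul_sum]
    apply Finset.sum_congr rfl
    intro p _
    rw [Complex.re_ofReal_mul]
    rw [show ((t:ℂ) * WW w p.1 * Complex.exp ((θ:ℂ)*Complex.I)).re = XD w t θ p.1 from rfl]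
    ring

def FD {n M : ℕ} (w : Fin n → ℂ) (t : ℝ) (d : (Fin n × Fin 2) × Fin M → Fin 3) (θ : ℝ) : ℂ :=
  Complex.exp (((2*π*(((t:ℂ) * VD w d * Complex.exp ((θ:ℂ)*Complex.I)).re) : ℝ)) * Complex.I)

lemma GD_expand' {n M : ℕ} (w : Fin n → ℂ) (t θ : ℝ) :
    ((GD M w t θ : ℝ) : ℂ) = ∑ d : (Fin n × Fin 2) × Fin M → Fin 3, (CD d : ℂ) * FD w t d θ :=
  GD_expand w t θ

lemma cont_inner {n : ℕ} (V : ℂ) (t : ℝ) :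
    Continuous (fun θ : ℝ => ((t:ℂ) * V * Complex.exp ((θ:ℂ)*Complex.I)).re) := by
  apply Complex.continuous_re.comp
  exact continuous_const.mul (Complex.continuous_exp.comp (Complex.continuous_ofReal.mul continuous_const))

lemma FD_cont {n M : ℕ} (w : Fin n → ℂ) (t : ℝ) (d : (Fin n × Fin 2) × Fin M → Fin 3) :
    Continuous (FD w t d) := by
  apply Complex.continuous_exp.comp
  exact (Complex.continuous_ofReal.comp (continuous_const.mul (cont_inner (n := n) (VD w d) t))).mul
    continuous_const

lemma GD_cont {n M : ℕ} (w : Fin n → ℂ) (t : ℝ) : Continuous (fun θ => GD M w t θ) := by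
  apply continuous_finset_prod
  intro i _
  apply Continuous.pow
  apply Continuous.div_const
  exact continuous_const.add ((Real.continuous_cos.comp (continuous_const.mul (cont_inner (n := n) (WW w i) t))))

lemma core {n : ℕ} (w : Fin n → ℂ) (hw : IndepGauss w) (δ : ℝ) (hδ : 0 < δ) (hδ4 : δ ≤ 1/4) :
    ∃ T : ℝ, 0 < T ∧ ∀ t : ℝ, T < t → ∃ θ : ℝ, ∀ r : Fin n,
      |((t:ℂ) * w r * Complex.exp ((θ:ℂ) * Complex.I)).re
        - round (((t:ℂ) * w r * Complex.exp ((θ:ℂ) * Complex.I)).re)| < δ ∧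
      |((t:ℂ) * w r * Complex.exp ((θ:ℂ) * Complex.I)).im
        - round (((t:ℂ) * w r * Complex.exp ((θ:ℂ) * Complex.I)).im)| < δ := by
  have hpi := Real.pi_pos
  set η := (1 - Real.cos (2*π*δ))/2 with hηdef
  have hcoslt : Real.cos (2*π*δ) < 1 := by
    have h := Real.cos_lt_cos_of_nonneg_of_le_pi (x := 0) (y := 2*π*δ)
      le_rfl (by nlinarith) (by positivity)
    rwa [Real.cos_zero] at h
  have hcosge : -1 ≤ Real.cos (2*π*δ) := Real.neg_one_le_cos _
  have hη0 : 0 < η := by rw [hηdef]; linarith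
  have hη1 : η ≤ 1 := by rw [hηdef]; linarith
  set r0 := 1 - η with hr0def
  have hr00 : 0 ≤ r0 := by rw [hr0def]; linarith
  have hr01 : r0 < 1 := by rw [hr0def]; linarith
  set k := Fintype.card (Fin n × Fin 2) with hk
  obtain ⟨M, hM0, hMlt⟩ := exists_M k r0 hr00 hr01
  have hsmlt : r0^M < smM M ^ k :=
    lt_of_lt_of_le hMlt (pow_le_pow_left₀ (by positivity) (smM_ge M) _)
  set β := smM M ^ k - r0^M with hβdef
  have hβ0 : 0 < β := by rw [hβdef]; linarith
  obtain ⟨R₀, hR₀, hosc⟩ := aux_osc_final (π*β) (by positivity)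
  set Bad := Finset.univ.filter
    (fun d : (Fin n × Fin 2) × Fin M → Fin 3 => ¬ ∀ i, ∑ j, ee3 (d (i,j)) = 0) with hBadDef
  set T := 1 + ∑ d ∈ Bad, R₀/(2*π*‖VD w d‖) with hTdef
  have hsumnn : ∀ d ∈ Bad, 0 ≤ R₀/(2*π*‖VD w d‖) := by
    intro d _
    apply div_nonneg hR₀.le
    positivity
  have hTpos : 0 < T := by
    rw [hTdef]
    have := Finset.sum_nonneg hsumnn
    linarith
  refine ⟨T, hTpos, ?_⟩
  intro t ht
  have htpos : 0 < t := by
    have := Finset.sum_nonneg hsumnn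
    rw [hTdef] at ht
    linarith
  -- integral identity
  have hIC : ((∫ θ in (0:ℝ)..(2*π), GD M w t θ : ℝ) : ℂ)
      = ∑ d : (Fin n × Fin 2) × Fin M → Fin 3, (CD d : ℂ) * ∫ θ in (0:ℝ)..(2*π), FD w t d θ := by
    rw [← intervalIntegral.integral_ofReal]
    rw [intervalIntegral.integral_congr (fun θ _ => GD_expand' w t θ)]
    rw [intervalIntegral.integral_finset_sum (f := fun d θ => (CD d : ℂ) * FD w t d θ)
      (fun d _ => ((continuous_const.mul (FD_cont w t d)).intervalIntegrable _ _))]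
    exact Finset.sum_congr rfl (fun d _ => intervalIntegral.integral_const_mul _ _)
  -- balanced terms
  have hbalval : ∀ d : (Fin n × Fin 2) × Fin M → Fin 3, (∀ i, ∑ j, ee3 (d (i,j)) = 0) →
      (∫ θ in (0:ℝ)..(2*π), FD w t d θ) = ((2*π : ℝ) : ℂ) := by
    intro d hd
    have h0 : VD w d = 0 := VD_zero_of_bal w d hd
    have hFone : ∀ θ : ℝ, FD w t d θ = 1 := by
      intro θ
      rw [FD, h0]
      norm_num
    rw [intervalIntegral.integral_congr (fun θ _ => hFone θ)]
    rw [intervalIntegral.integral_const]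
    norm_num
  -- unbalanced bound
  have hubound : ∀ d ∈ Bad, ‖∫ θ in (0:ℝ)..(2*π), FD w t d θ‖ ≤ π*β := by
    intro d hd
    have hmem := Finset.mem_filter.mp hd
    have hVne : VD w d ≠ 0 := VD_ne_zero_of_unbal w hw d hmem.2
    have hVpos : 0 < ‖VD w d‖ := norm_pos_iff.mpr hVne
    have htd : R₀/(2*π*‖VD w d‖) < t := by
      have hle : R₀/(2*π*‖VD w d‖) ≤ ∑ d' ∈ Bad, R₀/(2*π*‖VD w d'‖) :=
        Finset.single_le_sum hsumnn hd
      rw [hTdef] at ht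
      linarith
    have hRge : R₀ ≤ 2*π*t*‖VD w d‖ := by
      rw [div_lt_iff₀ (by positivity : (0:ℝ) < 2*π*‖VD w d‖)] at htd
      nlinarith
    have hFeq : ∀ θ : ℝ, FD w t d θ =
        Complex.exp ((((2*π*t*‖VD w d‖) * Real.cos (θ + Complex.arg (VD w d)) : ℝ)) * Complex.I) := by
      intro θ
      rw [FD]
      congr 2
      rw [phase_re]
      ring
    rw [intervalIntegral.integral_congr (fun θ _ => hFeq θ)]
    exact hosc _ hRge _
  -- assemble
  have hsplit := Finset.sum_filter_add_sum_filter_not Finset.univ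
    (fun d : (Fin n × Fin 2) × Fin M → Fin 3 => ∀ i, ∑ j, ee3 (d (i,j)) = 0)
    (fun d => (CD d : ℂ) * ∫ θ in (0:ℝ)..(2*π), FD w t d θ)
  have hbalsum : ∑ d ∈ Finset.univ.filter
      (fun d : (Fin n × Fin 2) × Fin M → Fin 3 => ∀ i, ∑ j, ee3 (d (i,j)) = 0),
      (CD d : ℂ) * ∫ θ in (0:ℝ)..(2*π), FD w t d θ = ((smM M ^ k * (2*π) : ℝ) : ℂ) := by
    rw [Finset.sum_congr rfl (fun d hd => by
      rw [hbalval d (Finset.mem_filter.mp hd).2])]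
    rw [← Finset.sum_mul]
    rw [show (∑ d ∈ Finset.univ.filter
        (fun d : (Fin n × Fin 2) × Fin M → Fin 3 => ∀ i, ∑ j, ee3 (d (i,j)) = 0),
        (CD d : ℂ)) = ((smM M ^ k : ℝ) : ℂ) by
      rw [← Complex.ofReal_sum]
      rw [CD_bal]]
    rw [← Complex.ofReal_mul]
  set B := ∑ d ∈ Bad, (CD d : ℂ) * ∫ θ in (0:ℝ)..(2*π), FD w t d θ with hBdef
  have hBnorm : ‖B‖ ≤ π*β := by
    rw [hBdef]
    calc ‖∑ d ∈ Bad, (CD d : ℂ) * ∫ θ in (0:ℝ)..(2*π), FD w t d θ‖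
        ≤ ∑ d ∈ Bad, ‖(CD d : ℂ) * ∫ θ in (0:ℝ)..(2*π), FD w t d θ‖ := norm_sum_le _ _
      _ ≤ ∑ d ∈ Bad, CD d * (π*β) := by
          apply Finset.sum_le_sum
          intro d hd
          rw [norm_mul, Complex.norm_real, Real.norm_eq_abs, _root_.abs_of_nonneg (CD_nonneg d)]
          exact mul_le_mul_of_nonneg_left (hubound d hd) (CD_nonneg d)
      _ = (∑ d ∈ Bad, CD d) * (π*β) := by rw [Finset.sum_mul]
      _ ≤ 1 * (π*β) := by
          apply mul_le_mul_of_nonneg_right _ (by positivity)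
          rw [← CD_total (n := n) (M := M)]
          apply Finset.sum_le_sum_of_subset_of_nonneg (Finset.subset_univ _)
          intro d _ _
          exact CD_nonneg d
      _ = π*β := one_mul _
  have hICre : (∫ θ in (0:ℝ)..(2*π), GD M w t θ) = smM M ^ k * (2*π) + B.re := by
    have h1 : ((∫ θ in (0:ℝ)..(2*π), GD M w t θ : ℝ) : ℂ) = ((smM M ^ k * (2*π) : ℝ) : ℂ) + B := by
      rw [hIC, ← hsplit, hbalsum, hBdef]
    have h2 := congrArg Complex.re h1
    simp only [Complex.add_re, Complex.ofReal_re] at h2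
    exact h2
  have hBre : -(π*β) ≤ B.re := by
    have := Complex.abs_re_le_norm B
    have h2 : ‖B‖ ≤ π*β := hBnorm
    have := abs_le.mp (le_trans (Complex.abs_re_le_norm B) h2)
    linarith [this.1]
  have hIlow : 2*π*r0^M < ∫ θ in (0:ℝ)..(2*π), GD M w t θ := by
    rw [hICre]
    have : smM M ^ k = r0^M + β := by rw [hβdef]; ring
    rw [this]
    nlinarith
  -- find θ
  have hexθ : ∃ θ : ℝ, r0^M < GD M w t θ := by
    by_contra hno
    push_neg at hno
    have hle : (∫ θ in (0:ℝ)..(2*π), GD M w t θ) ≤ ∫ _θ in (0:ℝ)..(2*π), r0^M := by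
      apply intervalIntegral.integral_mono_on (by positivity)
      · exact (GD_cont w t).intervalIntegrable _ _
      · exact intervalIntegrable_const
      · intro θ _
        exact hno θ
    rw [intervalIntegral.integral_const, smul_eq_mul] at hle
    nlinarith
  obtain ⟨θ, hθ⟩ := hexθ
  refine ⟨θ, ?_⟩
  have hui : ∀ i : Fin n × Fin 2, r0 < (1 + Real.cos (2*π * XD w t θ i))/2 := by
    intro i
    set u := fun i' : Fin n × Fin 2 => (1 + Real.cos (2*π * XD w t θ i'))/2 with hu
    have hu0 : ∀ i', 0 ≤ u i' := by
      intro i'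
      have := Real.neg_one_le_cos (2*π * XD w t θ i')
      rw [hu]
      dsimp only
      linarith
    have hu1 : ∀ i', u i' ≤ 1 := by
      intro i'
      have := Real.cos_le_one (2*π * XD w t θ i')
      rw [hu]
      dsimp only
      linarith
    have hGD : GD M w t θ = ∏ i', (u i')^M := rfl
    have hpow : GD M w t θ ≤ (u i)^M := by
      rw [hGD]
      exact prod_le_single' (fun i' => (u i')^M)
        (fun i' => pow_nonneg (hu0 i') M) (fun i' => pow_le_one₀ (hu0 i') (hu1 i')) i
    by_contra hle
    push_neg at hle
    have : (u i)^M ≤ r0^M := pow_le_pow_left₀ (hu0 i) hle M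
    linarith
  have hnear : ∀ i : Fin n × Fin 2, |XD w t θ i - round (XD w t θ i)| < δ := by
    intro i
    apply near_int _ δ hδ hδ4
    have h1 := hui i
    -- r0 = 1 - (1 - cos(2πδ))/2 = (1 + cos(2πδ))/2
    have : r0 = (1 + Real.cos (2*π*δ))/2 := by rw [hr0def, hηdef]; ring
    rw [this] at h1
    linarith
  intro r
  have hre_eq : ((t:ℂ) * w r * Complex.exp ((θ:ℂ)*Complex.I)).re = XD w t θ (r, 0) := by
    have hW0 : WW w (r,(0:Fin 2)) = w r := by simp [WW]
    rw [XD, hW0]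
  have him_eq : ((t:ℂ) * w r * Complex.exp ((θ:ℂ)*Complex.I)).im = XD w t θ (r, 1) := by
    have hW1 : WW w (r,(1:Fin 2)) = -Complex.I * w r := by simp [WW]
    rw [XD, hW1]
    rw [show (t:ℂ) * (-Complex.I * w r) * Complex.exp ((θ:ℂ)*Complex.I)
        = -(Complex.I * ((t:ℂ) * w r * Complex.exp ((θ:ℂ)*Complex.I))) by ring]
    simp [Complex.neg_re, Complex.mul_re, Complex.I_re, Complex.I_im]
  constructor
  · rw [hre_eq]; exact hnear (r, 0)
  · rw [him_eq]; exact hnear (r, 1)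





def GC (γ : ℤ × ℤ) : ℂ := (γ.1 : ℂ) + (γ.2 : ℂ) * Complex.I

def gmul (a b : ℤ × ℤ) : ℤ × ℤ := (a.1*b.1 - a.2*b.2, a.1*b.2 + a.2*b.1)

lemma GC_mul (a b : ℤ × ℤ) : GC (gmul a b) = GC a * GC b := by
  simp only [GC, gmul]
  push_cast
  ring_nf
  rw [Complex.I_sq]
  ring

lemma GC_sum {ι : Type*} (s : Finset ι) (f : ι → ℤ × ℤ) :
    GC (∑ i ∈ s, f i) = ∑ i ∈ s, GC (f i) := by
  classical
  induction s using Finset.cons_induction with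
  | empty => simp [GC]
  | cons a s ha ih =>
    rw [Finset.sum_cons, Finset.sum_cons, ← ih]
    simp only [GC, Prod.fst_add, Prod.snd_add]
    push_cast
    ring

lemma GC_abs_le (a : ℤ × ℤ) : ‖GC a‖ ≤ |(a.1 : ℝ)| + |(a.2 : ℝ)| := by
  have h := Complex.norm_le_abs_re_add_abs_im (GC a)
  simpa [GC] using h

lemma red (L : List ℂ) : ∃ (n : ℕ) (ww : Fin n → ℂ) (D : ℤ), IndepGauss ww ∧ 0 < D ∧
    ∀ z ∈ L, ∃ γ : Fin n → ℤ × ℤ, (D : ℂ) * z = ∑ r, GC (γ r) * ww r := by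
  induction L with
  | nil =>
    exact ⟨0, (fun i => i.elim0), 1, (fun a b _ r => r.elim0), one_pos,
      fun z hz => absurd hz List.not_mem_nil⟩
  | cons z L ih =>
    obtain ⟨n, ww, D, hw, hD, hrep⟩ := ih
    by_cases hdep : ∃ (c : ℤ × ℤ) (γ : Fin n → ℤ × ℤ), c ≠ 0 ∧ GC c * z = ∑ r, GC (γ r) * ww r
    · obtain ⟨c, γc, hc0, hcz⟩ := hdep
      have hN0 : 0 < c.1*c.1 + c.2*c.2 := by
        rcases (by
          by_contra hcon
          push_neg at hcon
          exact hc0 (Prod.ext hcon.1 hcon.2) : c.1 ≠ 0 ∨ c.2 ≠ 0) with h | h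
        · nlinarith [mul_self_pos.mpr h, mul_self_nonneg c.2]
        · nlinarith [mul_self_pos.mpr h, mul_self_nonneg c.1]
      refine ⟨n, ww, D*(c.1*c.1 + c.2*c.2), hw, mul_pos hD hN0, ?_⟩
      intro z' hz'
      rcases List.mem_cons.mp hz' with h | h
      · subst h
        refine ⟨fun r => gmul (D*c.1, -(D*c.2)) (γc r), ?_⟩
        have hkey : GC ((D*c.1, -(D*c.2))) * GC c = ((D*(c.1*c.1 + c.2*c.2) : ℤ) : ℂ) := by
          simp only [GC]
          push_cast
          ring_nf
          rw [Complex.I_sq]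
          ring
        calc ((D*(c.1*c.1 + c.2*c.2) : ℤ) : ℂ) * z'
            = GC ((D*c.1, -(D*c.2))) * (GC c * z') := by rw [← hkey]; ring
          _ = GC ((D*c.1, -(D*c.2))) * ∑ r, GC (γc r) * ww r := by rw [hcz]
          _ = ∑ r, GC (gmul (D*c.1, -(D*c.2)) (γc r)) * ww r := by
              rw [Finset.mul_sum]
              apply Finset.sum_congr rfl
              intro r _
              rw [GC_mul]
              ring
      · obtain ⟨γ, hγ⟩ := hrep z' h
        refine ⟨fun r => gmul (c.1*c.1 + c.2*c.2, 0) (γ r), ?_⟩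
        have hGCN : GC ((c.1*c.1 + c.2*c.2, 0)) = ((c.1*c.1 + c.2*c.2 : ℤ) : ℂ) := by
          simp [GC]
        calc ((D*(c.1*c.1 + c.2*c.2) : ℤ) : ℂ) * z'
            = ((c.1*c.1 + c.2*c.2 : ℤ) : ℂ) * ((D:ℂ) * z') := by push_cast; ring
          _ = ((c.1*c.1 + c.2*c.2 : ℤ) : ℂ) * ∑ r, GC (γ r) * ww r := by rw [hγ]
          _ = ∑ r, GC (gmul (c.1*c.1 + c.2*c.2, 0) (γ r)) * ww r := by
              rw [Finset.mul_sum]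
              apply Finset.sum_congr rfl
              intro r _
              rw [GC_mul, hGCN]
              ring
    · refine ⟨n+1, Fin.snoc ww z, D, ?_, hD, ?_⟩
      · intro a b hsum
        rw [Fin.sum_univ_castSucc] at hsum
        simp only [Fin.snoc_castSucc, Fin.snoc_last] at hsum
        by_cases hlast : a (Fin.last n) = 0 ∧ b (Fin.last n) = 0
        · have hz : (∑ r : Fin n, ((a r.castSucc : ℂ) + (b r.castSucc : ℂ) * Complex.I) * ww r) = 0 := by
            rw [hlast.1, hlast.2] at hsum
            push_cast at hsum
            simpa using hsum
          have hres := hw (fun r => a r.castSucc) (fun r => b r.castSucc) hz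
          intro r
          refine Fin.lastCases ?_ ?_ r
          · exact hlast
          · intro i
            exact hres i
        · exfalso
          apply hdep
          refine ⟨(a (Fin.last n), b (Fin.last n)),
            fun r => (-(a r.castSucc), -(b r.castSucc)), ?_, ?_⟩
          · rw [Ne, Prod.mk_eq_zero]
            exact hlast
          · have hmove : GC (a (Fin.last n), b (Fin.last n)) * z
                = -(∑ r : Fin n, ((a r.castSucc : ℂ) + (b r.castSucc : ℂ) * Complex.I) * ww r) := by
              rw [GC]
              linear_combination hsum
            rw [hmove, ← Finset.sum_neg_distrib]
            apply Finset.sum_congr rfl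
            intro r _
            simp only [GC]
            push_cast
            ring
      · intro z' hz'
        rcases List.mem_cons.mp hz' with h | h
        · subst h
          refine ⟨Fin.snoc (fun _ => (0,0)) (D, 0), ?_⟩
          rw [Fin.sum_univ_castSucc]
          simp only [Fin.snoc_castSucc, Fin.snoc_last]
          have : ∀ r : Fin n, GC (0,0) * ww r = 0 := by intro r; simp [GC]
          rw [Finset.sum_congr rfl (fun r _ => this r)]
          simp [GC]
        · obtain ⟨γ, hγ⟩ := hrep z' h
          refine ⟨Fin.snoc γ (0,0), ?_⟩
          rw [Fin.sum_univ_castSucc]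
          simp only [Fin.snoc_castSucc, Fin.snoc_last]
          rw [show GC (0,0) * z = 0 by simp [GC]]
          rw [add_zero]
          exact hγ

def toC (v : EuclideanSpace ℝ (Fin 2)) : ℂ := (v 0 : ℝ) + (v 1 : ℝ) * Complex.I

lemma toC_re (v : EuclideanSpace ℝ (Fin 2)) : (toC v).re = v 0 := by simp [toC]
lemma toC_im (v : EuclideanSpace ℝ (Fin 2)) : (toC v).im = v 1 := by simp [toC]

lemma toC_rot (θ : ℝ) (v : EuclideanSpace ℝ (Fin 2)) :
    toC (rot θ v) = Complex.exp ((θ:ℂ) * Complex.I) * toC v := by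
  have h0 : (rot θ v) 0 = Real.cos θ * v 0 - Real.sin θ * v 1 := rfl
  have h1 : (rot θ v) 1 = Real.sin θ * v 0 + Real.cos θ * v 1 := rfl
  rw [Complex.exp_mul_I]
  apply Complex.ext
  · simp only [toC, h0, h1, Complex.add_re, Complex.add_im, Complex.mul_re, Complex.mul_im,
      Complex.ofReal_re, Complex.ofReal_im, Complex.I_re, Complex.I_im,
      Complex.cos_ofReal_re, Complex.sin_ofReal_re, Complex.cos_ofReal_im, Complex.sin_ofReal_im]
    ring
  · simp only [toC, h0, h1, Complex.add_re, Complex.add_im, Complex.mul_re, Complex.mul_im,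
      Complex.ofReal_re, Complex.ofReal_im, Complex.I_re, Complex.I_im,
      Complex.cos_ofReal_re, Complex.sin_ofReal_re, Complex.cos_ofReal_im, Complex.sin_ofReal_im]
    ring

lemma toC_smul (t : ℝ) (v : EuclideanSpace ℝ (Fin 2)) : toC (t • v) = (t:ℂ) * toC v := by
  have h0 : (t • v) 0 = t * v 0 := rfl
  have h1 : (t • v) 1 = t * v 1 := rfl
  apply Complex.ext
  · simp only [toC, h0, h1, Complex.add_re, Complex.add_im, Complex.mul_re, Complex.mul_im,
      Complex.ofReal_re, Complex.ofReal_im, Complex.I_re, Complex.I_im]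
    ring
  · simp only [toC, h0, h1, Complex.add_re, Complex.add_im, Complex.mul_re, Complex.mul_im,
      Complex.ofReal_re, Complex.ofReal_im, Complex.I_re, Complex.I_im]
    ring

lemma dist_toC (x y : EuclideanSpace ℝ (Fin 2)) : dist x y = ‖toC x - toC y‖ := by
  rw [EuclideanSpace.dist_eq, Complex.norm_def, Complex.normSq_apply]
  rw [Fin.sum_univ_two]
  congr 1
  simp only [Complex.sub_re, Complex.sub_im, toC_re, toC_im, Real.dist_eq]
  rw [_root_.sq_abs, _root_.sq_abs]
  ring

theorem stmt_0 (S : Finset (EuclideanSpace ℝ (Fin 2))) (ε : ℝ) (hε : 0 < ε) :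
    ∃ T > (0 : ℝ), ∀ t > T, ∃ θ : ℝ,
      ∀ z ∈ S, Metric.infDist (rot θ (t • z)) (intLattice 2) < ε := by
  classical
  set L : List ℂ := S.toList.map toC with hL
  obtain ⟨n, ww, D, hw, hD, hrep⟩ := red L
  have hDC : (D:ℂ) ≠ 0 := by
    exact_mod_cast (Int.cast_ne_zero (α := ℂ)).mpr hD.ne'
  set w' : Fin n → ℂ := fun r => ww r / (D:ℂ) with hw'def
  have hw' : IndepGauss w' := by
    intro a b hsum
    apply hw a b
    have h1 : (∑ r, ((a r : ℂ) + (b r : ℂ) * Complex.I) * ww r) / (D:ℂ) = 0 := by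
      rw [Finset.sum_div]
      rw [← hsum]
      apply Finset.sum_congr rfl
      intro r _
      rw [hw'def]
      ring
    exact (div_eq_zero_iff.mp h1).resolve_right hDC
  have hrep' : ∀ z ∈ L, ∃ γ : Fin n → ℤ × ℤ, z = ∑ r, GC (γ r) * w' r := by
    intro z hz
    obtain ⟨γ, hγ⟩ := hrep z hz
    refine ⟨γ, ?_⟩
    have h1 : z = ((D:ℂ) * z) / (D:ℂ) := by field_simp
    rw [h1, hγ, Finset.sum_div]
    apply Finset.sum_congr rfl
    intro r _
    rw [hw'def]
    ring
  set Γ : ℂ → (Fin n → ℤ × ℤ) := fun z =>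
    if h : z ∈ L then Classical.choose (hrep' z h) else fun _ => (0,0) with hΓdef
  have hΓ : ∀ z (h : z ∈ L), z = ∑ r, GC (Γ z r) * w' r := by
    intro z h
    rw [hΓdef]
    simp only [dif_pos h]
    exact Classical.choose_spec (hrep' z h)
  set cost : ℂ → ℝ := fun z => ∑ r, (|((Γ z r).1 : ℝ)| + |((Γ z r).2 : ℝ)|) with hcost
  have hcost_nn : ∀ z, 0 ≤ cost z := by
    intro z
    apply Finset.sum_nonneg
    intro r _
    positivity
  set CB := 1 + ∑ ζ ∈ L.toFinset, cost ζ with hCB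
  have hCB1 : 1 ≤ CB := by
    rw [hCB]
    have : 0 ≤ ∑ ζ ∈ L.toFinset, cost ζ := Finset.sum_nonneg (fun ζ _ => hcost_nn ζ)
    linarith
  have hCBpos : 0 < CB := by linarith
  have hcost_le : ∀ ζ ∈ L, cost ζ ≤ CB - 1 := by
    intro ζ hζ
    rw [hCB]
    have := Finset.single_le_sum (f := cost) (fun z _ => hcost_nn z) (List.mem_toFinset.mpr hζ)
    linarith
  set δ0 := min (ε/(2*CB)) (1/4) with hδ0def
  have hδ0 : 0 < δ0 := lt_min (by positivity) (by norm_num)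
  have hδ04 : δ0 ≤ 1/4 := min_le_right _ _
  have hδ0ε : 2*CB*δ0 ≤ ε := by
    have h1 : δ0 ≤ ε/(2*CB) := min_le_left _ _
    rw [div_eq_mul_inv] at h1
    have := mul_le_mul_of_nonneg_left h1 (by positivity : (0:ℝ) ≤ 2*CB)
    calc 2*CB*δ0 ≤ 2*CB*(ε * (2*CB)⁻¹) := this
      _ = ε := by field_simp
  obtain ⟨T, hT, hcore⟩ := core w' hw' δ0 hδ0 hδ04
  refine ⟨T, hT, ?_⟩
  intro t ht
  obtain ⟨θ, hθ⟩ := hcore t ht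
  refine ⟨θ, ?_⟩
  intro z hz
  set ζ := toC z with hζ
  have hζL : ζ ∈ L := by
    rw [hL]
    exact List.mem_map_of_mem (Finset.mem_toList.mpr hz)
  set p : Fin n → ℤ := fun r => round (((t:ℂ) * w' r * Complex.exp ((θ:ℂ) * Complex.I)).re) with hp
  set q : Fin n → ℤ := fun r => round (((t:ℂ) * w' r * Complex.exp ((θ:ℂ) * Complex.I)).im) with hq
  have herr : ∀ r, ‖(t:ℂ) * w' r * Complex.exp ((θ:ℂ) * Complex.I) - GC (p r, q r)‖ ≤ 2*δ0 := by
    intro r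
    have h1 : |((t:ℂ) * w' r * Complex.exp ((θ:ℂ) * Complex.I)).re - ((p r : ℤ) : ℝ)| < δ0 := by
      rw [hp]; exact (hθ r).1
    have h2 : |((t:ℂ) * w' r * Complex.exp ((θ:ℂ) * Complex.I)).im - ((q r : ℤ) : ℝ)| < δ0 := by
      rw [hq]; exact (hθ r).2
    have h3 := Complex.norm_le_abs_re_add_abs_im
      ((t:ℂ) * w' r * Complex.exp ((θ:ℂ) * Complex.I) - GC (p r, q r))
    have hre : ((t:ℂ) * w' r * Complex.exp ((θ:ℂ) * Complex.I) - GC (p r, q r)).re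
        = ((t:ℂ) * w' r * Complex.exp ((θ:ℂ) * Complex.I)).re - (p r : ℝ) := by
      simp [GC]
    have him : ((t:ℂ) * w' r * Complex.exp ((θ:ℂ) * Complex.I) - GC (p r, q r)).im
        = ((t:ℂ) * w' r * Complex.exp ((θ:ℂ) * Complex.I)).im - (q r : ℝ) := by
      simp [GC]
    rw [hre, him] at h3
    linarith
  set G : ℤ × ℤ := ∑ r, gmul (Γ ζ r) (p r, q r) with hG
  have hGCG : GC G = ∑ r, GC (Γ ζ r) * GC (p r, q r) := by
    rw [hG, GC_sum]
    apply Finset.sum_congr rfl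
    intro r _
    rw [GC_mul]
  have hmain : ‖(t:ℂ) * ζ * Complex.exp ((θ:ℂ) * Complex.I) - GC G‖ < ε := by
    have hζeq := hΓ ζ hζL
    have hexp : (t:ℂ) * (∑ r, GC (Γ ζ r) * w' r) * Complex.exp ((θ:ℂ) * Complex.I)
        = ∑ r, GC (Γ ζ r) * ((t:ℂ) * w' r * Complex.exp ((θ:ℂ) * Complex.I)) := by
      rw [Finset.mul_sum, Finset.sum_mul]
      apply Finset.sum_congr rfl
      intro r _
      ring
    have hdiff : (t:ℂ) * ζ * Complex.exp ((θ:ℂ) * Complex.I) - GC G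
        = ∑ r, GC (Γ ζ r) * ((t:ℂ) * w' r * Complex.exp ((θ:ℂ) * Complex.I) - GC (p r, q r)) := by
      conv_lhs => rw [hζeq]
      rw [hexp, hGCG, ← Finset.sum_sub_distrib]
      apply Finset.sum_congr rfl
      intro r _
      ring
    rw [hdiff]
    have hbound : ‖∑ r, GC (Γ ζ r) *
        ((t:ℂ) * w' r * Complex.exp ((θ:ℂ) * Complex.I) - GC (p r, q r))‖
        ≤ ∑ r, (|((Γ ζ r).1 : ℝ)| + |((Γ ζ r).2 : ℝ)|) * (2*δ0) := by
      calc ‖∑ r, GC (Γ ζ r) * ((t:ℂ) * w' r * Complex.exp ((θ:ℂ) * Complex.I) - GC (p r, q r))‖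
          = ‖∑ r, GC (Γ ζ r) * ((t:ℂ) * w' r * Complex.exp ((θ:ℂ) * Complex.I) - GC (p r, q r))‖ :=
            rfl
        _ ≤ ∑ r, ‖GC (Γ ζ r) * ((t:ℂ) * w' r * Complex.exp ((θ:ℂ) * Complex.I) - GC (p r, q r))‖ :=
            norm_sum_le _ _
        _ = ∑ r, ‖GC (Γ ζ r) * ((t:ℂ) * w' r * Complex.exp ((θ:ℂ) * Complex.I) - GC (p r, q r))‖ := by
            apply Finset.sum_congr rfl
            intro r _
            rfl
        _ ≤ ∑ r, (|((Γ ζ r).1 : ℝ)| + |((Γ ζ r).2 : ℝ)|) * (2*δ0) := by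
            apply Finset.sum_le_sum
            intro r _
            rw [norm_mul]
            apply mul_le_mul (GC_abs_le _) (herr r) (norm_nonneg _)
            positivity
    have hsum2 : ∑ r, (|((Γ ζ r).1 : ℝ)| + |((Γ ζ r).2 : ℝ)|) * (2*δ0) = cost ζ * (2*δ0) := by
      rw [hcost, ← Finset.sum_mul]
    have hc := hcost_le ζ hζL
    calc ‖∑ r, GC (Γ ζ r) * ((t:ℂ) * w' r * Complex.exp ((θ:ℂ) * Complex.I) - GC (p r, q r))‖
        ≤ cost ζ * (2*δ0) := by rw [← hsum2]; exact hbound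
      _ ≤ (CB - 1) * (2*δ0) := by
          apply mul_le_mul_of_nonneg_right hc
          positivity
      _ = 2*CB*δ0 - 2*δ0 := by ring
      _ ≤ ε - 2*δ0 := by linarith
      _ < ε := by linarith
  set vg : EuclideanSpace ℝ (Fin 2) := WithLp.toLp 2 ![(G.1 : ℝ), (G.2 : ℝ)] with hvg
  have hvg_mem : vg ∈ intLattice 2 := by
    intro i
    fin_cases i
    · exact ⟨G.1, rfl⟩
    · exact ⟨G.2, rfl⟩
  have htoCvg : toC vg = GC G := by
    apply Complex.ext
    · simp [toC, hvg, GC]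
    · simp [toC, hvg, GC]
  have hrotz : toC (rot θ (t • z)) = (t:ℂ) * ζ * Complex.exp ((θ:ℂ) * Complex.I) := by
    rw [toC_rot, toC_smul, hζ]
    ring
  calc Metric.infDist (rot θ (t • z)) (intLattice 2)
      ≤ dist (rot θ (t • z)) vg := Metric.infDist_le_dist_of_mem hvg_mem
    _ = ‖toC (rot θ (t • z)) - toC vg‖ := dist_toC _ _
    _ = ‖(t:ℂ) * ζ * Complex.exp ((θ:ℂ) * Complex.I) - GC G‖ := by
        rw [hrotz, htoCvg]
    _ < ε := hmain

end AuxSTall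
end

section
/- For every t > 0 and every isometric embedding f of the three-point set {A=(0,0), B=(0,t), C=(t+1/2, 0)} ⊂ ℝ² into ℝ², one has max(dist(f(A),ℤ²), dist(f(B),ℤ²), dist(f(C),ℤ²)) ≥ 1/8. -/
set_option maxHeartbeats 1000000
open Metric

lemma dist_sq_two (x y : EuclideanSpace ℝ (Fin 2)) :
    dist x y ^ 2 = (x 0 - y 0)^2 + (x 1 - y 1)^2 := by
  rw [EuclideanSpace.dist_eq, Real.sq_sqrt (by positivity)]
  simp [Fin.sum_univ_two, Real.dist_eq, sq_abs]


lemma key_ineq (S P u : ℝ) (hu : 0 < u) (hS : 1 ≤ S)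
    (h1 : u*S < 2*P) (h2 : 4*P^2 ≤ S*u^2) : False := by
  have hus : 0 ≤ u*S := by positivity
  have hsq : (u*S)^2 < (2*P)^2 := by
    have := mul_self_lt_mul_self hus h1
    nlinarith [this]
  have hSpos : (0:ℝ) < S := by linarith
  nlinarith [hsq, h2, mul_pos (mul_pos hu hu) hSpos, hS]

lemma endgame (t X0 X1 : ℝ) (m n : ℤ) (ht : 0 < t)
    (hX : X0^2 + X1^2 = (t + 1/2)^2)
    (H : ((2*t+1)*(m:ℝ) - X0)^2 + ((2*t+1)*(n:ℝ) - X1)^2 < (t + 1/2)^2) : False := by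
  rcases eq_or_ne (m^2 + n^2) 0 with h | h
  · have hm : m = 0 := by nlinarith [sq_nonneg m, sq_nonneg n]
    have hn : n = 0 := by nlinarith [sq_nonneg m, sq_nonneg n]
    rw [hm, hn] at H
    push_cast at H
    nlinarith [H, hX]
  · have h1 : (1:ℤ) ≤ m^2 + n^2 := by
      have : 0 ≤ m^2 + n^2 := by positivity
      omega
    have h2 : (1:ℝ) ≤ (m:ℝ)^2 + (n:ℝ)^2 := by exact_mod_cast h1
    set G0 : ℝ := (m:ℝ) with hG0
    set G1 : ℝ := (n:ℝ) with hG1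
    have hu : (0:ℝ) < 2*t+1 := by linarith
    have hX4 : (2*t+1)^2 = 4*(X0^2 + X1^2) := by linear_combination -4*hX
    have step1 : (2*t+1)^2 * (G0^2+G1^2) < 2*(2*t+1)*(G0*X0+G1*X1) := by nlinarith [H, hX]
    have step2 : 4*(G0*X0+G1*X1)^2 ≤ (G0^2+G1^2) * (2*t+1)^2 := by
      rw [hX4]; nlinarith [sq_nonneg (G0*X1 - G1*X0)]
    have step1' : (2*t+1)*(G0^2+G1^2) < 2*(G0*X0+G1*X1) := by nlinarith [step1, hu]
    exact key_ineq _ _ _ hu h2 step1' step2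

lemma err_bound (p0 p1 q0 q1 : ℝ) (hp : p0^2 + p1^2 < 1/16) (hq : q0^2 + q1^2 < 1/16) :
    (p0 - q1)^2 + (p1 + q0)^2 < 1/4 := by
  nlinarith [sq_nonneg (p0 + q1), sq_nonneg (p1 - q0)]

lemma core_s3 (t s X0 X1 Y0 Y1 a0 a1 b0 b1 c0 c1 : ℝ)
    (nz0 nz1 nw0 nw1 : ℤ)
    (ht : 0 < t)
    (hX : X0^2 + X1^2 = (t + 1/2)^2)
    (horth : X0*Y0 + X1*Y1 = 0)
    (hs : s = 1 ∨ s = -1)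
    (hD : X0*Y1 - X1*Y0 = s*(t*(t+1/2)))
    (ha : a0^2 + a1^2 < 1/64)
    (hb : b0^2 + b1^2 < 1/64)
    (hc : c0^2 + c1^2 < 1/64)
    (hz0 : (nz0 : ℝ) = X0 + a0 - c0)
    (hz1 : (nz1 : ℝ) = X1 + a1 - c1)
    (hw0 : (nw0 : ℝ) = Y0 + a0 - b0)
    (hw1 : (nw1 : ℝ) = Y1 + a1 - b1) : False := by
  have hs2 : s^2 = 1 := by rcases hs with rfl | rfl <;> norm_num
  have ht2 : (0:ℝ) < t + 1/2 := by linarith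
  have k1 : (t+1/2)*Y1 = s*t*X0 := by
    have h0 : (t+1/2)*((t+1/2)*Y1 - s*t*X0) = 0 := by
      linear_combination (-Y1)*hX + X0*hD + X1*horth
    rcases mul_eq_zero.1 h0 with h | h
    · linarith
    · linarith
  have k2 : (t+1/2)*Y0 = -(s*t*X1) := by
    have h0 : (t+1/2)*((t+1/2)*Y0 + s*t*X1) = 0 := by
      linear_combination (-Y0)*hX + (-X1)*hD + X0*horth
    rcases mul_eq_zero.1 h0 with h | h
    · linarith
    · linarith
  have hac : (a0 - c0)^2 + (a1 - c1)^2 < 1/16 := by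
    nlinarith [sq_nonneg (a0 + c0), sq_nonneg (a1 + c1)]
  have hab : (a0 - b0)^2 + (a1 - b1)^2 < 1/16 := by
    nlinarith [sq_nonneg (a0 + b0), sq_nonneg (a1 + b1)]
  have hE : (a0 - c0 - s*(a1 - b1))^2 + (a1 - c1 + s*(a0 - b0))^2 < 1/4 := by
    rcases hs with rfl | rfl
    · have := err_bound (a0 - c0) (a1 - c1) (a0 - b0) (a1 - b1) hac hab
      simpa using this
    · have := err_bound (a0 - c0) (a1 - c1) (b0 - a0) (b1 - a1) hac (by nlinarith [hab])
      simpa using this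
  have hG0 : (2*t+1)*((nz0:ℝ) - s*(nw1:ℝ)) - X0 = (2*t+1)*(a0 - c0 - s*(a1 - b1)) := by
    linear_combination (2*t+1)*hz0 - (2*t+1)*s*hw1 - 2*s*k1 - 2*t*X0*hs2
  have hG1 : (2*t+1)*((nz1:ℝ) + s*(nw0:ℝ)) - X1 = (2*t+1)*(a1 - c1 + s*(a0 - b0)) := by
    linear_combination (2*t+1)*hz1 + (2*t+1)*s*hw0 + 2*s*k2 - 2*t*X1*hs2
  have H : ((2*t+1)*((nz0:ℝ) - s*(nw1:ℝ)) - X0)^2 + ((2*t+1)*((nz1:ℝ) + s*(nw0:ℝ)) - X1)^2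
      < (t + 1/2)^2 := by
    rw [hG0, hG1]
    have hu2 : (0:ℝ) < (2*t+1)^2 := by positivity
    nlinarith [mul_lt_mul_of_pos_left hE hu2]
  rcases hs with rfl | rfl
  · exact endgame t X0 X1 (nz0 - nw1) (nz1 + nw0) ht hX (by push_cast; simpa using H)
  · exact endgame t X0 X1 (nz0 + nw1) (nz1 - nw0) ht hX (by push_cast; convert H using 3 <;> ring)

theorem stmt_3 (t : ℝ) (ht : 0 < t)
    (A B C : EuclideanSpace ℝ (Fin 2))
    (hA : A = !₂[0, 0]) (hB : B = !₂[0, t]) (hC : C = !₂[t + 1/2, 0])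
    (f : EuclideanSpace ℝ (Fin 2) → EuclideanSpace ℝ (Fin 2))
    (hAB : dist (f A) (f B) = dist A B)
    (hAC : dist (f A) (f C) = dist A C)
    (hBC : dist (f B) (f C) = dist B C) :
    1/8 ≤ max (Metric.infDist (f A) (intLattice 2))
          (max (Metric.infDist (f B) (intLattice 2))
               (Metric.infDist (f C) (intLattice 2))) := by
  by_contra hcon
  push_neg at hcon
  have hne : (intLattice 2).Nonempty := ⟨0, fun i => ⟨0, by simp⟩⟩
  have h1 : Metric.infDist (f A) (intLattice 2) < 1/8 := lt_of_le_of_lt (le_max_left _ _) hcon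
  have h2 : Metric.infDist (f B) (intLattice 2) < 1/8 :=
    lt_of_le_of_lt (le_trans (le_max_left _ _) (le_max_right _ _)) hcon
  have h3 : Metric.infDist (f C) (intLattice 2) < 1/8 :=
    lt_of_le_of_lt (le_trans (le_max_right _ _) (le_max_right _ _)) hcon
  obtain ⟨p, hpL, hp⟩ := (Metric.infDist_lt_iff hne).1 h1
  obtain ⟨q, hqL, hq⟩ := (Metric.infDist_lt_iff hne).1 h2
  obtain ⟨r, hrL, hr⟩ := (Metric.infDist_lt_iff hne).1 h3
  obtain ⟨np0, hnp0⟩ := hpL 0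
  obtain ⟨np1, hnp1⟩ := hpL 1
  obtain ⟨nq0, hnq0⟩ := hqL 0
  obtain ⟨nq1, hnq1⟩ := hqL 1
  obtain ⟨nr0, hnr0⟩ := hrL 0
  obtain ⟨nr1, hnr1⟩ := hrL 1
  -- squared distance equalities
  have e1 : (f A 0 - f B 0)^2 + (f A 1 - f B 1)^2 = t^2 := by
    rw [← dist_sq_two, hAB, dist_sq_two, hA, hB]
    simp [Matrix.cons_val_zero, Matrix.cons_val_one, Matrix.head_cons]
  have e2 : (f A 0 - f C 0)^2 + (f A 1 - f C 1)^2 = (t + 1/2)^2 := by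
    rw [← dist_sq_two, hAC, dist_sq_two, hA, hC]
    simp [Matrix.cons_val_zero, Matrix.cons_val_one, Matrix.head_cons]
    ring
  have e3 : (f B 0 - f C 0)^2 + (f B 1 - f C 1)^2 = t^2 + (t + 1/2)^2 := by
    rw [← dist_sq_two, hBC, dist_sq_two, hB, hC]
    simp [Matrix.cons_val_zero, Matrix.cons_val_one, Matrix.head_cons]
    ring
  have ha : (f A 0 - p 0)^2 + (f A 1 - p 1)^2 < 1/64 := by
    have h : dist (f A) p ^ 2 < 1/64 := by nlinarith [dist_nonneg (x := f A) (y := p), hp]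
    rwa [dist_sq_two] at h
  have hb : (f B 0 - q 0)^2 + (f B 1 - q 1)^2 < 1/64 := by
    have h : dist (f B) q ^ 2 < 1/64 := by nlinarith [dist_nonneg (x := f B) (y := q), hq]
    rwa [dist_sq_two] at h
  have hc : (f C 0 - r 0)^2 + (f C 1 - r 1)^2 < 1/64 := by
    have h : dist (f C) r ^ 2 < 1/64 := by nlinarith [dist_nonneg (x := f C) (y := r), hr]
    rwa [dist_sq_two] at h
  -- abbreviate coordinates
  set FA0 := f A 0 with hFA0
  set FA1 := f A 1 with hFA1
  set FB0 := f B 0 with hFB0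
  set FB1 := f B 1 with hFB1
  set FC0 := f C 0 with hFC0
  set FC1 := f C 1 with hFC1
  -- the vectors X = fC - fA, Y = fB - fA
  have hX : (f C 0 - f A 0)^2 + (f C 1 - f A 1)^2 = (t + 1/2)^2 := by linear_combination e2
  have hY : (f B 0 - f A 0)^2 + (f B 1 - f A 1)^2 = t^2 := by linear_combination e1
  have horth : (f C 0 - f A 0)*(f B 0 - f A 0) + (f C 1 - f A 1)*(f B 1 - f A 1) = 0 := by
    linear_combination (1/2)*e1 + (1/2)*e2 - (1/2)*e3
  -- sign of the determinant
  have hD2 : ((f C 0 - f A 0)*(f B 1 - f A 1) - (f C 1 - f A 1)*(f B 0 - f A 0))^2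
      = (t*(t+1/2))^2 := by
    linear_combination ((f C 0 - f A 0)^2 + (f C 1 - f A 1)^2)*hY + t^2*hX
      - ((f C 0 - f A 0)*(f B 0 - f A 0) + (f C 1 - f A 1)*(f B 1 - f A 1))*horth
  have hfac : (((f C 0 - f A 0)*(f B 1 - f A 1) - (f C 1 - f A 1)*(f B 0 - f A 0)) - t*(t+1/2))
      * (((f C 0 - f A 0)*(f B 1 - f A 1) - (f C 1 - f A 1)*(f B 0 - f A 0)) + t*(t+1/2)) = 0 := by
    linear_combination hD2
  obtain ⟨s, hs, hD⟩ : ∃ s : ℝ, (s = 1 ∨ s = -1) ∧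
      (f C 0 - f A 0)*(f B 1 - f A 1) - (f C 1 - f A 1)*(f B 0 - f A 0) = s*(t*(t+1/2)) := by
    rcases mul_eq_zero.1 hfac with h | h
    · exact ⟨1, Or.inl rfl, by linarith⟩
    · exact ⟨-1, Or.inr rfl, by linarith⟩
  -- error bounds
  exact core_s3 t s (f C 0 - f A 0) (f C 1 - f A 1) (f B 0 - f A 0) (f B 1 - f A 1)
    (f A 0 - p 0) (f A 1 - p 1) (f B 0 - q 0) (f B 1 - q 1) (f C 0 - r 0) (f C 1 - r 1)
    (nr0 - np0) (nr1 - np1) (nq0 - np0) (nq1 - np1)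
    ht hX horth hs hD ha hb hc
    (by push_cast; rw [← hnp0, ← hnr0]; ring)
    (by push_cast; rw [← hnp1, ← hnr1]; ring)
    (by push_cast; rw [← hnp0, ← hnq0]; ring)
    (by push_cast; rw [← hnp1, ← hnq1]; ring)
end

section
/- Let V = (z₁,…,z_r) ∈ ℂ^r be such that the 2r real numbers Re(z₁),…,Re(z_r), Im(z₁),…,Im(z_r) are linearly independent over ℚ. Then for every ε > 0 there is L > 0 such that for every W = (w₁,…,w_r) ∈ ℂ^r there exists s ∈ [0, L] with dist(w_k + s·z_k, ℤ[i]) < ε for all k. -/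
lemma eq_of_int_mul_small {a u u' : ℝ} (j : ℤ) (h : u - u' = j * a)
    (hu : |u| < |a| / 2) (hu' : |u'| < |a| / 2) : u = u' := by
  have h1 : |(j : ℝ) * a| < |a| := by
    rw [← h]
    calc |u - u'| ≤ |u| + |u'| := abs_sub u u'
    _ < |a| / 2 + |a| / 2 := by exact add_lt_add hu hu'
    _ = |a| := by ring
  have hj : j = 0 := by
    by_contra hj
    have h2 : (1 : ℝ) ≤ |(j : ℝ)| := by
      have : (1 : ℤ) ≤ |j| := Int.one_le_abs hj
      calc (1:ℝ) ≤ (|j| : ℤ) := by exact_mod_cast this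
      _ = |(j : ℝ)| := by push_cast; ring
    have : |a| ≤ |(j:ℝ) * a| := by
      rw [abs_mul]
      nlinarith [abs_nonneg a]
    linarith
  rw [hj] at h
  push_cast at h
  linarith

lemma rigidity1D {a : ℝ} (ha : a ≠ 0) (g : ℝ → ℝ)
    (hadd : ∀ x y : ℝ, ∃ j : ℤ, g (x + y) - g x - g y = j * a)
    (hcont : ∀ ρ : ℝ, 0 < ρ → ∃ τ : ℝ, 0 < τ ∧ ∀ x : ℝ, |x| < τ → ∃ j : ℤ, |g x - j * a| < ρ) :
    ∃ c : ℝ, ∀ x : ℝ, ∃ j : ℤ, g x - c * x = j * a := by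
  have ha6 : 0 < |a| / 6 := by positivity
  obtain ⟨τ, hτ, hτ2⟩ := hcont (|a| / 6) ha6
  classical
  set r : ℝ → ℝ := fun x =>
    if h : ∃ j : ℤ, |g x - (j : ℝ) * a| < |a| / 6 then g x - (h.choose : ℝ) * a else 0 with hr_def
  have hr_bound : ∀ u : ℝ, |u| < τ → |r u| < |a| / 6 := by
    intro u hu
    have h : ∃ j : ℤ, |g u - (j : ℝ) * a| < |a| / 6 := hτ2 u hu
    simp only [hr_def, dif_pos h]
    exact h.choose_spec
  have hgr : ∀ u : ℝ, |u| < τ → ∃ j : ℤ, g u - r u = (j : ℝ) * a := by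
    intro u hu
    have h : ∃ j : ℤ, |g u - (j : ℝ) * a| < |a| / 6 := hτ2 u hu
    refine ⟨h.choose, ?_⟩
    simp only [hr_def, dif_pos h]
    ring
  have hr_add : ∀ x y : ℝ, |x| < τ → |y| < τ → |x + y| < τ → r (x + y) = r x + r y := by
    intro x y hx hy hxy
    obtain ⟨j1, hj1⟩ := hgr x hx
    obtain ⟨j2, hj2⟩ := hgr y hy
    obtain ⟨j3, hj3⟩ := hgr (x + y) hxy
    obtain ⟨j0, hj0⟩ := hadd x y
    refine eq_of_int_mul_small (a := a) (j0 + j1 + j2 - j3) ?_ ?_ ?_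
    · push_cast
      nlinarith [hj0, hj1, hj2, hj3]
    · have := hr_bound (x+y) hxy
      linarith
    · have h1 := hr_bound x hx
      have h2 := hr_bound y hy
      have : |r x + r y| ≤ |r x| + |r y| := abs_add_le _ _
      linarith
  have hr_zero : r 0 = 0 := by
    have h0 : |(0:ℝ)| < τ := by simpa using hτ
    have := hr_add 0 0 h0 h0 (by simpa using hτ)
    simp at this
    linarith
  have hr_nsmul : ∀ (k : ℕ) (x : ℝ), |x| < τ → |(k : ℝ) * x| < τ →
      r ((k : ℝ) * x) = (k : ℝ) * r x := by
    intro k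
    induction k with
    | zero => intro x hx hkx; simp [hr_zero]
    | succ k ih =>
      intro x hx hkx
      have hkle : |(k : ℝ) * x| ≤ |((k:ℕ)+1 : ℝ) * x| := by
        rw [abs_mul, abs_mul]
        have : |(k:ℝ)| ≤ |((k:ℕ)+1:ℝ)| := by
          rw [abs_of_nonneg (by positivity), abs_of_nonneg (by positivity)]
          linarith
        nlinarith [abs_nonneg x]
      have hk : |(k : ℝ) * x| < τ := by
        refine lt_of_le_of_lt ?_ hkx
        push_cast
        push_cast at hkle
        linarith
      have hsplit : ((k:ℕ)+1 : ℝ) * x = (k:ℝ) * x + x := by push_cast; ring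
      have hkx' : |(k:ℝ) * x + x| < τ := by rw [← hsplit]; push_cast; push_cast at hkx; exact hkx
      have : r (((k:ℕ)+1 : ℝ) * x) = ((k:ℕ)+1 : ℝ) * r x := by
        calc r (((k:ℕ)+1 : ℝ) * x) = r ((k:ℝ) * x + x) := by rw [hsplit]
        _ = r ((k:ℝ)*x) + r x := hr_add _ _ hk hx hkx'
        _ = (k:ℝ) * r x + r x := by rw [ih x hx hk]
        _ = ((k:ℕ)+1 : ℝ) * r x := by push_cast; ring
      push_cast
      push_cast at this
      exact this
  -- the canonical denominator
  set nn : ℝ → ℕ := fun x => ⌈|x| / τ⌉₊ + 1 with hnn_def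
  have hnn_pos : ∀ x : ℝ, 0 < (nn x : ℝ) := by
    intro x; positivity
  have hnn : ∀ x : ℝ, |x / (nn x : ℝ)| < τ := by
    intro x
    rw [abs_div, abs_of_nonneg (le_of_lt (hnn_pos x)), div_lt_iff₀ (hnn_pos x)]
    have h1 : |x| / τ ≤ (⌈|x| / τ⌉₊ : ℝ) := Nat.le_ceil _
    have h2 : ((nn x : ℕ) : ℝ) = (⌈|x| / τ⌉₊ : ℝ) + 1 := by simp [hnn_def]
    rw [h2]
    have := div_le_iff₀ hτ |>.mp h1
    nlinarith
  have hdiv_le : ∀ (x : ℝ) (N M : ℕ), 0 < N → N ≤ M → |x / (M:ℝ)| ≤ |x / (N:ℝ)| := by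
    intro x N M hN hNM
    have hN' : (0:ℝ) < N := by exact_mod_cast hN
    have hM' : (0:ℝ) < M := by exact_mod_cast lt_of_lt_of_le hN hNM
    rw [abs_div, abs_div, abs_of_nonneg hN'.le, abs_of_nonneg hM'.le]
    apply div_le_div_of_nonneg_left (abs_nonneg x) hN'
    exact_mod_cast hNM
  have hdiv : ∀ (x : ℝ) (N : ℕ), 0 < N → |x / (N:ℝ)| < τ →
      (N : ℝ) * r (x / (N:ℝ)) = (nn x : ℝ) * r (x / (nn x : ℝ)) := by
    intro x N hN hxN
    have hNn : (0:ℝ) < (N : ℝ) * (nn x : ℝ) := by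
      have := hnn_pos x
      have : (0:ℝ) < (N:ℝ) := by exact_mod_cast hN
      positivity
    set b : ℝ := x / ((N : ℝ) * (nn x : ℝ)) with hb_def
    have hb1 : (nn x : ℝ) * b = x / (N : ℝ) := by
      rw [hb_def]; have h0 : (nn x : ℝ) ≠ 0 := (hnn_pos x).ne'; field_simp
    have hb2 : (N : ℝ) * b = x / (nn x : ℝ) := by
      rw [hb_def]; field_simp
    have hbsmall : |b| < τ := by
      have : b = (x / (N:ℝ)) / (nn x : ℝ) := by rw [hb_def]; field_simp
      rw [this, abs_div, abs_of_nonneg (hnn_pos x).le]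
      calc |x / (N:ℝ)| / (nn x : ℝ) ≤ |x / (N:ℝ)| / 1 := by
            apply div_le_div_of_nonneg_left (abs_nonneg _) one_pos
            have : (1:ℕ) ≤ nn x := by simp [hnn_def]
            exact_mod_cast this
      _ = |x / (N:ℝ)| := by ring
      _ < τ := hxN
    have e1 : r (x / (N:ℝ)) = (nn x : ℝ) * r b := by
      rw [← hb1]; exact hr_nsmul (nn x) b hbsmall (by rw [hb1]; exact hxN)
    have e2 : r (x / (nn x : ℝ)) = (N : ℝ) * r b := by
      rw [← hb2]; exact hr_nsmul N b hbsmall (by rw [hb2]; exact hnn x)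
    rw [e1, e2]; ring
  set F : ℝ → ℝ := fun x => (nn x : ℝ) * r (x / (nn x : ℝ)) with hF_def
  have hF_eq : ∀ (x : ℝ) (N : ℕ), 0 < N → |x / (N:ℝ)| < τ → F x = (N:ℝ) * r (x / (N:ℝ)) := by
    intro x N hN h; rw [hF_def]; exact (hdiv x N hN h).symm
  have hF_add : ∀ x y : ℝ, F (x + y) = F x + F y := by
    intro x y
    set N : ℕ := nn x + nn y + nn (x + y) with hN_def
    have hN : 0 < N := by
      have := hnn_pos x; simp [hN_def, hnn_def]
    have hxN : |x / (N:ℝ)| < τ :=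
      lt_of_le_of_lt (hdiv_le x (nn x) N (by simp [hnn_def]) (by rw [hN_def]; omega)) (hnn x)
    have hyN : |y / (N:ℝ)| < τ :=
      lt_of_le_of_lt (hdiv_le y (nn y) N (by simp [hnn_def]) (by rw [hN_def]; omega)) (hnn y)
    have hxyN : |(x + y) / (N:ℝ)| < τ :=
      lt_of_le_of_lt (hdiv_le (x+y) (nn (x+y)) N (by simp [hnn_def]) (by rw [hN_def]; omega)) (hnn (x+y))
    have hsplit : (x + y) / (N:ℝ) = x / (N:ℝ) + y / (N:ℝ) := by ring
    have hxyN' : |x / (N:ℝ) + y / (N:ℝ)| < τ := by rw [← hsplit]; exact hxyN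
    rw [hF_eq (x+y) N hN hxyN, hF_eq x N hN hxN, hF_eq y N hN hyN, hsplit,
      hr_add _ _ hxN hyN hxyN']
    ring
  have hg_nsmul : ∀ (k : ℕ) (u : ℝ), ∃ j : ℤ, g ((k:ℝ) * u) - (k:ℝ) * g u = (j:ℝ) * a := by
    intro k
    induction k with
    | zero =>
      intro u
      obtain ⟨j, hj⟩ := hadd 0 0
      exact ⟨-j, by push_cast; simp at hj ⊢; linarith⟩
    | succ k ih =>
      intro u
      obtain ⟨j1, hj1⟩ := ih u
      obtain ⟨j2, hj2⟩ := hadd ((k:ℝ) * u) u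
      refine ⟨j1 + j2, ?_⟩
      have : ((k:ℕ)+1 : ℝ) * u = (k:ℝ) * u + u := by push_cast; ring
      push_cast
      rw [this] at *
      push_cast at hj1 hj2 ⊢
      nlinarith [hj1, hj2]
  have hgF : ∀ x : ℝ, ∃ j : ℤ, g x - F x = (j:ℝ) * a := by
    intro x
    set N : ℕ := nn x
    have hN : 0 < N := by exact Nat.succ_pos _
    have hxN : |x / (N:ℝ)| < τ := hnn x
    obtain ⟨j1, hj1⟩ := hg_nsmul N (x / (N:ℝ))
    obtain ⟨j2, hj2⟩ := hgr (x / (N:ℝ)) hxN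
    have hNx : (N:ℝ) * (x / (N:ℝ)) = x := by
      field_simp
    refine ⟨j1 + (N:ℤ) * j2, ?_⟩
    have hFx : F x = (N:ℝ) * r (x / (N:ℝ)) := rfl
    rw [hNx] at hj1
    have hcast : ((j1 + (N:ℤ) * j2 : ℤ) : ℝ) = (j1:ℝ) + (N:ℝ) * (j2:ℝ) := by
      push_cast; ring
    rw [hFx, hcast]
    linear_combination hj1 + (N:ℝ) * hj2
  -- boundedness of `F` on `[-1, 1]`
  set C : ℝ := ((⌈1 / τ⌉₊ : ℝ) + 1) * (|a| / 6) with hC_def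
  have hC0 : 0 ≤ C := by positivity
  have hF_bound : ∀ x : ℝ, |x| ≤ 1 → |F x| ≤ C := by
    intro x hx
    have h1 : (nn x : ℕ) ≤ ⌈1/τ⌉₊ + 1 := by
      simp only [hnn_def]
      have h2 : ⌈|x|/τ⌉₊ ≤ ⌈1/τ⌉₊ := Nat.ceil_le_ceil (by gcongr)
      omega
    have h2 : |F x| = (nn x : ℝ) * |r (x / (nn x : ℝ))| := by
      rw [hF_def]
      simp only
      rw [abs_mul, abs_of_nonneg (hnn_pos x).le]
    rw [h2]
    calc (nn x : ℝ) * |r (x / (nn x : ℝ))| ≤ (nn x : ℝ) * (|a|/6) := by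
          exact mul_le_mul_of_nonneg_left (hr_bound _ (hnn x)).le (hnn_pos x).le
    _ ≤ ((⌈1 / τ⌉₊ : ℝ) + 1) * (|a| / 6) := by
          apply mul_le_mul_of_nonneg_right ?_ (by positivity)
          have : ((nn x : ℕ) : ℝ) ≤ ((⌈1/τ⌉₊ + 1 : ℕ) : ℝ) := by exact_mod_cast h1
          push_cast at this ⊢
          linarith
  set G : ℝ → ℝ := fun x => F x - x * F 1 with hG_def
  have hG_add : ∀ x y : ℝ, G (x + y) = G x + G y := by
    intro x y; simp only [hG_def]; rw [hF_add]; ring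
  have hG_zero : G 0 = 0 := by
    have := hG_add 0 0; simp at this; linarith
  have hG_one : G 1 = 0 := by simp [hG_def]
  have hG_neg : ∀ x : ℝ, G (-x) = - G x := by
    intro x
    have := hG_add x (-x); simp at this; linarith [hG_zero]
  have hG_nsmul : ∀ (N : ℕ) (x : ℝ), G ((N:ℝ) * x) = (N:ℝ) * G x := by
    intro N
    induction N with
    | zero => intro x; simpa using hG_zero
    | succ N ih =>
      intro x
      have : ((N:ℕ)+1 : ℝ) * x = (N:ℝ) * x + x := by push_cast; ring
      push_cast [this, hG_add, ih x]
      ring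
  have hG_int : ∀ m : ℤ, G (m : ℝ) = 0 := by
    intro m
    induction m using Int.induction_on with
    | zero => simpa using hG_zero
    | succ k ih => push_cast [hG_add]; push_cast at ih; rw [ih, hG_one]; ring
    | pred k ih =>
      push_cast at ih ⊢
      have : (-(k:ℝ) - 1) = (-(k:ℝ)) + (-1) := by ring
      rw [this, hG_add, ih]
      have : G (-1) = - G 1 := by simpa using hG_neg 1
      rw [this, hG_one]; ring
  have hG_frac : ∀ x : ℝ, G x = G (Int.fract x) := by
    intro x
    have : x = Int.fract x + (⌊x⌋ : ℝ) := by rw [Int.fract]; ring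
    calc G x = G (Int.fract x + (⌊x⌋ : ℝ)) := by rw [← this]
    _ = G (Int.fract x) + G ((⌊x⌋ : ℝ)) := hG_add _ _
    _ = G (Int.fract x) := by rw [hG_int]; ring
  set C' : ℝ := C + |F 1| with hC'_def
  have hC'0 : 0 ≤ C' := by positivity
  have hG_bound : ∀ x : ℝ, |x| ≤ 1 → |G x| ≤ C' := by
    intro x hx
    simp only [hG_def, hC'_def]
    calc |F x - x * F 1| ≤ |F x| + |x * F 1| := abs_sub _ _
    _ ≤ C + |F 1| := by
        have h1 := hF_bound x hx
        have h2 : |x * F 1| ≤ |F 1| := by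
          rw [abs_mul]
          nlinarith [abs_nonneg (F 1), abs_nonneg x]
        linarith
  have hG_eq_zero : ∀ x : ℝ, G x = 0 := by
    intro x
    by_contra hGx
    have hpos : 0 < |G x| := abs_pos.mpr hGx
    obtain ⟨N, hN⟩ := exists_nat_gt (C' / |G x|)
    have hN0 : (0:ℝ) < N := lt_of_le_of_lt (by positivity) hN
    have key : (N:ℝ) * |G x| ≤ C' := by
      have h1 : (N:ℝ) * |G x| = |G ((N:ℝ) * x)| := by
        rw [hG_nsmul, abs_mul, abs_of_nonneg hN0.le]
      rw [h1, hG_frac ((N:ℝ) * x)]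
      apply hG_bound
      rw [abs_of_nonneg (Int.fract_nonneg _)]
      exact (Int.fract_lt_one _).le
    have : C' < (N:ℝ) * |G x| := by
      rw [div_lt_iff₀ hpos] at hN
      linarith
    linarith
  refine ⟨F 1, fun x => ?_⟩
  obtain ⟨j, hj⟩ := hgF x
  refine ⟨j, ?_⟩
  have hx := hG_eq_zero x
  simp only [hG_def] at hx
  have : F x = x * F 1 := by linarith
  rw [← hj, this]
  ring
section Density

variable {n : ℕ}

def lineLattice {n : ℕ} (v : Fin n → ℝ) : AddSubgroup (Fin n → ℝ) where
  carrier := {x | ∃ s : ℝ, ∃ m : Fin n → ℤ, x = fun i => s * v i + (m i : ℝ)}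
  zero_mem' := ⟨0, 0, by funext i; simp⟩
  add_mem' := by
    rintro x y ⟨s, m, rfl⟩ ⟨t, l, rfl⟩
    refine ⟨s + t, m + l, ?_⟩
    funext i
    simp only [Pi.add_apply]
    push_cast
    ring
  neg_mem' := by
    rintro x ⟨s, m, rfl⟩
    refine ⟨-s, -m, ?_⟩
    funext i
    simp only [Pi.neg_apply]
    push_cast
    ring

lemma snoc_add (t t' : Fin n → ℝ) (y y' : ℝ) :
    (Fin.snoc t y + Fin.snoc t' y' : Fin (n+1) → ℝ) = Fin.snoc (t + t') (y + y') := by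
  funext i
  refine Fin.lastCases ?_ ?_ i
  · simp
  · intro j; simp

lemma snoc_neg (t : Fin n → ℝ) (y : ℝ) :
    (-(Fin.snoc t y) : Fin (n+1) → ℝ) = Fin.snoc (-t) (-y) := by
  funext i
  refine Fin.lastCases ?_ ?_ i
  · simp
  · intro j; simp

lemma snoc_sub (t t' : Fin n → ℝ) (y y' : ℝ) :
    (Fin.snoc t y - Fin.snoc t' y' : Fin (n+1) → ℝ) = Fin.snoc (t - t') (y - y') := by
  rw [sub_eq_add_neg, snoc_neg, snoc_add]
  rw [sub_eq_add_neg, sub_eq_add_neg]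

lemma snoc_zero : (Fin.snoc 0 0 : Fin (n+1) → ℝ) = 0 := by
  funext i
  refine Fin.lastCases ?_ ?_ i
  · simp
  · intro j; simp

lemma continuous_snoc (t : Fin n → ℝ) :
    Continuous (fun y : ℝ => (Fin.snoc t y : Fin (n+1) → ℝ)) := by
  apply continuous_pi
  intro i
  refine Fin.lastCases ?_ ?_ i
  · simp only [Fin.snoc_last]; exact continuous_id
  · intro j; simp only [Fin.snoc_castSucc]; exact continuous_const

theorem denseLineLattice : ∀ (n : ℕ) (v : Fin n → ℝ), LinearIndependent ℚ v →
    Dense (lineLattice v : Set (Fin n → ℝ)) := by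
  intro n
  induction n with
  | zero =>
    intro v _ x
    have hx : x = 0 := Subsingleton.elim x 0
    rw [hx]
    exact subset_closure (AddSubgroup.zero_mem _)
  | succ n IH =>
    intro v hv
    classical
    -- no nontrivial integer relation
    have hrel : ∀ c : Fin (n+1) → ℤ, (∑ i, (c i : ℝ) * v i) = 0 → ∀ i, c i = 0 := by
      intro c hc i
      rw [Fintype.linearIndependent_iff] at hv
      have h := hv (fun i => (c i : ℚ)) ?_ i
      · exact_mod_cast h
      · rw [← hc]
        apply Finset.sum_congr rfl
        intro j _
        rw [Rat.smul_def]
        push_cast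
        ring
    have hv' : LinearIndependent ℚ (v ∘ Fin.castSucc) :=
      LinearIndependent.comp hv _ (Fin.castSucc_injective n)
    have IH' := IH (v ∘ Fin.castSucc) hv'
    set H : AddSubgroup (Fin (n+1) → ℝ) := (lineLattice v).topologicalClosure with hH_def
    have hHc : IsClosed (H : Set (Fin (n+1) → ℝ)) :=
      AddSubgroup.isClosed_topologicalClosure _
    have hGH : ∀ x ∈ lineLattice v, x ∈ H := fun x hx =>
      AddSubgroup.le_topologicalClosure _ hx
    -- approximation from the induction hypothesis
    have hDseq : ∀ (t : Fin n → ℝ) (ε : ℝ), 0 < ε → ∃ s : ℝ, ∃ m : Fin n → ℤ,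
        ∀ i, |s * v (Fin.castSucc i) + (m i : ℝ) - t i| < ε := by
      intro t ε hε
      have ht : t ∈ closure (lineLattice (v ∘ Fin.castSucc) : Set (Fin n → ℝ)) := IH' t
      rw [Metric.mem_closure_iff] at ht
      obtain ⟨b, hb, hdist⟩ := ht ε hε
      obtain ⟨s, m, rfl⟩ := hb
      refine ⟨s, m, fun i => ?_⟩
      have h1 := dist_le_pi_dist t (fun i => s * (v ∘ Fin.castSucc) i + (m i : ℝ)) i
      have h2 : dist (t i) (s * v (Fin.castSucc i) + (m i : ℝ)) < ε := by
        refine lt_of_le_of_lt ?_ hdist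
        simpa using h1
      rw [Real.dist_eq] at h2
      rw [abs_sub_comm] at h2
      exact h2
    -- existence of a point of H over each fiber
    have fiber_exists : ∀ t : Fin n → ℝ, ∃ y : ℝ, y ∈ Set.Icc (0:ℝ) 1 ∧
        (Fin.snoc t y : Fin (n+1) → ℝ) ∈ H := by
      intro t
      have hseq : ∀ j : ℕ, ∃ s : ℝ, ∃ m : Fin n → ℤ,
          ∀ i, |s * v (Fin.castSucc i) + (m i : ℝ) - t i| < 1 / (j + 1) := by
        intro j
        exact hDseq t (1/(j+1)) (by positivity)
      choose S M hSM using hseq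
      set Y : ℕ → ℝ := fun j => Int.fract (S j * v (Fin.last n)) with hY_def
      set Z : ℕ → (Fin (n+1) → ℝ) := fun j =>
        fun i => S j * v i + ((Fin.snoc (M j) (-⌊S j * v (Fin.last n)⌋) : Fin (n+1) → ℤ) i : ℝ)
        with hZ_def
      have hZmem : ∀ j, Z j ∈ lineLattice v := fun j => ⟨S j, _, rfl⟩
      have hZsnoc : ∀ j, Z j = Fin.snoc (fun i => S j * v (Fin.castSucc i) + (M j i : ℝ)) (Y j) := by
        intro j
        funext i
        refine Fin.lastCases ?_ ?_ i
        · simp only [hZ_def, hY_def, Fin.snoc_last, Int.fract]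
          push_cast
          ring
        · intro i
          simp only [hZ_def, Fin.snoc_castSucc]
      have hYmem : ∀ j, Y j ∈ Set.Icc (0:ℝ) 1 :=
        fun j => ⟨Int.fract_nonneg _, (Int.fract_lt_one _).le⟩
      obtain ⟨y, hyIcc, φ, hφ, hyt⟩ := isCompact_Icc.tendsto_subseq hYmem
      refine ⟨y, hyIcc, ?_⟩
      have hconv : Filter.Tendsto (fun j => Z (φ j)) Filter.atTop (nhds (Fin.snoc t y)) := by
        rw [tendsto_pi_nhds]
        intro i
        refine Fin.lastCases ?_ ?_ i
        · have : (fun j => Z (φ j) (Fin.last n)) = fun j => Y (φ j) := by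
            funext j; rw [hZsnoc]; simp
          rw [this]
          simpa [Fin.snoc_last, Function.comp_def] using hyt
        · intro i
          have heq : (fun j => Z (φ j) (Fin.castSucc i)) =
              fun j => S (φ j) * v (Fin.castSucc i) + (M (φ j) i : ℝ) := by
            funext j; rw [hZsnoc]; simp
          rw [heq, Fin.snoc_castSucc]
          rw [tendsto_iff_dist_tendsto_zero]
          refine squeeze_zero (g := fun j : ℕ => 1 / ((j:ℝ) + 1)) (fun j => dist_nonneg)
            (fun j => ?_) tendsto_one_div_add_atTop_nhds_zero_nat
          have h1 := hSM (φ j) i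
          rw [Real.dist_eq]
          have hj : (j : ℝ) + 1 ≤ (φ j : ℝ) + 1 := by
            have h2 := hφ.le_apply (x := j)
            have h3 : (j:ℝ) ≤ (φ j : ℝ) := by exact_mod_cast h2
            linarith
          have h3 : 1 / ((φ j : ℝ) + 1) ≤ 1 / ((j:ℝ) + 1) :=
            one_div_le_one_div_of_le (by positivity) hj
          exact le_trans h1.le h3
      exact hHc.mem_of_tendsto hconv (Filter.Eventually.of_forall fun j => hGH _ (hZmem _))
    -- integer points on the last axis
    have hKint' : ∀ m : ℤ, (Fin.snoc 0 (m:ℝ) : Fin (n+1) → ℝ) ∈ H := by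
      intro m
      apply hGH
      refine ⟨0, Fin.snoc 0 m, ?_⟩
      funext i
      refine Fin.lastCases ?_ ?_ i
      · simp
      · intro j; simp
    -- the subgroup K of the last axis
    set sHom : ℝ →+ (Fin (n+1) → ℝ) :=
      AddMonoidHom.mk' (fun y => (Fin.snoc 0 y : Fin (n+1) → ℝ)) (by
        intro y y'
        rw [snoc_add]
        simp) with hsHom_def
    set K : AddSubgroup ℝ := H.comap sHom with hK_def
    have hKmem_iff : ∀ y : ℝ, y ∈ K ↔ (Fin.snoc 0 y : Fin (n+1) → ℝ) ∈ H := by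
      intro y
      rw [hK_def, AddSubgroup.mem_comap]
      rfl
    have hKclosed : IsClosed (K : Set ℝ) := by
      have : (K : Set ℝ) = (fun y : ℝ => (Fin.snoc 0 y : Fin (n+1) → ℝ)) ⁻¹' (H : Set _) := by
        ext y
        simp only [Set.mem_preimage, SetLike.mem_coe]
        exact hKmem_iff y
      rw [this]
      exact hHc.preimage (continuous_snoc 0)
    rcases K.dense_or_cyclic with hKd | ⟨a, hKa⟩
    · -- Case A : K is dense, hence closed ⇒ all of ℝ
      have hKall : ∀ y : ℝ, (Fin.snoc 0 y : Fin (n+1) → ℝ) ∈ H := by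
        intro y
        rw [← hKmem_iff]
        have h1 : closure (K : Set ℝ) = Set.univ := hKd.closure_eq
        have h2 : closure (K : Set ℝ) = (K : Set ℝ) := hKclosed.closure_eq
        have : y ∈ (K : Set ℝ) := by rw [← h2, h1]; trivial
        exact this
      intro x
      obtain ⟨y, hy, hmem⟩ := fiber_exists (Fin.init x)
      have hx : x = Fin.snoc (Fin.init x) y + Fin.snoc (0 : Fin n → ℝ) (x (Fin.last n) - y) := by
        rw [snoc_add, add_zero]
        have h5 : y + (x (Fin.last n) - y) = x (Fin.last n) := by ring
        rw [h5, Fin.snoc_init_self]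
      have hxH : x ∈ H := by
        rw [hx]
        exact H.add_mem hmem (hKall _)
      exact hxH
    · -- Case B : K is cyclic; derive a contradiction with linear independence
      exfalso
      have h1K : (1:ℝ) ∈ K := by
        rw [hKmem_iff]
        have := hKint' 1
        push_cast at this
        exact this
      rw [hKa, AddSubgroup.mem_closure_singleton] at h1K
      obtain ⟨k, hk1⟩ := h1K
      rw [zsmul_eq_mul] at hk1
      have ha : a ≠ 0 := by
        intro h; rw [h] at hk1; simp at hk1
      have hk : k ≠ 0 := by
        intro h; rw [h] at hk1; simp at hk1
      have hKmem : ∀ y : ℝ, (Fin.snoc 0 y : Fin (n+1) → ℝ) ∈ H → ∃ j : ℤ, y = (j:ℝ) * a := by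
        intro y hy
        have : y ∈ K := (hKmem_iff y).mpr hy
        rw [hKa, AddSubgroup.mem_closure_singleton] at this
        obtain ⟨j, hj⟩ := this
        exact ⟨j, by rw [← hj, zsmul_eq_mul]⟩
      have modK : ∀ (t : Fin n → ℝ) (y y' : ℝ),
          (Fin.snoc t y : Fin (n+1) → ℝ) ∈ H → (Fin.snoc t y' : Fin (n+1) → ℝ) ∈ H →
          ∃ j : ℤ, y - y' = (j:ℝ) * a := by
        intro t y y' h1 h2
        have h3 := H.sub_mem h1 h2
        rw [snoc_sub, sub_self] at h3
        exact hKmem _ h3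
      -- continuity of the fiber at 0 (bounded version)
      have S5 : ∀ ρ : ℝ, 0 < ρ → ∃ τ : ℝ, 0 < τ ∧ ∀ (t : Fin n → ℝ) (y : ℝ),
          (∀ i, |t i| < τ) → y ∈ Set.Icc (0:ℝ) 1 → (Fin.snoc t y : Fin (n+1) → ℝ) ∈ H →
          ∃ j : ℤ, |y - (j:ℝ) * a| < ρ := by
        intro ρ hρ
        by_contra hcon
        push_neg at hcon
        have hseq : ∀ j : ℕ, ∃ (t : Fin n → ℝ) (y : ℝ),
            (∀ i, |t i| < 1/(j+1)) ∧ y ∈ Set.Icc (0:ℝ) 1 ∧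
            (Fin.snoc t y : Fin (n+1) → ℝ) ∈ H ∧ ∀ jj : ℤ, ρ ≤ |y - (jj:ℝ) * a| := by
          intro j
          obtain ⟨t, y, h1, h2, h3, h4⟩ := hcon (1/(j+1)) (by positivity)
          exact ⟨t, y, h1, h2, h3, h4⟩
        choose T Yc h1 h2 h3 h4 using hseq
        obtain ⟨y, hyIcc, φ, hφ, hyt⟩ := isCompact_Icc.tendsto_subseq h2
        have hconv : Filter.Tendsto (fun j => (Fin.snoc (T (φ j)) (Yc (φ j)) : Fin (n+1) → ℝ))
            Filter.atTop (nhds (Fin.snoc 0 y)) := by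
          rw [tendsto_pi_nhds]
          intro i
          refine Fin.lastCases ?_ ?_ i
          · simpa [Fin.snoc_last, Function.comp_def] using hyt
          · intro i
            simp only [Fin.snoc_castSucc, Pi.zero_apply]
            rw [tendsto_iff_dist_tendsto_zero]
            refine squeeze_zero (g := fun j : ℕ => 1 / ((j:ℝ) + 1)) (fun j => dist_nonneg)
              (fun j => ?_) tendsto_one_div_add_atTop_nhds_zero_nat
            have hb := h1 (φ j) i
            rw [Real.dist_eq, sub_zero]
            have hj : (j : ℝ) + 1 ≤ (φ j : ℝ) + 1 := by
              have h5 := hφ.le_apply (x := j)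
              have h6 : (j:ℝ) ≤ (φ j : ℝ) := by exact_mod_cast h5
              linarith
            have h7 : 1 / ((φ j : ℝ) + 1) ≤ 1 / ((j:ℝ) + 1) :=
              one_div_le_one_div_of_le (by positivity) hj
            calc |T (φ j) i| ≤ 1 / ((φ j : ℝ) + 1) := by
                  have := hb; push_cast at this ⊢; linarith
            _ ≤ 1 / ((j:ℝ) + 1) := h7
        have hyH : (Fin.snoc (0 : Fin n → ℝ) y : Fin (n+1) → ℝ) ∈ H :=
          hHc.mem_of_tendsto hconv (Filter.Eventually.of_forall fun j => h3 (φ j))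
        obtain ⟨j₀, hj₀⟩ := hKmem y hyH
        have : Filter.Tendsto (fun j => Yc (φ j)) Filter.atTop (nhds ((j₀:ℝ) * a)) := by
          rw [← hj₀]; exact hyt
        have hev : ∀ᶠ j in Filter.atTop, |Yc (φ j) - (j₀:ℝ) * a| < ρ := by
          have := Metric.tendsto_nhds.mp this ρ hρ
          filter_upwards [this] with j hj
          rw [Real.dist_eq] at hj
          exact hj
        obtain ⟨j, hj⟩ := hev.exists
        exact absurd hj (not_lt.mpr (h4 (φ j) j₀))
      -- continuity of the fiber at 0 (general version)
      have S5' : ∀ ρ : ℝ, 0 < ρ → ∃ τ : ℝ, 0 < τ ∧ ∀ (t : Fin n → ℝ) (y : ℝ),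
          (∀ i, |t i| < τ) → (Fin.snoc t y : Fin (n+1) → ℝ) ∈ H →
          ∃ j : ℤ, |y - (j:ℝ) * a| < ρ := by
        intro ρ hρ
        obtain ⟨τ, hτ, hS⟩ := S5 ρ hρ
        refine ⟨τ, hτ, fun t y ht hy => ?_⟩
        have hfl : (Fin.snoc (0 : Fin n → ℝ) ((⌊y⌋ : ℤ) : ℝ) : Fin (n+1) → ℝ) ∈ H := hKint' ⌊y⌋
        have hfr : (Fin.snoc t (Int.fract y) : Fin (n+1) → ℝ) ∈ H := by
          have h6 := H.sub_mem hy hfl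
          rw [snoc_sub, sub_zero] at h6
          exact h6
        obtain ⟨j, hj⟩ := hS t (Int.fract y) ht
          ⟨Int.fract_nonneg _, (Int.fract_lt_one _).le⟩ hfr
        obtain ⟨j2, hj2⟩ := hKmem ((⌊y⌋ : ℤ) : ℝ) hfl
        refine ⟨j + j2, ?_⟩
        rw [Int.fract] at hj
        have hc : ((j + j2 : ℤ) : ℝ) = (j:ℝ) + (j2:ℝ) := by push_cast; ring
        rw [hc]
        have : y - ((j:ℝ) + (j2:ℝ)) * a = (y - (⌊y⌋:ℝ)) - (j:ℝ) * a := by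
          rw [hj2]; ring
        rw [this]
        exact hj
      -- choose a canonical point over each fiber
      choose Yf hYfIcc hYfmem using fiber_exists
      -- per-axis rigidity
      have axis : ∀ i : Fin n, ∃ c : ℝ, ∀ x : ℝ, ∃ j : ℤ,
          Yf (Pi.single i x) - c * x = (j:ℝ) * a := by
        intro i
        apply rigidity1D ha
        · intro x x'
          have hm1 := hYfmem (Pi.single i x)
          have hm2 := hYfmem (Pi.single i x')
          have hm3 := hYfmem (Pi.single i (x + x'))
          have hsum := H.add_mem hm1 hm2
          rw [snoc_add, ← Pi.single_add] at hsum
          obtain ⟨j, hj⟩ := modK _ _ _ hm3 hsum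
          exact ⟨j, by linarith [hj]⟩
        · intro ρ hρ
          obtain ⟨τ, hτ, hS⟩ := S5' ρ hρ
          refine ⟨τ, hτ, fun x hx => ?_⟩
          refine hS (Pi.single i x) _ ?_ (hYfmem _)
          intro i'
          rw [Pi.single_apply]
          split
          · exact hx
          · simpa using hτ
      choose c hc using axis
      -- the slopes are integer multiples of a
      have axisInt : ∀ i : Fin n, ∃ kk : ℤ, c i = (kk:ℝ) * a := by
        intro i
        obtain ⟨j1, hj1⟩ := hc i 1
        have hmem0 : (Fin.snoc (Pi.single i (1:ℝ)) 0 : Fin (n+1) → ℝ) ∈ H := by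
          apply hGH
          refine ⟨0, Fin.snoc (Pi.single i 1) 0, ?_⟩
          funext i'
          refine Fin.lastCases ?_ ?_ i'
          · simp
          · intro i''
            simp only [Fin.snoc_castSucc, zero_mul, zero_add]
            rw [Pi.single_apply, Pi.single_apply]
            split <;> simp
        obtain ⟨j2, hj2⟩ := modK _ _ _ (hYfmem (Pi.single i 1)) hmem0
        rw [sub_zero] at hj2
        refine ⟨j2 - j1, ?_⟩
        push_cast
        rw [mul_one] at hj1
        linarith [hj1, hj2]
      choose kk hkk using axisInt
      -- decomposition of an arbitrary fiber point as a sum of axis points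
      have hsum_snoc : ∀ t : Fin n → ℝ,
          (Fin.snoc t (∑ i, Yf (Pi.single i (t i))) : Fin (n+1) → ℝ) ∈ H := by
        intro t
        have key : ∀ s : Finset (Fin n),
            (Fin.snoc (∑ i ∈ s, Pi.single i (t i)) (∑ i ∈ s, Yf (Pi.single i (t i)))
              : Fin (n+1) → ℝ) ∈ H := by
          intro s
          induction s using Finset.induction with
          | empty =>
            simp only [Finset.sum_empty]
            rw [snoc_zero]
            exact H.zero_mem
          | insert x s hx ih =>
            rw [Finset.sum_insert hx, Finset.sum_insert hx, ← snoc_add]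
            exact H.add_mem (hYfmem _) ih
        have h := key Finset.univ
        rwa [Finset.univ_sum_single] at h
      -- the line itself
      have hline : ∀ s : ℝ,
          (Fin.snoc (fun i => s * v (Fin.castSucc i)) (s * v (Fin.last n))
            : Fin (n+1) → ℝ) ∈ H := by
        intro s
        apply hGH
        refine ⟨s, 0, ?_⟩
        funext i
        refine Fin.lastCases ?_ ?_ i
        · simp
        · intro i'; simp
      -- derive the linear relation
      have hrel2 : ∀ s : ℝ, ∃ J : ℤ,
          s * v (Fin.last n) - ∑ i, c i * (s * v (Fin.castSucc i)) = (J:ℝ) * a := by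
        intro s
        set t : Fin n → ℝ := fun i => s * v (Fin.castSucc i) with ht_def
        obtain ⟨j, hj⟩ := modK t _ _ (hline s) (hsum_snoc t)
        have hper : ∀ i : Fin n, ∃ jj : ℤ,
            Yf (Pi.single i (t i)) - c i * t i = (jj:ℝ) * a := fun i => hc i (t i)
        choose jj hjj using hper
        refine ⟨j + ∑ i, jj i, ?_⟩
        have hsum : ∑ i, Yf (Pi.single i (t i)) - ∑ i, c i * t i = ((∑ i, jj i : ℤ):ℝ) * a := by
          rw [← Finset.sum_sub_distrib]
          push_cast
          rw [Finset.sum_mul]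
          apply Finset.sum_congr rfl
          intro i _
          exact hjj i
        push_cast
        have expand : s * v (Fin.last n) - ∑ i, c i * (s * v (Fin.castSucc i)) =
            (s * v (Fin.last n) - ∑ i, Yf (Pi.single i (t i))) +
            (∑ i, Yf (Pi.single i (t i)) - ∑ i, c i * t i) := by
          simp only [ht_def]
          ring
        rw [expand, hj, hsum]
        push_cast
        ring
      -- the coefficient must vanish
      set Cst : ℝ := v (Fin.last n) - ∑ i, c i * v (Fin.castSucc i) with hCst_def
      have hfac : ∀ s : ℝ, ∃ J : ℤ, s * Cst = (J:ℝ) * a := by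
        intro s
        obtain ⟨J, hJ⟩ := hrel2 s
        refine ⟨J, ?_⟩
        rw [hCst_def, ← hJ, mul_sub, Finset.mul_sum]
        congr 1
        apply Finset.sum_congr rfl
        intro i _
        ring
      have hCst0 : Cst = 0 := by
        by_contra hC
        obtain ⟨J, hJ⟩ := hfac (a / (2 * Cst))
        have h7 : a / (2 * Cst) * Cst = a / 2 := by
          field_simp
        have h8 : a / 2 = (J:ℝ) * a := by rw [← h7, hJ]
        have h9 : (2 * (J:ℝ)) * a = 1 * a := by linarith [h8]
        have h10 : (2 * (J:ℝ)) = 1 := mul_right_cancel₀ ha h9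
        have h11 : (2 * J : ℤ) = 1 := by exact_mod_cast h10
        omega
      -- produce the integer relation
      have hvlast : (k:ℝ) * v (Fin.last n) = ∑ i, (kk i : ℝ) * v (Fin.castSucc i) := by
        have h11 : v (Fin.last n) = ∑ i, c i * v (Fin.castSucc i) := by
          have := hCst0; rw [hCst_def] at this; linarith
        rw [h11, Finset.mul_sum]
        apply Finset.sum_congr rfl
        intro i _
        rw [hkk i]
        have : (k:ℝ) * ((kk i : ℝ) * a * v (Fin.castSucc i)) =
            ((k:ℝ) * a) * ((kk i : ℝ) * v (Fin.castSucc i)) := by ring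
        rw [this, hk1, one_mul]
      set cc : Fin (n+1) → ℤ := Fin.snoc kk (-k) with hcc_def
      have hccsum : (∑ i, (cc i : ℝ) * v i) = 0 := by
        rw [Fin.sum_univ_castSucc]
        have e1 : ∀ i : Fin n, (cc (Fin.castSucc i) : ℝ) = (kk i : ℝ) := by
          intro i; rw [hcc_def]; simp
        have e2 : (cc (Fin.last n) : ℝ) = -(k:ℝ) := by
          rw [hcc_def]; push_cast; simp
        rw [e2]
        have e3 : ∑ i : Fin n, (cc (Fin.castSucc i) : ℝ) * v (Fin.castSucc i) =
            ∑ i : Fin n, (kk i : ℝ) * v (Fin.castSucc i) := by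
          apply Finset.sum_congr rfl
          intro i _
          rw [e1]
        rw [e3, ← hvlast]
        ring
      have := hrel cc hccsum (Fin.last n)
      rw [hcc_def] at this
      simp at this
      exact hk this


lemma approxLineLattice {ι : Type*} [Fintype ι] (v : ι → ℝ)
    (hv : LinearIndependent ℚ v) (t : ι → ℝ) (ε : ℝ) (hε : 0 < ε) :
    ∃ s : ℝ, ∃ m : ι → ℤ, ∀ i, |t i - (s * v i + (m i : ℝ))| < ε := by
  classical
  set e : ι ≃ Fin (Fintype.card ι) := Fintype.equivFin ι with he
  have hv' : LinearIndependent ℚ (v ∘ e.symm) :=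
    LinearIndependent.comp hv _ e.symm.injective
  have hd := denseLineLattice _ (v ∘ e.symm) hv' (t ∘ e.symm)
  rw [Metric.mem_closure_iff] at hd
  obtain ⟨b, hb, hdist⟩ := hd ε hε
  obtain ⟨s, m, rfl⟩ := hb
  refine ⟨s, m ∘ e, fun i => ?_⟩
  have h1 := dist_le_pi_dist (t ∘ e.symm) (fun j => s * (v ∘ e.symm) j + (m j : ℝ)) (e i)
  have h2 : dist ((t ∘ e.symm) (e i)) (s * (v ∘ e.symm) (e i) + (m (e i) : ℝ)) < ε :=
    lt_of_le_of_lt h1 hdist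
  simp only [Function.comp_apply, Equiv.symm_apply_apply] at h2
  rw [Real.dist_eq] at h2
  exact h2

lemma uniformLineLattice {ι : Type*} [Fintype ι] (v : ι → ℝ)
    (hv : LinearIndependent ℚ v) (δ : ℝ) (hδ : 0 < δ) :
    ∃ M : ℝ, 0 ≤ M ∧ ∀ t : ι → ℝ, (∀ i, t i ∈ Set.Icc (0:ℝ) 1) →
      ∃ s : ℝ, |s| ≤ M ∧ ∀ i, ∃ m : ℤ, |t i - (s * v i + (m : ℝ))| < δ := by
  classical
  have hap : ∀ p : ι → ℝ, ∃ s : ℝ, ∀ i, ∃ m : ℤ, |p i - (s * v i + (m:ℝ))| < δ/2 := by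
    intro p
    obtain ⟨s, m, hm⟩ := approxLineLattice v hv p (δ/2) (by positivity)
    exact ⟨s, fun i => ⟨m i, hm i⟩⟩
  choose sf hsf using hap
  have hcomp : IsCompact (Set.Icc (0 : ι → ℝ) 1) := isCompact_Icc
  have hcover : Set.Icc (0 : ι → ℝ) 1 ⊆ ⋃ p : ι → ℝ, Metric.ball p (δ/2) := by
    intro t _
    exact Set.mem_iUnion.mpr ⟨t, Metric.mem_ball_self (by positivity)⟩
  obtain ⟨F, hF⟩ := hcomp.elim_finite_subcover (fun p : ι → ℝ => Metric.ball p (δ/2))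
    (fun p => Metric.isOpen_ball) hcover
  refine ⟨∑ p ∈ F, |sf p|, Finset.sum_nonneg (fun p _ => abs_nonneg _), ?_⟩
  intro t ht
  have htIcc : t ∈ Set.Icc (0 : ι → ℝ) 1 := by
    rw [Set.mem_Icc]
    constructor
    · intro i; exact (ht i).1
    · intro i; exact (ht i).2
  obtain ⟨p, hpF, hpt⟩ := Set.mem_iUnion₂.mp (hF htIcc)
  refine ⟨sf p, Finset.single_le_sum (fun q _ => abs_nonneg (sf q)) hpF, fun i => ?_⟩
  obtain ⟨m, hm⟩ := hsf p i
  refine ⟨m, ?_⟩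
  have h1 : dist (t i) (p i) ≤ dist t p := dist_le_pi_dist t p i
  have h2 : dist t p < δ/2 := Metric.mem_ball.mp hpt
  have h3 : |t i - p i| < δ/2 := by
    rw [← Real.dist_eq]; exact lt_of_le_of_lt h1 h2
  calc |t i - (sf p * v i + (m:ℝ))|
      ≤ |t i - p i| + |p i - (sf p * v i + (m:ℝ))| := by
        have := abs_sub_abs_le_abs_sub (t i) (p i)
        have h4 : t i - (sf p * v i + (m:ℝ)) = (t i - p i) + (p i - (sf p * v i + (m:ℝ))) := by ring
        rw [h4]
        exact abs_add_le _ _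
  _ < δ/2 + δ/2 := add_lt_add h3 hm
  _ = δ := by ring

open Complex Metric

def gaussianInts : Set ℂ := {z | ∃ a b : ℤ, z = (a : ℂ) + (b : ℂ) * Complex.I}

theorem stmt_5 (r : ℕ) (z : Fin r → ℂ)
    (hV : LinearIndependent ℚ (Sum.elim (fun k : Fin r => (z k).re) (fun k : Fin r => (z k).im)))
    (ε : ℝ) (hε : 0 < ε) :
    ∃ L > (0 : ℝ), ∀ w : Fin r → ℂ, ∃ s ∈ Set.Icc (0 : ℝ) L,
      ∀ k, Metric.infDist (w k + (s : ℂ) * z k) gaussianInts < ε := by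
  classical
  set v : (Fin r ⊕ Fin r) → ℝ :=
    Sum.elim (fun k : Fin r => (z k).re) (fun k : Fin r => (z k).im) with hv_def
  obtain ⟨M, hM0, hMain⟩ := uniformLineLattice v hV (ε/2) (by positivity)
  refine ⟨2*M + 1, by positivity, ?_⟩
  intro w
  set u : (Fin r ⊕ Fin r) → ℝ :=
    Sum.elim (fun k : Fin r => (w k).re) (fun k : Fin r => (w k).im) with hu_def
  set t : (Fin r ⊕ Fin r) → ℝ := fun i => Int.fract (-(u i) - M * v i) with ht_def
  have htIcc : ∀ i, t i ∈ Set.Icc (0:ℝ) 1 :=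
    fun i => ⟨Int.fract_nonneg _, (Int.fract_lt_one _).le⟩
  obtain ⟨s', hs'M, hs'⟩ := hMain t htIcc
  set s : ℝ := M + s' with hs_def
  have habs := abs_le.mp hs'M
  have hs0 : 0 ≤ s := by rw [hs_def]; linarith [habs.1]
  have hsL : s ≤ 2*M + 1 := by rw [hs_def]; linarith [habs.2]
  refine ⟨s, ⟨hs0, hsL⟩, ?_⟩
  have key : ∀ i, ∃ m : ℤ, |u i + s * v i + (m:ℝ)| < ε/2 := by
    intro i
    obtain ⟨m, hm⟩ := hs' i
    refine ⟨m + ⌊-(u i) - M * v i⌋, ?_⟩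
    have hfr : t i = -(u i) - M * v i - ((⌊-(u i) - M * v i⌋ : ℤ) : ℝ) := by
      rw [ht_def]
      rfl
    have hrw : t i - (s' * v i + (m:ℝ)) =
        -(u i + s * v i + ((m + ⌊-(u i) - M * v i⌋ : ℤ):ℝ)) := by
      rw [hfr, hs_def]
      push_cast
      ring
    rw [hrw, abs_neg] at hm
    exact hm
  intro k
  obtain ⟨m1, hm1⟩ := key (Sum.inl k)
  obtain ⟨m2, hm2⟩ := key (Sum.inr k)
  set g0 : ℂ := ((-m1 : ℤ) : ℂ) + ((-m2 : ℤ) : ℂ) * Complex.I with hg0_def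
  have hg0mem : g0 ∈ gaussianInts := ⟨-m1, -m2, rfl⟩
  have hle : Metric.infDist (w k + (s:ℂ) * z k) gaussianInts ≤ dist (w k + (s:ℂ) * z k) g0 :=
    Metric.infDist_le_dist_of_mem hg0mem
  have hre : (w k + (s:ℂ) * z k - g0).re = u (Sum.inl k) + s * v (Sum.inl k) + (m1:ℝ) := by
    simp only [hg0_def, hu_def, hv_def, Complex.add_re, Complex.sub_re, Complex.mul_re,
      Complex.ofReal_re, Complex.ofReal_im, Complex.I_re, Complex.I_im, Complex.intCast_re,
      Complex.intCast_im, Sum.elim_inl]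
    push_cast
    ring
  have him : (w k + (s:ℂ) * z k - g0).im = u (Sum.inr k) + s * v (Sum.inr k) + (m2:ℝ) := by
    simp only [hg0_def, hu_def, hv_def, Complex.add_im, Complex.sub_im, Complex.mul_im,
      Complex.ofReal_re, Complex.ofReal_im, Complex.I_re, Complex.I_im, Complex.intCast_re,
      Complex.intCast_im, Sum.elim_inr]
    push_cast
    ring
  have hd : dist (w k + (s:ℂ) * z k) g0 <= |u (Sum.inl k) + s * v (Sum.inl k) + (m1:ℝ)| +
      |u (Sum.inr k) + s * v (Sum.inr k) + (m2:ℝ)| := by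
    rw [Complex.dist_eq]
    calc ‖w k + (s:ℂ) * z k - g0‖
        ≤ |(w k + (s:ℂ) * z k - g0).re| + |(w k + (s:ℂ) * z k - g0).im| :=
          Complex.norm_le_abs_re_add_abs_im _
    _ = _ := by rw [hre, him]
  calc Metric.infDist (w k + (s:ℂ) * z k) gaussianInts
      ≤ dist (w k + (s:ℂ) * z k) g0 := hle
  _ ≤ _ := hd
  _ < ε/2 + ε/2 := add_lt_add hm1 hm2
  _ = ε := by ring
end Density
end

section
/- Let V = (z₁,…,z_r) ∈ ℂ^r with Re(z₁),…,Re(z_r), Im(z₁),…,Im(z_r) linearly independent over ℚ. Then for every ε > 0 there exists T > 0 such that for all t > T there is θ on the unit circle with dist(θ·t·z_k, ℤ[i]) < ε for all k. -/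
open Complex Metric

noncomputable section
namespace Stmt7
open Finset intervalIntegral

/-- The character `x ↦ exp(2πix)`. -/
def ch (x : ℝ) : ℂ := Complex.exp (2 * Real.pi * x * Complex.I)

lemma ch_add (x y : ℝ) : ch (x + y) = ch x * ch y := by
  rw [ch, ch, ch, ← Complex.exp_add]; congr 1; push_cast; ring

lemma ch_zero : ch 0 = 1 := by simp [ch]

lemma ch_abs (x : ℝ) : ‖ch x‖ = 1 := by
  have h : (2 * (Real.pi:ℂ) * (x:ℝ) * Complex.I) = ((2 * Real.pi * x : ℝ) : ℂ) * Complex.I := by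
    push_cast; ring
  rw [ch, h, Complex.norm_exp_ofReal_mul_I]

lemma ch_sum {ι : Type*} (s : Finset ι) (f : ι → ℝ) :
    ch (∑ i ∈ s, f i) = ∏ i ∈ s, ch (f i) := by
  classical
  induction s using Finset.cons_induction with
  | empty => simp [ch_zero]
  | cons a s ha ih => rw [Finset.sum_cons, Finset.prod_cons, ch_add, ih]

lemma ch_int (m : ℤ) : ch m = 1 := by
  rw [ch, show (2 * (Real.pi:ℂ) * ((m:ℝ):ℂ) * Complex.I) = (m:ℂ) * (2 * Real.pi * Complex.I) by
    push_cast; ring]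
  exact Complex.exp_int_mul_two_pi_mul_I m

lemma ch_nat_mul (k : ℕ) (x : ℝ) : ch (k * x) = ch x ^ k := by
  rw [ch, ch, ← Complex.exp_nat_mul]; congr 1; push_cast; ring

lemma ch_cont {f : ℝ → ℝ} (hf : Continuous f) : Continuous fun s => ch (f s) := by
  unfold ch
  exact Complex.continuous_exp.comp
    (((continuous_const.mul (Complex.continuous_ofReal.comp hf)).mul continuous_const))

lemma integ_ne {a : ℝ} (ha : a ≠ 0) (S : ℝ) :
    ‖∫ s in (-S)..S, ch (a * s)‖ ≤ 1 / |a| := by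
  have hc : (2 * (Real.pi:ℂ) * a * Complex.I) ≠ 0 := by
    apply mul_ne_zero _ Complex.I_ne_zero
    apply mul_ne_zero _ (by exact_mod_cast ha)
    apply mul_ne_zero two_ne_zero
    exact_mod_cast Real.pi_ne_zero
  have h1 : ∀ s : ℝ, ch (a * s) = Complex.exp ((2 * (Real.pi:ℂ) * a * Complex.I) * s) := by
    intro s; rw [ch]; congr 1; push_cast; ring
  rw [show (∫ s in (-S)..S, ch (a * s)) = ∫ s in (-S)..S,
      Complex.exp ((2 * (Real.pi:ℂ) * a * Complex.I) * s) from intervalIntegral.integral_congr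
      (fun s _ => h1 s)]
  rw [integral_exp_mul_complex hc]
  rw [norm_div]
  have hnum : ‖Complex.exp (2 * (Real.pi:ℂ) * a * Complex.I * S)
      - Complex.exp (2 * (Real.pi:ℂ) * a * Complex.I * (-S:ℝ))‖ ≤ 2 := by
    calc _ ≤ ‖Complex.exp (2 * (Real.pi:ℂ) * a * Complex.I * S)‖
        + ‖Complex.exp (2 * (Real.pi:ℂ) * a * Complex.I * (-S:ℝ))‖ := by
          simpa using norm_sub_le (Complex.exp (2 * (Real.pi:ℂ) * a * Complex.I * S)) (Complex.exp (2 * (Real.pi:ℂ) * a * Complex.I * (-S:ℝ)))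
      _ ≤ 2 := by rw [← h1 S, ← h1 (-S), ch_abs, ch_abs]; norm_num
  have hden : ‖2 * (Real.pi:ℂ) * a * Complex.I‖ = 2 * Real.pi * |a| := by
    simp only [norm_mul, Complex.norm_I, Complex.norm_two, Complex.norm_real, Real.norm_eq_abs, mul_one]
    rw [abs_of_pos Real.pi_pos]
  rw [hden]
  rw [div_le_div_iff₀ (by positivity) (by positivity)]
  have hpi : (1:ℝ) ≤ Real.pi := by linarith [Real.pi_gt_three]
  calc ‖_‖ * |a| ≤ 2 * |a| := by
        have := abs_pos.mpr ha
        nlinarith [hnum, abs_pos.mpr ha]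
    _ ≤ 1 * (2 * Real.pi * |a|) := by nlinarith [abs_pos.mpr ha]

section Key

variable {ι : Type} [Fintype ι] [DecidableEq ι] {β : Type} [DecidableEq β]

lemma expand (A : Finset β) (w : β → ℤ) (v u : ι → ℝ) (s : ℝ) :
    ∏ i : ι, ∑ t ∈ A, ch ((w t : ℝ) * (s * v i - u i))
      = ∑ p ∈ Fintype.piFinset (fun _ : ι => A),
          ch (s * ∑ i, (w (p i) : ℝ) * v i) * ch (- ∑ i, (w (p i) : ℝ) * u i) := by
  rw [Finset.prod_univ_sum]
  refine Finset.sum_congr rfl fun p _ => ?_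
  rw [← ch_add, ← ch_sum]
  congr 1
  rw [← sub_eq_add_neg, Finset.mul_sum, ← Finset.sum_sub_distrib]
  exact Finset.sum_congr rfl fun i _ => by ring

lemma key (A : Finset β) (w : β → ℤ) {v : ι → ℝ}
    (hv : ∀ m : ι → ℤ, ∑ i, (m i : ℝ) * v i = 0 → m = 0) (u : ι → ℝ) {S : ℝ} (hS : 0 ≤ S) :
    ‖(∫ s in (-S)..S, ∏ i : ι, ∑ t ∈ A, ch ((w t : ℝ) * (s * v i - u i)))
        - 2 * S * ((Fintype.piFinset (fun _ : ι => A)).filter (fun p => ∀ i, w (p i) = 0)).card‖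
      ≤ ∑ p ∈ (Fintype.piFinset (fun _ : ι => A)).filter (fun p => ¬ ∀ i, w (p i) = 0),
          1 / |∑ i, (w (p i) : ℝ) * v i| := by
  have hint : (∫ s in (-S)..S, ∏ i : ι, ∑ t ∈ A, ch ((w t : ℝ) * (s * v i - u i)))
      = ∑ p ∈ Fintype.piFinset (fun _ : ι => A),
          (∫ s in (-S)..S, ch (s * ∑ i, (w (p i) : ℝ) * v i)) * ch (- ∑ i, (w (p i) : ℝ) * u i) := by
    rw [intervalIntegral.integral_congr (g := fun s => ∑ p ∈ Fintype.piFinset (fun _ : ι => A),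
        ch (s * ∑ i, (w (p i) : ℝ) * v i) * ch (- ∑ i, (w (p i) : ℝ) * u i))
        (fun s _ => expand A w v u s)]
    rw [intervalIntegral.integral_finset_sum]
    · exact Finset.sum_congr rfl fun p _ => intervalIntegral.integral_mul_const _ _
    · intro p _
      exact (((ch_cont (by continuity)).mul continuous_const)).intervalIntegrable _ _
  rw [hint, ← Finset.sum_filter_add_sum_filter_not (Fintype.piFinset (fun _ : ι => A))
      (fun p => ∀ i, w (p i) = 0)]
  have hzero : ∑ p ∈ (Fintype.piFinset (fun _ : ι => A)).filter (fun p => ∀ i, w (p i) = 0),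
      (∫ s in (-S)..S, ch (s * ∑ i, (w (p i) : ℝ) * v i)) * ch (- ∑ i, (w (p i) : ℝ) * u i)
      = 2 * S * ((Fintype.piFinset (fun _ : ι => A)).filter (fun p => ∀ i, w (p i) = 0)).card := by
    have hterm : ∀ p ∈ (Fintype.piFinset (fun _ : ι => A)).filter (fun p => ∀ i, w (p i) = 0),
        (∫ s in (-S)..S, ch (s * ∑ i, (w (p i) : ℝ) * v i)) * ch (- ∑ i, (w (p i) : ℝ) * u i)
          = ((2 * S : ℝ) : ℂ) := by
      intro p hp
      have hp0 : ∀ i, w (p i) = 0 := (Finset.mem_filter.mp hp).2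
      have h1 : (∑ i, (w (p i) : ℝ) * v i) = 0 := by
        apply Finset.sum_eq_zero; intro i _; rw [hp0 i]; norm_num
      have h2 : (∑ i, (w (p i) : ℝ) * u i) = 0 := by
        apply Finset.sum_eq_zero; intro i _; rw [hp0 i]; norm_num
      rw [h1, h2, neg_zero, ch_zero, mul_one]
      simp only [mul_zero, ch_zero]
      rw [intervalIntegral.integral_const, Complex.real_smul]
      push_cast
      ring
    rw [Finset.sum_congr rfl hterm, Finset.sum_const, nsmul_eq_mul]
    push_cast
    ring
  rw [hzero, add_sub_cancel_left]
  calc ‖_‖ ≤ ∑ p ∈ (Fintype.piFinset (fun _ : ι => A)).filter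
        (fun p => ¬ ∀ i, w (p i) = 0),
        ‖(∫ s in (-S)..S, ch (s * ∑ i, (w (p i) : ℝ) * v i))
          * ch (- ∑ i, (w (p i) : ℝ) * u i)‖ := by
        exact norm_sum_le _ _
    _ ≤ _ := by
        apply Finset.sum_le_sum
        intro p hp
        have hne : (∑ i, (w (p i) : ℝ) * v i) ≠ 0 := by
          intro h0
          have := hv (fun i => w (p i)) h0
          exact (Finset.mem_filter.mp hp).2 fun i => congrFun this i
        rw [norm_mul, ch_abs, mul_one]
        have := integ_ne hne S
        calc ‖∫ s in (-S)..S, ch (s * ∑ i, (w (p i) : ℝ) * v i)‖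
            = ‖∫ s in (-S)..S, ch ((∑ i, (w (p i) : ℝ) * v i) * s)‖ := by
              rw [intervalIntegral.integral_congr (fun s _ => by rw [mul_comm])]
          _ ≤ _ := integ_ne hne S

end Key

section Kernel

def w2 : ℕ × ℕ → ℤ := fun t => (t.1 : ℤ) - t.2
def w4 : (ℕ × ℕ) × (ℕ × ℕ) → ℤ := fun t => w2 t.1 + w2 t.2
def A2 (N : ℕ) : Finset (ℕ × ℕ) := Finset.range N ×ˢ Finset.range N
def A4 (N : ℕ) : Finset ((ℕ × ℕ) × (ℕ × ℕ)) := A2 N ×ˢ A2 N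

variable {ι : Type} [Fintype ι] [DecidableEq ι]

def PP (N : ℕ) (v u : ι → ℝ) (i : ι) (s : ℝ) : ℂ :=
  ∑ k ∈ Finset.range N, ch ((k : ℝ) * (s * v i - u i))

def gg (N : ℕ) (v u : ι → ℝ) (s : ℝ) : ℝ := ∏ i : ι, Complex.normSq (PP N v u i s)

lemma ch_conj (x : ℝ) : (starRingEnd ℂ) (ch x) = ch (-x) := by
  rw [ch, ch, ← Complex.exp_conj]
  congr 1
  simp only [map_mul, Complex.conj_I, Complex.conj_ofReal, map_ofNat]
  push_cast; ring

lemma sq_expand (N : ℕ) (v u : ι → ℝ) (i : ι) (s : ℝ) :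
    ((Complex.normSq (PP N v u i s) : ℝ) : ℂ)
      = ∑ t ∈ A2 N, ch ((w2 t : ℝ) * (s * v i - u i)) := by
  rw [← Complex.mul_conj (PP N v u i s)]
  rw [PP, map_sum]
  rw [Finset.sum_mul_sum]
  rw [A2, Finset.sum_product]
  refine Finset.sum_congr rfl fun k _ => Finset.sum_congr rfl fun l _ => ?_
  rw [ch_conj, ← ch_add]
  congr 1
  rw [w2]
  push_cast; ring

lemma sq2_expand (N : ℕ) (v u : ι → ℝ) (i : ι) (s : ℝ) :
    ((Complex.normSq (PP N v u i s) ^ 2 : ℝ) : ℂ)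
      = ∑ t ∈ A4 N, ch ((w4 t : ℝ) * (s * v i - u i)) := by
  rw [Complex.ofReal_pow, sq_expand, sq, Finset.sum_mul_sum, A4, Finset.sum_product]
  refine Finset.sum_congr rfl fun a _ => Finset.sum_congr rfl fun b _ => ?_
  rw [← ch_add]
  congr 1
  rw [w4]
  push_cast; ring

lemma g_eq (N : ℕ) (v u : ι → ℝ) (s : ℝ) :
    ((gg N v u s : ℝ) : ℂ) = ∏ i : ι, ∑ t ∈ A2 N, ch ((w2 t : ℝ) * (s * v i - u i)) := by
  rw [gg, Complex.ofReal_prod]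
  exact Finset.prod_congr rfl fun i _ => sq_expand N v u i s

lemma g_sq_eq (N : ℕ) (v u : ι → ℝ) (s : ℝ) :
    ((gg N v u s ^ 2 : ℝ) : ℂ) = ∏ i : ι, ∑ t ∈ A4 N, ch ((w4 t : ℝ) * (s * v i - u i)) := by
  rw [gg, ← Finset.prod_pow, Complex.ofReal_prod]
  exact Finset.prod_congr rfl fun i _ => sq2_expand N v u i s

lemma filter_pi {β : Type} [DecidableEq β] (A : Finset β) (w : β → ℤ) :
    ((Fintype.piFinset (fun _ : ι => A)).filter (fun p => ∀ i, w (p i) = 0)).card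
      = (A.filter (fun t => w t = 0)).card ^ (Fintype.card ι) := by
  have h : (Fintype.piFinset (fun _ : ι => A)).filter (fun p => ∀ i, w (p i) = 0)
      = Fintype.piFinset (fun _ : ι => A.filter (fun t => w t = 0)) := by
    ext p
    simp only [Finset.mem_filter, Fintype.mem_piFinset, Finset.mem_filter]
    exact ⟨fun h => fun i => ⟨h.1 i, h.2 i⟩, fun h => ⟨fun i => (h i).1, fun i => (h i).2⟩⟩
  rw [h, Fintype.card_piFinset]
  simp

lemma card2 (N : ℕ) : ((A2 N).filter (fun t => w2 t = 0)).card = N := by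
  have h : (A2 N).filter (fun t => w2 t = 0) = (Finset.range N).image (fun k => (k, k)) := by
    ext ⟨a, b⟩
    rw [Finset.mem_filter]
    simp only [A2, w2, Finset.mem_filter, Finset.mem_product, Finset.mem_range,
      Finset.mem_image, Prod.mk.injEq]
    constructor
    · rintro ⟨⟨ha, hb⟩, hab⟩
      exact ⟨a, ha, rfl, by omega⟩
    · rintro ⟨k, hk, rfl, rfl⟩
      exact ⟨⟨hk, hk⟩, by omega⟩
  rw [h, Finset.card_image_of_injective _ (fun a b h => (Prod.mk.injEq _ _ _ _).mp h |>.1),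
    Finset.card_range]

lemma card4 (M : ℕ) : M ^ 3 ≤ ((A4 (2 * M)).filter (fun t => w4 t = 0)).card := by
  have hmem : ∀ a ∈ Finset.range M ×ˢ Finset.range M ×ˢ Finset.range M,
      (fun x : ℕ × ℕ × ℕ => ((x.2.1 + x.1, x.2.1), (x.2.2, x.2.2 + x.1))) a
        ∈ (A4 (2 * M)).filter (fun t => w4 t = 0) := by
    rintro ⟨d, j, k⟩ hm
    simp only [Finset.mem_product, Finset.mem_range] at hm
    obtain ⟨hd, hj, hk⟩ := hm
    rw [Finset.mem_filter]
    simp only [A4, A2, w4, w2, Finset.mem_filter, Finset.mem_product, Finset.mem_range]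
    refine ⟨⟨⟨by omega, by omega⟩, by omega, by omega⟩, by push_cast; ring⟩
  have hinj : Set.InjOn (fun x : ℕ × ℕ × ℕ => ((x.2.1 + x.1, x.2.1), (x.2.2, x.2.2 + x.1)))
      ↑(Finset.range M ×ˢ Finset.range M ×ˢ Finset.range M) := by
    rintro ⟨d, j, k⟩ - ⟨d', j', k'⟩ - heq
    simp only [Prod.mk.injEq] at heq
    obtain ⟨⟨h1, h2⟩, h3, h4⟩ := heq
    simp only [Prod.mk.injEq]
    omega
  have h := Finset.card_le_card_of_injOn _ hmem hinj
  have hcard : (Finset.range M ×ˢ Finset.range M ×ˢ Finset.range M).card = M ^ 3 := by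
    simp only [Finset.card_product, Finset.card_range]
    ring
  omega

end Kernel

section Bounds

lemma ch_sub_one_abs (θ : ℝ) : ‖ch θ - 1‖ = 2 * |Real.sin (Real.pi * θ)| := by
  have h1 : ch θ = Complex.exp (((2 * Real.pi * θ : ℝ) : ℂ) * Complex.I) := by
    rw [ch]; congr 1; push_cast; ring
  have hre : (ch θ - 1).re = Real.cos (2 * Real.pi * θ) - 1 := by
    rw [Complex.sub_re, h1, Complex.exp_ofReal_mul_I_re, Complex.one_re]
  have him : (ch θ - 1).im = Real.sin (2 * Real.pi * θ) := by
    rw [Complex.sub_im, h1, Complex.exp_ofReal_mul_I_im]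
    simp
  have hsq : (‖ch θ - 1‖) ^ 2 = (2 * |Real.sin (Real.pi * θ)|) ^ 2 := by
    rw [Complex.sq_norm, Complex.normSq_apply, hre, him, mul_pow, _root_.sq_abs,
      show 2 * Real.pi * θ = 2 * (Real.pi * θ) by ring]
    nlinarith [Real.sin_sq_add_cos_sq (Real.pi * θ), Real.sin_sq_add_cos_sq (2 * (Real.pi * θ)),
      Real.cos_two_mul (Real.pi * θ)]
  exact (sq_eq_sq₀ (norm_nonneg _) (by positivity)).mp hsq

lemma sin_lb (θ : ℝ) : 2 * |θ - round θ| ≤ |Real.sin (Real.pi * θ)| := by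
  have h12 : |θ - round θ| ≤ 1 / 2 := abs_sub_round θ
  set δ := θ - round θ with hδ
  have hθ : Real.pi * θ = Real.pi * δ + (round θ : ℤ) * Real.pi := by rw [hδ]; push_cast; ring
  have h2 : |Real.sin (Real.pi * θ)| = |Real.sin (Real.pi * δ)| := by
    rw [hθ, Real.sin_add_int_mul_pi, abs_mul]
    have e0 : |((-1 : ℝ)) ^ round θ| = 1 := by
      rcases Int.even_or_odd (round θ) with he | ho
      · rw [he.neg_one_zpow]; norm_num
      · rw [Odd.neg_one_zpow ho]; norm_num
    rw [e0, one_mul]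
  have habs : |Real.sin (Real.pi * δ)| = Real.sin (Real.pi * |δ|) := by
    have e1 : |Real.sin (Real.pi * δ)| = |Real.sin (Real.pi * |δ|)| := by
      rcases abs_choice δ with h | h
      · rw [h]
      · rw [h, mul_neg, Real.sin_neg, abs_neg]
    rw [e1, _root_.abs_of_nonneg]
    exact Real.sin_nonneg_of_nonneg_of_le_pi (by positivity)
      (by nlinarith [Real.pi_pos, h12, abs_nonneg δ])
  rw [h2, habs]
  have hms := Real.mul_le_sin (x := Real.pi * |δ|) (by positivity)
    (by nlinarith [Real.pi_pos, h12, abs_nonneg δ])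
  have hc : 2 / Real.pi * Real.pi = 2 := div_mul_cancel₀ 2 Real.pi_ne_zero
  nlinarith [hms, hc, abs_nonneg δ]

lemma ch_ne_one {θ : ℝ} (h : θ - round θ ≠ 0) : ch θ ≠ 1 := by
  intro h1
  have h2 : ‖ch θ - 1‖ = 0 := by rw [h1]; simp
  rw [ch_sub_one_abs] at h2
  have h3 : Real.sin (Real.pi * θ) = 0 := by
    have h0 : |Real.sin (Real.pi * θ)| = 0 := by linarith [abs_nonneg (Real.sin (Real.pi * θ))]
    exact abs_eq_zero.mp h0
  rw [Real.sin_eq_zero_iff] at h3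
  obtain ⟨n, hn⟩ := h3
  have hθn : θ = n := by
    have h4 : Real.pi * (n : ℝ) = Real.pi * θ := by linarith [hn]
    exact (mul_left_cancel₀ Real.pi_ne_zero h4).symm
  apply h
  rw [hθn]
  simp

lemma geom_bound {θ : ℝ} (N : ℕ) (h : ch θ ≠ 1) :
    ‖∑ k ∈ Finset.range N, ch ((k : ℝ) * θ)‖ ≤ 2 / ‖ch θ - 1‖ := by
  have h1 : ∀ k : ℕ, ch ((k : ℝ) * θ) = ch θ ^ k := fun k => ch_nat_mul k θ
  rw [Finset.sum_congr rfl fun k _ => h1 k, geom_sum_eq h, norm_div]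
  have hd : 0 < ‖ch θ - 1‖ := by
    rw [norm_pos_iff]
    exact sub_ne_zero.mpr h
  have hnum : ‖ch θ ^ N - 1‖ ≤ 2 := by
    calc ‖ch θ ^ N - 1‖ ≤ ‖ch θ ^ N‖ + ‖(1:ℂ)‖ := by
          simpa using norm_sub_le (ch θ ^ N) (1 : ℂ)
      _ ≤ 2 := by rw [norm_pow, ch_abs, one_pow, norm_one]; norm_num
  exact div_le_div_of_nonneg_right hnum hd.le

end Bounds

section Core

variable {ι : Type} [Fintype ι] [DecidableEq ι]

set_option maxHeartbeats 1000000 in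
lemma core (v : ι → ℝ)
    (hv : ∀ m : ι → ℤ, ∑ i, (m i : ℝ) * v i = 0 → m = 0) (ε : ℝ) (hε : 0 < ε) :
    ∃ S : ℝ, 0 < S ∧ ∀ u : ι → ℝ, ∃ s : ℝ, |s| ≤ S ∧
      ∀ i, ∃ m : ℤ, |s * v i - u i - m| < ε := by
  classical
  set n := Fintype.card ι with hn
  set M : ℕ := ⌈(8 : ℝ) ^ n / ε⌉₊ + 1 with hMdef
  set N : ℕ := 2 * M with hNdef
  have hM1 : 1 ≤ M := Nat.le_add_left 1 _
  have hM1r : (1 : ℝ) ≤ (M : ℝ) := by exact_mod_cast hM1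
  have hMε : (8 : ℝ) ^ n ≤ M * ε := by
    have h1 : (8 : ℝ) ^ n / ε ≤ (⌈(8 : ℝ) ^ n / ε⌉₊ : ℝ) := Nat.le_ceil _
    have h2 : ((⌈(8 : ℝ) ^ n / ε⌉₊ : ℕ) : ℝ) ≤ (M : ℝ) := by
      rw [hMdef]; push_cast; linarith
    calc (8 : ℝ) ^ n = ((8 : ℝ) ^ n / ε) * ε := by field_simp
      _ ≤ (M : ℝ) * ε := by nlinarith
  have hNpos : 0 < N := by rw [hNdef]; omega
  have hNr : (N : ℝ) = 2 * M := by rw [hNdef]; push_cast; ring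
  set Z2 : ℕ := ((Fintype.piFinset (fun _ : ι => A2 N)).filter
    (fun p => ∀ i, w2 (p i) = 0)).card with hZ2def
  set Z4 : ℕ := ((Fintype.piFinset (fun _ : ι => A4 N)).filter
    (fun p => ∀ i, w4 (p i) = 0)).card with hZ4def
  set B2 : ℝ := ∑ p ∈ (Fintype.piFinset (fun _ : ι => A2 N)).filter
      (fun p => ¬ ∀ i, w2 (p i) = 0), 1 / |∑ i, (w2 (p i) : ℝ) * v i| with hB2def
  set B4 : ℝ := ∑ p ∈ (Fintype.piFinset (fun _ : ι => A4 N)).filter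
      (fun p => ¬ ∀ i, w4 (p i) = 0), 1 / |∑ i, (w4 (p i) : ℝ) * v i| with hB4def
  have hB2n : 0 ≤ B2 := Finset.sum_nonneg fun p _ => by positivity
  have hB4n : 0 ≤ B4 := Finset.sum_nonneg fun p _ => by positivity
  have hZ2card : Z2 = N ^ n := by rw [hZ2def, filter_pi, card2]
  have hZ4low : ((M : ℝ) ^ 3) ^ n ≤ (Z4 : ℝ) := by
    have h1 : M ^ 3 ≤ ((A4 N).filter (fun t => w4 t = 0)).card := by
      rw [hNdef]; exact card4 M
    have h2 : (M ^ 3) ^ n ≤ Z4 := by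
      rw [hZ4def, filter_pi]
      exact Nat.pow_le_pow_left h1 n
    calc ((M : ℝ) ^ 3) ^ n = (((M ^ 3) ^ n : ℕ) : ℝ) := by push_cast; ring
      _ ≤ _ := by exact_mod_cast h2
  have hMcube : (1 : ℝ) ≤ ((M : ℝ) ^ 3) ^ n := by
    have hM3 : (1 : ℝ) ≤ (M : ℝ) ^ 3 := by
      calc (1:ℝ) = 1 ^ 3 := by norm_num
        _ ≤ (M : ℝ) ^ 3 := pow_le_pow_left₀ (by norm_num) hM1r 3
    calc (1 : ℝ) = 1 ^ n := (one_pow n).symm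
      _ ≤ ((M : ℝ) ^ 3) ^ n := pow_le_pow_left₀ (by norm_num) hM3 n
  have hZ4pos : (1 : ℝ) ≤ (Z4 : ℝ) := le_trans hMcube hZ4low
  have hZ2pos : (0 : ℝ) < (Z2 : ℝ) := by
    rw [hZ2card]
    have h0 : 0 < N ^ n := Nat.pow_pos hNpos
    exact_mod_cast h0
  clear_value n M N Z2 Z4 B2 B4
  set Mg : ℝ := (Z4 : ℝ) / (2 * Z2) with hMgdef
  have hMgpos : 0 < Mg := by
    rw [hMgdef]
    exact div_pos (by linarith) (by linarith)
  set S : ℝ := (B4 + Mg * B2 + 1) / Z4 + 1 with hSdef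
  have hSpos : 0 < S := by
    have h1 : 0 ≤ (B4 + Mg * B2 + 1) / Z4 := by positivity
    rw [hSdef]; linarith
  clear_value Mg S
  refine ⟨S, hSpos, fun u => ?_⟩
  have hcontP : ∀ i, Continuous fun s => PP N v u i s := fun i =>
    continuous_finset_sum _ (fun k _ => ch_cont (by continuity))
  have hcontg : Continuous (gg N v u) :=
    continuous_finset_prod _ fun i _ => (Complex.continuous_normSq.comp (hcontP i))
  have hint2 : |(∫ s in (-S)..S, gg N v u s) - 2 * S * Z2| ≤ B2 := by
    have h1 := key (A2 N) w2 hv u (S := S) hSpos.le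
    have h2 : (∫ s in (-S)..S, ∏ i : ι, ∑ t ∈ A2 N, ch ((w2 t : ℝ) * (s * v i - u i)))
        = (((∫ s in (-S)..S, gg N v u s) : ℝ) : ℂ) := by
      rw [← intervalIntegral.integral_ofReal]
      exact intervalIntegral.integral_congr fun s _ => (g_eq N v u s).symm
    rw [h2, ← hZ2def, ← hB2def] at h1
    have h3 : ‖((((∫ s in (-S)..S, gg N v u s) - 2 * S * Z2 : ℝ)) : ℂ)‖ ≤ B2 := by
      convert h1 using 2
      push_cast
      ring
    rw [Complex.norm_real, Real.norm_eq_abs] at h3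
    exact h3
  have hint4 : |(∫ s in (-S)..S, (gg N v u s) ^ 2) - 2 * S * Z4| ≤ B4 := by
    have h1 := key (A4 N) w4 hv u (S := S) hSpos.le
    have h2 : (∫ s in (-S)..S, ∏ i : ι, ∑ t ∈ A4 N, ch ((w4 t : ℝ) * (s * v i - u i)))
        = (((∫ s in (-S)..S, (gg N v u s) ^ 2) : ℝ) : ℂ) := by
      rw [← intervalIntegral.integral_ofReal]
      exact intervalIntegral.integral_congr fun s _ => (g_sq_eq N v u s).symm
    rw [h2, ← hZ4def, ← hB4def] at h1
    have h3 : ‖((((∫ s in (-S)..S, (gg N v u s) ^ 2) - 2 * S * Z4 : ℝ)) : ℂ)‖ ≤ B4 := by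
      convert h1 using 2
      push_cast
      ring
    rw [Complex.norm_real, Real.norm_eq_abs] at h3
    exact h3
  have hex : ∃ s ∈ Set.Icc (-S) S, Mg ≤ gg N v u s := by
    by_contra hcon
    push_neg at hcon
    have hI1 : (∫ s in (-S)..S, gg N v u s) ≤ 2 * S * Z2 + B2 := by
      linarith [(abs_le.mp hint2).2]
    have hI4 : 2 * S * Z4 - B4 ≤ ∫ s in (-S)..S, (gg N v u s) ^ 2 := by
      linarith [(abs_le.mp hint4).1]
    have hgnn : ∀ x, 0 ≤ gg N v u x := fun x =>
      Finset.prod_nonneg fun i _ => Complex.normSq_nonneg _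
    have hmono : (∫ s in (-S)..S, (gg N v u s) ^ 2) ≤ ∫ s in (-S)..S, Mg * gg N v u s := by
      apply intervalIntegral.integral_mono_on (by linarith : -S ≤ S)
      · exact ((hcontg.pow 2).intervalIntegrable _ _)
      · exact ((continuous_const.mul hcontg).intervalIntegrable _ _)
      · intro x hx
        calc (gg N v u x) ^ 2 = gg N v u x * gg N v u x := sq (gg N v u x)
          _ ≤ Mg * gg N v u x := mul_le_mul_of_nonneg_right (hcon x hx).le (hgnn x)
    rw [intervalIntegral.integral_const_mul] at hmono
    have hImul : Mg * (∫ s in (-S)..S, gg N v u s) ≤ Mg * (2 * S * Z2 + B2) :=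
      mul_le_mul_of_nonneg_left hI1 hMgpos.le
    have hMgZ : Mg * (2 * S * Z2) = S * Z4 := by
      rw [hMgdef]; field_simp
    have hSZ4 : S * Z4 = B4 + Mg * B2 + 1 + Z4 := by
      rw [hSdef]; field_simp
    nlinarith [hI4, hmono, hImul, hMgZ, hSZ4, hZ4pos]
  obtain ⟨s, hsmem, hgs⟩ := hex
  refine ⟨s, abs_le.mpr ⟨hsmem.1, hsmem.2⟩, fun i => ?_⟩
  have hn1 : 1 ≤ n := by rw [hn]; exact Fintype.card_pos_iff.mpr ⟨i⟩
  have hexp : 2 * (n - 1) + n + 2 = 3 * n := by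
    obtain ⟨k, hk⟩ := Nat.exists_eq_add_of_le hn1
    subst hk
    rw [Nat.add_sub_cancel_left]
    ring
  have hPle : ∀ j, Complex.normSq (PP N v u j s) ≤ (N : ℝ) ^ 2 := by
    intro j
    have h1 : ‖PP N v u j s‖ ≤ N := by
      rw [PP]
      calc ‖∑ k ∈ Finset.range N, ch ((k : ℝ) * (s * v j - u j))‖
          ≤ ∑ k ∈ Finset.range N, ‖ch ((k : ℝ) * (s * v j - u j))‖ :=
            norm_sum_le _ _
        _ = N := by simp [ch_abs]
    calc Complex.normSq (PP N v u j s) = ‖PP N v u j s‖ ^ 2 :=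
        (Complex.sq_norm _).symm
      _ ≤ (N : ℝ) ^ 2 := pow_le_pow_left₀ (norm_nonneg _) h1 2
  have hfac : 2 * (M : ℝ) ^ 2 / 8 ^ n ≤ Complex.normSq (PP N v u i s) := by
    set x := Complex.normSq (PP N v u i s) with hxdef
    have hxnn : 0 ≤ x := Complex.normSq_nonneg _
    have h1 : gg N v u s = x * ∏ j ∈ Finset.univ.erase i, Complex.normSq (PP N v u j s) := by
      rw [gg, ← Finset.mul_prod_erase _ _ (Finset.mem_univ i)]
    have h2 : ∏ j ∈ Finset.univ.erase i, Complex.normSq (PP N v u j s)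
        ≤ ((N : ℝ) ^ 2) ^ (n - 1) := by
      have h3 : ∏ j ∈ Finset.univ.erase i, Complex.normSq (PP N v u j s)
          ≤ ∏ _j ∈ Finset.univ.erase i, (N : ℝ) ^ 2 :=
        Finset.prod_le_prod (fun j _ => Complex.normSq_nonneg _) (fun j _ => hPle j)
      rwa [Finset.prod_const, Finset.card_erase_of_mem (Finset.mem_univ i),
        Finset.card_univ, ← hn] at h3
    have h3 : Mg ≤ x * ((N : ℝ) ^ 2) ^ (n - 1) := by
      refine hgs.trans ?_
      rw [h1]
      exact mul_le_mul_of_nonneg_left h2 hxnn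
    have hZ4x : (Z4 : ℝ) ≤ x * ((N : ℝ) ^ 2) ^ (n - 1) * (2 * Z2) := by
      rw [hMgdef] at h3
      have h4 := (div_le_iff₀ (by positivity : (0:ℝ) < 2 * Z2)).mp h3
      linarith
    have hZ2N : (Z2 : ℝ) = (N : ℝ) ^ n := by rw [hZ2card]; push_cast; ring
    have hpow : ((N : ℝ) ^ 2) ^ (n - 1) * (N : ℝ) ^ n * (N : ℝ) ^ 2 = ((N : ℝ) ^ 3) ^ n := by
      calc ((N : ℝ) ^ 2) ^ (n - 1) * (N : ℝ) ^ n * (N : ℝ) ^ 2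
          = (N : ℝ) ^ (2 * (n - 1) + n + 2) := by rw [← pow_mul, ← pow_add, ← pow_add]
        _ = (N : ℝ) ^ (3 * n) := by rw [hexp]
        _ = ((N : ℝ) ^ 3) ^ n := by rw [pow_mul]
    have hN3 : ((N : ℝ) ^ 3) ^ n = 8 ^ n * ((M : ℝ) ^ 3) ^ n := by
      rw [← mul_pow]
      congr 1
      rw [hNr]; ring
    have hNsq : (0:ℝ) ≤ (N:ℝ) ^ 2 := sq_nonneg _
    have hstep : ((M : ℝ) ^ 3) ^ n * (N : ℝ) ^ 2 ≤ x * 2 * (8 ^ n * ((M : ℝ) ^ 3) ^ n) := by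
      calc ((M : ℝ) ^ 3) ^ n * (N : ℝ) ^ 2 ≤ (Z4 : ℝ) * (N : ℝ) ^ 2 :=
            mul_le_mul_of_nonneg_right hZ4low hNsq
        _ ≤ x * ((N : ℝ) ^ 2) ^ (n - 1) * (2 * Z2) * (N : ℝ) ^ 2 :=
            mul_le_mul_of_nonneg_right hZ4x hNsq
        _ = x * 2 * (((N : ℝ) ^ 2) ^ (n - 1) * (N : ℝ) ^ n * (N : ℝ) ^ 2) := by
            rw [hZ2N]; ring
        _ = x * 2 * (8 ^ n * ((M : ℝ) ^ 3) ^ n) := by rw [hpow, hN3]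
    have hMp : (0 : ℝ) < ((M : ℝ) ^ 3) ^ n := by positivity
    have hfinal : (N : ℝ) ^ 2 ≤ x * 2 * 8 ^ n := by
      have h5 : ((N : ℝ) ^ 2) * ((M : ℝ) ^ 3) ^ n ≤ (x * 2 * 8 ^ n) * ((M : ℝ) ^ 3) ^ n := by
        nlinarith [hstep]
      exact le_of_mul_le_mul_right h5 hMp
    rw [div_le_iff₀ (by positivity : (0:ℝ) < (8:ℝ) ^ n)]
    nlinarith [hfinal, hNr]
  set θ := s * v i - u i with hθdef
  by_cases hsmall : |θ - round θ| < ε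
  · exact ⟨round θ, hsmall⟩
  · exfalso
    push_neg at hsmall
    have hδne : θ - (round θ : ℤ) ≠ 0 := by
      intro h0
      rw [h0] at hsmall
      simp at hsmall
      linarith
    have hch := ch_ne_one hδne
    have hgeo := geom_bound (θ := θ) N hch
    have hPP : PP N v u i s = ∑ k ∈ Finset.range N, ch ((k : ℝ) * θ) := by
      rw [PP, ← hθdef]
    have habs1 : ‖PP N v u i s‖ ≤ 2 / ‖ch θ - 1‖ := hPP ▸ hgeo
    have hsin := sin_lb θ
    have hchabs := ch_sub_one_abs θ
    set d := |θ - (round θ : ℤ)| with hddef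
    have hdpos : 0 < d := lt_of_lt_of_le hε hsmall
    have hCd : 4 * d ≤ ‖ch θ - 1‖ := by rw [hchabs]; linarith
    have hCpos : (0:ℝ) < ‖ch θ - 1‖ := by linarith
    have habs2 : ‖PP N v u i s‖ ≤ 1 / (2 * d) := by
      calc ‖PP N v u i s‖ ≤ 2 / ‖ch θ - 1‖ := habs1
        _ ≤ 2 / (4 * d) := div_le_div_of_nonneg_left (by norm_num) (by linarith) hCd
        _ = 1 / (2 * d) := by
            field_simp
            ring
    have hx2 : Complex.normSq (PP N v u i s) ≤ 1 / (4 * d ^ 2) := by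
      calc Complex.normSq (PP N v u i s) = ‖PP N v u i s‖ ^ 2 :=
          (Complex.sq_norm _).symm
        _ ≤ (1 / (2 * d)) ^ 2 := pow_le_pow_left₀ (norm_nonneg _) habs2 2
        _ = 1 / (4 * d ^ 2) := by field_simp; ring
    have h8p : (0:ℝ) < (8:ℝ) ^ n := by positivity
    have h8one : (1:ℝ) ≤ (8:ℝ) ^ n := by
      calc (1:ℝ) = 1 ^ n := (one_pow n).symm
        _ ≤ (8:ℝ) ^ n := pow_le_pow_left₀ (by norm_num) (by norm_num) n
    have hcomb : 2 * (M:ℝ) ^ 2 * (4 * d ^ 2) ≤ 1 * 8 ^ n := by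
      have := le_trans hfac hx2
      exact (div_le_div_iff₀ h8p (by positivity)).mp this
    have hd2 : ε ^ 2 ≤ d ^ 2 := pow_le_pow_left₀ hε.le hsmall 2
    have hMe2 : (8:ℝ) ^ n * 8 ^ n ≤ ((M:ℝ) * ε) * ((M:ℝ) * ε) :=
      mul_le_mul hMε hMε h8p.le (by positivity)
    have hsmall2 : 8 * ((M:ℝ) ^ 2 * ε ^ 2) ≤ 8 ^ n := by
      nlinarith [hcomb, hd2, sq_nonneg (M:ℝ)]
    nlinarith [hMe2, hsmall2, h8one, h8p]

end Core

end Stmt7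

theorem stmt_7 (r : ℕ) (z : Fin r → ℂ)
    (hV : LinearIndependent ℚ (Sum.elim (fun k : Fin r => (z k).re) (fun k : Fin r => (z k).im)))
    (ε : ℝ) (hε : 0 < ε) :
    ∃ T > (0 : ℝ), ∀ t : ℝ, t > T → ∃ θ : ℂ, ‖θ‖ = 1 ∧
      ∀ k, Metric.infDist (θ * t * z k) gaussianInts < ε := by
  classical
  have hv : ∀ m : (Fin r ⊕ Fin r) → ℤ,
      ∑ i, (m i : ℝ) * (Sum.elim (fun k => -(z k).im) (fun k => (z k).re) i) = 0 → m = 0 := by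
    intro m hm
    have hli := Fintype.linearIndependent_iff.mp hV
    set g : (Fin r ⊕ Fin r) → ℚ :=
      Sum.elim (fun k => (m (Sum.inr k) : ℚ)) (fun k => -(m (Sum.inl k) : ℚ)) with hg
    have hsum : ∑ i, g i • (Sum.elim (fun k : Fin r => (z k).re) (fun k => (z k).im)) i = 0 := by
      rw [Fintype.sum_sum_type] at hm ⊢
      simp only [Sum.elim_inl, Sum.elim_inr, hg, Rat.smul_def] at hm ⊢
      push_cast
      push_cast at hm
      have h2 : ∑ k, (m (Sum.inl k) : ℝ) * (-(z k).im)
          = -∑ k, (m (Sum.inl k) : ℝ) * (z k).im := by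
        rw [← Finset.sum_neg_distrib]
        exact Finset.sum_congr rfl fun k _ => by ring
      have h3 : ∑ k, (-(m (Sum.inl k) : ℝ)) * (z k).im
          = -∑ k, (m (Sum.inl k) : ℝ) * (z k).im := by
        rw [← Finset.sum_neg_distrib]
        exact Finset.sum_congr rfl fun k _ => by ring
      rw [h3]
      rw [h2] at hm
      linarith [hm]
    have hzero := hli g hsum
    funext i
    rcases i with k | k
    · have := hzero (Sum.inr k)
      simp only [hg, Sum.elim_inr, neg_eq_zero] at this
      exact_mod_cast this
    · have := hzero (Sum.inl k)
      simp only [hg, Sum.elim_inl] at this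
      exact_mod_cast this
  obtain ⟨S, hSpos, hcore⟩ := Stmt7.core (ι := Fin r ⊕ Fin r)
    (Sum.elim (fun k => -(z k).im) (fun k => (z k).re)) hv (ε/4) (by linarith)
  set C : ℝ := (∑ k, ‖z k‖) + 1 with hC
  have hCpos : 0 < C := by
    have : 0 ≤ ∑ k, ‖z k‖ := Finset.sum_nonneg fun k _ => norm_nonneg _
    rw [hC]; linarith
  have hzC : ∀ k, ‖z k‖ ≤ C := by
    intro k
    have h1 : ‖z k‖ ≤ ∑ j, ‖z j‖ :=
      Finset.single_le_sum (f := fun j => ‖z j‖)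
        (fun j _ => norm_nonneg _) (Finset.mem_univ k)
    rw [hC]; linarith
  clear_value C
  refine ⟨max S (4 * S^2 * C / ε), lt_max_of_lt_left hSpos, fun t ht => ?_⟩
  have htS : S < t := lt_of_le_of_lt (le_max_left _ _) ht
  have htpos : 0 < t := lt_trans hSpos htS
  have htE : 4 * S^2 * C / ε < t := lt_of_le_of_lt (le_max_right _ _) ht
  obtain ⟨s, hsS, hm⟩ := hcore (Sum.elim (fun k => -(t * (z k).re)) (fun k => -(t * (z k).im)))
  refine ⟨Complex.exp ((s/t : ℝ) * Complex.I), Complex.norm_exp_ofReal_mul_I _, fun k => ?_⟩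
  obtain ⟨a, ha⟩ := hm (Sum.inl k)
  obtain ⟨b, hb⟩ := hm (Sum.inr k)
  simp only [Sum.elim_inl, Sum.elim_inr] at ha hb
  have ha' : |t * (z k).re - s * (z k).im - a| < ε/4 := by
    rw [show t * (z k).re - s * (z k).im - (a:ℝ)
      = s * -(z k).im - -(t * (z k).re) - a by ring]
    exact ha
  have hb' : |t * (z k).im + s * (z k).re - b| < ε/4 := by
    rw [show t * (z k).im + s * (z k).re - (b:ℝ)
      = s * (z k).re - -(t * (z k).im) - b by ring]
    exact hb
  have hmem : ((a : ℂ) + (b : ℂ) * Complex.I) ∈ gaussianInts := ⟨a, b, rfl⟩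
  have ht0 : (t : ℂ) ≠ 0 := by exact_mod_cast htpos.ne'
  set w : ℂ := (↑t * z k + ↑s * Complex.I * z k) - ((a : ℂ) + (b : ℂ) * Complex.I) with hw
  have hre : w.re = t * (z k).re - s * (z k).im - a := by
    rw [hw]; simp [Complex.mul_re]; try ring
  have him : w.im = t * (z k).im + s * (z k).re - b := by
    rw [hw]; simp [Complex.mul_im]; try ring
  have h1 : ‖w‖ < ε/2 := by
    calc ‖w‖ ≤ |w.re| + |w.im| := Complex.norm_le_abs_re_add_abs_im w
      _ < ε/2 := by rw [hre, him]; linarith [ha', hb']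
  have hsplit : Complex.exp ((s/t : ℝ) * Complex.I) * ↑t * z k
      = (↑t * z k + ↑s * Complex.I * z k)
        + (Complex.exp ((s/t : ℝ) * Complex.I) - 1 - (s/t : ℝ) * Complex.I) * (↑t * z k) := by
    push_cast
    field_simp
    ring
  have habs_st : ‖(s/t : ℝ) * Complex.I‖ ≤ S / t := by
    rw [norm_mul, Complex.norm_I, mul_one, Complex.norm_real, Real.norm_eq_abs, abs_div,
      abs_of_pos htpos]
    exact div_le_div_of_nonneg_right hsS htpos.le
  have hSt1 : S / t ≤ 1 := by
    rw [div_le_one htpos]; linarith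
  have h2 : ‖(Complex.exp ((s/t : ℝ) * Complex.I) - 1 - (s/t : ℝ) * Complex.I)
      * (↑t * z k)‖ < ε/2 := by
    have h3 := Complex.norm_exp_sub_one_sub_id_le (le_trans habs_st hSt1)
    have h4 : ‖(s/t : ℝ) * Complex.I‖ ^ 2 ≤ (S/t)^2 :=
      pow_le_pow_left₀ (norm_nonneg _) habs_st 2
    have h5 : ‖↑t * z k‖ ≤ t * C := by
      rw [norm_mul, Complex.norm_real, Real.norm_eq_abs, abs_of_pos htpos]
      exact mul_le_mul_of_nonneg_left (hzC k) htpos.le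
    calc ‖_‖ = ‖Complex.exp ((s/t : ℝ) * Complex.I) - 1
          - (s/t : ℝ) * Complex.I‖ * ‖↑t * z k‖ := norm_mul _ _
      _ ≤ (S/t)^2 * (t * C) := by
          apply mul_le_mul (le_trans h3 h4) h5 (norm_nonneg _) (by positivity)
      _ = S^2 * C / t := by field_simp
      _ < ε/2 := by
          rw [div_lt_iff₀ htpos]
          have h6 : 4 * S^2 * C < t * ε := (div_lt_iff₀ hε).mp htE
          have h7 : 0 < t * ε := mul_pos htpos hε
          linarith
  have hlt : dist (Complex.exp ((s/t : ℝ) * Complex.I) * ↑t * z k)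
      ((a : ℂ) + (b : ℂ) * Complex.I) < ε := by
    rw [Complex.dist_eq, hsplit]
    calc ‖(↑t * z k + ↑s * Complex.I * z k)
          + (Complex.exp ((s/t : ℝ) * Complex.I) - 1 - (s/t : ℝ) * Complex.I) * (↑t * z k)
          - ((a : ℂ) + (b : ℂ) * Complex.I)‖
        ≤ ‖w‖ + ‖(Complex.exp ((s/t : ℝ) * Complex.I) - 1
          - (s/t : ℝ) * Complex.I) * (↑t * z k)‖ := by
          rw [hw]
          simpa [add_sub_right_comm] using
            norm_add_le ((↑t * z k + ↑s * Complex.I * z k) - ((a : ℂ) + (b : ℂ) * Complex.I))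
              ((Complex.exp ((s/t : ℝ) * Complex.I) - 1 - (s/t : ℝ) * Complex.I) * (↑t * z k))
      _ < ε := by linarith
  calc Metric.infDist (Complex.exp ((s/t : ℝ) * Complex.I) * ↑t * z k) gaussianInts
      ≤ dist (Complex.exp ((s/t : ℝ) * Complex.I) * ↑t * z k)
        ((a : ℂ) + (b : ℂ) * Complex.I) := Metric.infDist_le_dist_of_mem hmem
    _ < ε := hlt

end
end

section
/- Let z₁,…,z_r ∈ ℂ be linearly independent over ℚ[i]. Then for all but at most countably many φ ∈ [0, 2π), the 2r complex numbers e^{iφ}z₁,…,e^{iφ}z_r, e^{−iφ}·conj(z₁),…,e^{−iφ}·conj(z_r) are linearly independent over ℚ[i]. -/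
open Complex

noncomputable def QI : Subfield ℂ := Subfield.closure {Complex.I}

lemma subring_char : ∀ x ∈ Subring.closure ({Complex.I} : Set ℂ),
    ∃ a b : ℤ, x = (a : ℂ) + (b : ℂ) * Complex.I := by
  intro x hx
  induction hx using Subring.closure_induction with
  | mem y hy => exact ⟨0, 1, by simp at hy; simp [hy]⟩
  | zero => exact ⟨0, 0, by simp⟩
  | one => exact ⟨1, 0, by simp⟩
  | add y z _ _ hy hz =>
      obtain ⟨a, b, rfl⟩ := hy; obtain ⟨c, d, rfl⟩ := hz
      exact ⟨a + c, b + d, by push_cast; ring⟩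
  | neg y _ hy =>
      obtain ⟨a, b, rfl⟩ := hy; exact ⟨-a, -b, by push_cast; ring⟩
  | mul y z _ _ hy hz =>
      obtain ⟨a, b, rfl⟩ := hy; obtain ⟨c, d, rfl⟩ := hz
      exact ⟨a * c - b * d, a * d + b * c, by push_cast; linear_combination (b * d : ℂ) * Complex.I_sq⟩

lemma QI_countable : (QI : Set ℂ).Countable := by
  have h : (QI : Set ℂ) ⊆ Set.range (fun p : (ℤ × ℤ) × (ℤ × ℤ) =>
      ((p.1.1 : ℂ) + (p.1.2 : ℂ) * Complex.I) / ((p.2.1 : ℂ) + (p.2.2 : ℂ) * Complex.I)) := by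
    intro x hx
    rw [SetLike.mem_coe, QI, Subfield.mem_closure_iff] at hx
    obtain ⟨y, hy, w, hw, rfl⟩ := hx
    obtain ⟨a, b, rfl⟩ := subring_char y hy
    obtain ⟨c, d, rfl⟩ := subring_char w hw
    exact ⟨((a, b), (c, d)), rfl⟩
  exact (Set.countable_range _).mono h

instance : Countable QI := (Set.countable_coe_iff).2 QI_countable

lemma QI_smul (a : QI) (x : ℂ) : a • x = (a : ℂ) * x := rfl

lemma conj_mem_QI {x : ℂ} (hx : x ∈ QI) : (starRingEnd ℂ) x ∈ QI := by
  have h : QI.map (starRingEnd ℂ) ≤ QI := by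
    rw [QI, RingHom.map_field_closure]
    refine Subfield.closure_le.2 ?_
    simp only [Set.image_singleton, Complex.conj_I, Set.singleton_subset_iff, SetLike.mem_coe]
    exact Subfield.neg_mem _ (Subfield.subset_closure rfl)
  exact h ⟨x, hx, rfl⟩

lemma sq_roots_finite (c : ℂ) : {w : ℂ | w ^ 2 = c}.Finite := by
  by_cases h : ∃ u : ℂ, u ^ 2 = c
  · obtain ⟨u, hu⟩ := h
    refine ((Set.finite_singleton (-u)).insert u).subset ?_
    intro w hw
    have hw' : w ^ 2 = c := hw
    have h0 : (w - u) * (w + u) = 0 := by linear_combination hw' - hu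
    rcases mul_eq_zero.1 h0 with h1 | h1
    · exact Set.mem_insert_iff.2 (Or.inl (sub_eq_zero.1 h1))
    · exact Set.mem_insert_iff.2 (Or.inr (by simp [eq_neg_of_add_eq_zero_left h1]))
  · have : {w : ℂ | w ^ 2 = c} = ∅ := by
      ext w; simp only [Set.mem_setOf_eq, Set.mem_empty_iff_false, iff_false]
      exact fun hw => h ⟨w, hw⟩
    simp [this]

theorem stmt_9 (r : ℕ) (z : Fin r → ℂ) (hz : LinearIndependent QI z) :
    Set.Countable {φ ∈ Set.Ico (0 : ℝ) (2 * Real.pi) |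
      ¬ LinearIndependent QI
        (Sum.elim (fun k : Fin r => Complex.exp (Complex.I * φ) * z k)
                  (fun k : Fin r => Complex.exp (-(Complex.I * φ)) * (starRingEnd ℂ) (z k)))} := by
  classical
  set F : ((Fin r ⊕ Fin r) → QI) → ℂ := fun g =>
    -(∑ k, ((g (Sum.inr k) : ℂ)) * (starRingEnd ℂ) (z k)) / (∑ k, ((g (Sum.inl k) : ℂ)) * z k)
    with hF
  have hS : (Set.range F).Countable := Set.countable_range _
  -- each fiber set is finite
  have hT : ∀ c : ℂ, {φ ∈ Set.Ico (0 : ℝ) (2 * Real.pi) |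
      Complex.exp (Complex.I * φ) ^ 2 = c}.Finite := by
    intro c
    apply Set.Finite.of_finite_image (f := fun φ : ℝ => Complex.exp (Complex.I * φ))
    · refine (sq_roots_finite c).subset ?_
      rintro w ⟨φ, hφ, rfl⟩
      exact hφ.2
    · rintro φ1 ⟨⟨h10, h12⟩, -⟩ φ2 ⟨⟨h20, h22⟩, -⟩ heq
      rw [Complex.exp_eq_exp_iff_exists_int] at heq
      obtain ⟨n, hn⟩ := heq
      have hn' : (φ1 : ℂ) = (φ2 : ℂ) + n * (2 * Real.pi) := by
        linear_combination (-Complex.I) * hn + ((φ1 : ℂ) - (φ2 : ℂ) - n * (2 * Real.pi)) * Complex.I_sq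
      have hr : φ1 = φ2 + n * (2 * Real.pi) := by
        exact_mod_cast hn'
      have hpi := Real.pi_pos
      have h1 : (n : ℝ) < 1 := by nlinarith
      have h2 : (-1 : ℝ) < (n : ℝ) := by nlinarith
      have hn0 : n = 0 := by
        have h1' : n < 1 := by exact_mod_cast h1
        have h2' : (-1 : ℤ) < n := by exact_mod_cast h2
        omega
      rw [hn0] at hr; simpa using hr
  refine ((hS.biUnion (fun c _ => (hT c).countable)).mono ?_)
  rintro φ ⟨hmem, hnl⟩
  rw [Fintype.not_linearIndependent_iff] at hnl
  obtain ⟨g, hsum, i0, hi0⟩ := hnl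
  set A : ℂ := ∑ k, ((g (Sum.inl k) : ℂ)) * z k with hA
  set B : ℂ := ∑ k, ((g (Sum.inr k) : ℂ)) * (starRingEnd ℂ) (z k) with hB
  have hsum' : Complex.exp (Complex.I * φ) * A + Complex.exp (-(Complex.I * φ)) * B = 0 := by
    rw [Fintype.sum_sum_type] at hsum
    rw [hA, hB, Finset.mul_sum, Finset.mul_sum, ← hsum]
    congr 1 <;> refine Finset.sum_congr rfl fun k _ => ?_ <;>
      · simp only [Sum.elim_inl, Sum.elim_inr, QI_smul]; ring
  have hli := Fintype.linearIndependent_iff.1 hz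
  have hb_of_B0 : B = 0 → ∀ k, g (Sum.inr k) = 0 := by
    intro hB0 k
    have hc : ∑ j, (⟨(starRingEnd ℂ) (g (Sum.inr j) : ℂ), conj_mem_QI (g (Sum.inr j)).2⟩ : QI) • z j = 0 := by
      have := congrArg (starRingEnd ℂ) hB0
      rw [hB, map_sum, map_zero] at this
      rw [← this]
      refine Finset.sum_congr rfl fun j _ => ?_
      simp [QI_smul]
    have := hli _ hc k
    have : (starRingEnd ℂ) (g (Sum.inr k) : ℂ) = 0 := congrArg Subtype.val this
    ext
    simpa using congrArg (starRingEnd ℂ) this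
  have hAne : A ≠ 0 := by
    intro hA0
    have ha : ∀ k, g (Sum.inl k) = 0 := by
      intro k
      refine hli (fun j => g (Sum.inl j)) ?_ k
      rw [show (∑ j : Fin r, g (Sum.inl j) • z j) = A from rfl]
      exact hA0
    have hB0 : B = 0 := by
      have := hsum'
      rw [hA0, mul_zero, zero_add] at this
      exact (mul_eq_zero.1 this).resolve_left (Complex.exp_ne_zero _)
    have hb := hb_of_B0 hB0
    cases i0 with
    | inl k => exact hi0 (ha k)
    | inr k => exact hi0 (hb k)
  have hkey : Complex.exp (Complex.I * φ) ^ 2 = F g := by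
    rw [hF]
    have hexp : Complex.exp (Complex.I * φ) * Complex.exp (-(Complex.I * φ)) = 1 := by
      rw [← Complex.exp_add]; simp
    field_simp
    have : Complex.exp (Complex.I * φ) ^ 2 * A + B = 0 := by
      have := congrArg (fun x => Complex.exp (Complex.I * φ) * x) hsum'
      simp only [mul_add, mul_zero] at this
      calc Complex.exp (Complex.I * φ) ^ 2 * A + B
          = Complex.exp (Complex.I * φ) * (Complex.exp (Complex.I * φ) * A)
            + Complex.exp (Complex.I * φ) * (Complex.exp (-(Complex.I * φ)) * B) := by
              rw [← mul_assoc, ← mul_assoc, hexp]; ring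
        _ = 0 := this
    have hA' : A * A⁻¹ = 1 := mul_inv_cancel₀ hAne
    rw [hA] at hA' this; rw [hB] at this
    linear_combination (∑ k, ((g (Sum.inl k) : ℂ)) * z k)⁻¹ * this - Complex.exp (Complex.I * φ) ^ 2 * hA'
  exact Set.mem_biUnion (Set.mem_range_self g) ⟨hmem, hkey⟩
end

section
/- Let z₁,…,z_r ∈ ℂ be linearly independent over ℚ[i]. Then for all but at most countably many φ ∈ [0, 2π), the tuple (e^{iφ}z₁,…,e^{iφ}z_r) is typical, i.e., the 2r real numbers Re(e^{iφ}z_k), Im(e^{iφ}z_k) (k = 1,…,r) are linearly independent over ℚ. -/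
open Complex

lemma expInj : Set.InjOn (fun φ : ℝ => Complex.exp (Complex.I * φ)) (Set.Ico 0 (2 * Real.pi)) := by
  intro x hx y hy hxy
  simp only [Complex.exp_eq_exp_iff_exists_int] at hxy
  obtain ⟨n, hn⟩ := hxy
  have him : x = y + n * (2 * Real.pi) := by
    have := congrArg Complex.im hn
    simpa using this
  have hpi := Real.pi_pos
  rcases lt_trichotomy n 0 with h | h | h
  · have hn1 : n ≤ -1 := by omega
    have : (n : ℝ) ≤ -1 := by exact_mod_cast hn1
    nlinarith [hx.1, hx.2, hy.1, hy.2]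
  · simp [h] at him; linarith [him]
  · have : (1 : ℝ) ≤ n := by exact_mod_cast h
    nlinarith [hx.1, hx.2, hy.1, hy.2]

lemma finite_bad (S : ℂ) (hS : S ≠ 0) :
    {φ ∈ Set.Ico (0:ℝ) (2*Real.pi) | (Complex.exp (Complex.I * φ) * S).re = 0}.Finite := by
  apply Set.Finite.of_finite_image (f := fun φ : ℝ => Complex.exp (Complex.I * φ))
  · apply Set.Finite.subset
      ((Set.finite_singleton (-((‖S‖ : ℝ) : ℂ) * Complex.I / S)).insert (((‖S‖ : ℝ) : ℂ) * Complex.I / S))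
    rintro w ⟨φ, ⟨hφ, hre⟩, rfl⟩
    set w := Complex.exp (Complex.I * φ) with hw
    have habs : ‖w‖ = 1 := by simp [hw, Complex.norm_exp]
    have h1 : w * S = ((w*S).im : ℂ) * Complex.I := by
      conv_lhs => rw [← Complex.re_add_im (w*S)]
      rw [hre]; simp
    have h2 : |(w*S).im| = ‖S‖ := by
      have := congrArg (‖·‖) h1
      rw [norm_mul, norm_mul, Complex.norm_real, Real.norm_eq_abs, Complex.norm_I, habs, mul_one, one_mul] at this
      exact this.symm
    have hw' : w = ((w*S).im : ℂ) * Complex.I / S := by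
      rw [← h1]; field_simp
    simp only [Set.mem_insert_iff, Set.mem_singleton_iff]
    rcases (abs_eq (norm_nonneg S)).mp h2 with h | h
    · left; rw [show Complex.exp (Complex.I * φ) = w from rfl, hw', h]
    · right; rw [show Complex.exp (Complex.I * φ) = w from rfl, hw', h]; push_cast; ring
  · exact expInj.mono (fun φ hφ => hφ.1)

theorem stmt_11 (r : ℕ) (z : Fin r → ℂ) (hz : LinearIndependent QI z) :
    Set.Countable {φ ∈ Set.Ico (0 : ℝ) (2 * Real.pi) |
      ¬ LinearIndependent ℚ
        (Sum.elim (fun k : Fin r => (Complex.exp (Complex.I * φ) * z k).re)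
                  (fun k : Fin r => (Complex.exp (Complex.I * φ) * z k).im))} := by
  classical
  set S : ((Fin r ⊕ Fin r) → ℚ) → ℂ :=
    fun q => ∑ k, ((q (Sum.inl k) : ℂ) - (q (Sum.inr k) : ℂ) * Complex.I) * z k with hS
  have key : {φ ∈ Set.Ico (0 : ℝ) (2 * Real.pi) |
      ¬ LinearIndependent ℚ
        (Sum.elim (fun k : Fin r => (Complex.exp (Complex.I * φ) * z k).re)
                  (fun k : Fin r => (Complex.exp (Complex.I * φ) * z k).im))} ⊆
      ⋃ q ∈ {q : (Fin r ⊕ Fin r) → ℚ | q ≠ 0},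
        {φ ∈ Set.Ico (0:ℝ) (2*Real.pi) | (Complex.exp (Complex.I * φ) * S q).re = 0} := by
    rintro φ ⟨hφ, hli⟩
    rw [Fintype.not_linearIndependent_iff] at hli
    obtain ⟨q, hsum, i, hi⟩ := hli
    have hq0 : q ≠ 0 := fun h => hi (by simp [h])
    refine Set.mem_biUnion hq0 ⟨hφ, ?_⟩
    have hterm : ∀ k : Fin r,
        (Complex.exp (Complex.I * φ) * (((q (Sum.inl k) : ℂ) - (q (Sum.inr k) : ℂ) * Complex.I) * z k)).re
          = (q (Sum.inl k) : ℝ) * (Complex.exp (Complex.I * φ) * z k).re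
            + (q (Sum.inr k) : ℝ) * (Complex.exp (Complex.I * φ) * z k).im := by
      intro k
      simp [Complex.mul_re, Complex.mul_im]
      ring
    rw [hS]
    rw [Finset.mul_sum, Complex.re_sum]
    rw [Finset.sum_congr rfl (fun k _ => hterm k), Finset.sum_add_distrib]
    rw [Fintype.sum_sum_type] at hsum
    simpa [Rat.smul_def, smul_eq_mul, mul_add] using hsum
  refine Set.Countable.mono key ?_
  refine Set.Countable.biUnion (Set.to_countable _) ?_
  intro q hq
  refine (finite_bad _ ?_).countable
  intro hS0
  have hco := Fintype.linearIndependent_iff.mp hz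
    (fun k => (⟨(q (Sum.inl k) : ℂ) - (q (Sum.inr k) : ℂ) * Complex.I,
      sub_mem (SubfieldClass.ratCast_mem _ _)
        (mul_mem (SubfieldClass.ratCast_mem _ _) (Subfield.subset_closure rfl))⟩ : QI))
    (by exact hS0)
  apply hq
  funext i
  cases i with
  | inl k =>
    have := congrArg (fun x : QI => (x : ℂ).re) (hco k)
    simpa using this
  | inr k =>
    have := congrArg (fun x : QI => (x : ℂ).im) (hco k)
    simpa using this
end

section
/- Suppose every finite m-flat metric space X satisfies lim_{t→∞} τ_m(tX) = 0 and every finite n-flat metric space satisfies lim_{t→∞} τ_n(tX) = 0. Then every finite (m+n)-flat metric space X satisfies lim_{t→∞} τ_{m+n}(tX) = 0. -/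
open Metric

/-- `X` is `k`-flat: it embeds isometrically into `ℝ^k`. -/
def IsFlat (k : ℕ) (X : Type) [MetricSpace X] : Prop :=
  ∃ f : X → EuclideanSpace ℝ (Fin k), Isometry f

/-- `lim_{t → ∞} τ_k (tX) = 0`: for every `ε > 0`, for all large `t` there is an
isometric embedding of the scaled space `tX` into `ℝ^k` taking all points
`ε`-close to the lattice `ℤ^k`. -/
def TauTendstoZero (k : ℕ) (X : Type) [MetricSpace X] : Prop :=
  ∀ ε > (0 : ℝ), ∃ T : ℝ, ∀ t > T, ∃ f : X → EuclideanSpace ℝ (Fin k),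
    (∀ x y : X, dist (f x) (f y) = t * dist x y) ∧
    (∀ x : X, Metric.infDist (f x) (intLattice k) < ε)

/-- Concatenation of two Euclidean vectors. -/
def eapp {m n : ℕ} (a : EuclideanSpace ℝ (Fin m)) (b : EuclideanSpace ℝ (Fin n)) :
    EuclideanSpace ℝ (Fin (m + n)) := WithLp.toLp 2 (fun i => Fin.addCases (motive := fun _ => ℝ) (fun i => a i) (fun j => b j) i)

lemma dist_eapp_sq {m n : ℕ} (a a' : EuclideanSpace ℝ (Fin m))
    (b b' : EuclideanSpace ℝ (Fin n)) :
    dist (eapp a b) (eapp a' b') ^ 2 = dist a a' ^ 2 + dist b b' ^ 2 := by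
  rw [EuclideanSpace.dist_eq, EuclideanSpace.dist_eq, EuclideanSpace.dist_eq,
    Real.sq_sqrt (Finset.sum_nonneg fun i _ => sq_nonneg _),
    Real.sq_sqrt (Finset.sum_nonneg fun i _ => sq_nonneg _),
    Real.sq_sqrt (Finset.sum_nonneg fun i _ => sq_nonneg _),
    Fin.sum_univ_add (fun i => dist (eapp a b i) (eapp a' b' i) ^ 2)]
  simp [eapp]

def eleft {m n : ℕ} (u : EuclideanSpace ℝ (Fin (m + n))) : EuclideanSpace ℝ (Fin m) :=
  WithLp.toLp 2 (fun i => u (Fin.castAdd n i))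

def eright {m n : ℕ} (u : EuclideanSpace ℝ (Fin (m + n))) : EuclideanSpace ℝ (Fin n) :=
  WithLp.toLp 2 (fun j => u (Fin.natAdd m j))

lemma dist_split_sq {m n : ℕ} (u v : EuclideanSpace ℝ (Fin (m + n))) :
    dist u v ^ 2 = dist (eleft (n := n) u) (eleft v) ^ 2 + dist (eright (m := m) u) (eright v) ^ 2 := by
  rw [EuclideanSpace.dist_eq, EuclideanSpace.dist_eq, EuclideanSpace.dist_eq,
    Real.sq_sqrt (Finset.sum_nonneg fun i _ => sq_nonneg _),
    Real.sq_sqrt (Finset.sum_nonneg fun i _ => sq_nonneg _),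
    Real.sq_sqrt (Finset.sum_nonneg fun i _ => sq_nonneg _),
    Fin.sum_univ_add (fun i => dist (u i) (v i) ^ 2)]
  rfl

lemma eapp_mem_lattice {m n : ℕ} {a : EuclideanSpace ℝ (Fin m)}
    {b : EuclideanSpace ℝ (Fin n)} (ha : a ∈ intLattice m) (hb : b ∈ intLattice n) :
    eapp a b ∈ intLattice (m + n) := by
  intro i
  refine Fin.addCases (fun i => ?_) (fun j => ?_) i
  · simpa [eapp] using ha i
  · simpa [eapp] using hb j

lemma lattice_nonempty (k : ℕ) : (intLattice k).Nonempty :=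
  ⟨WithLp.toLp 2 (fun _ => (0 : ℝ)), fun i => ⟨0, by simp⟩⟩

theorem stmt_14 (m n : ℕ)
    (hm : ∀ (X : Type) [MetricSpace X] [Fintype X], IsFlat m X → TauTendstoZero m X)
    (hn : ∀ (X : Type) [MetricSpace X] [Fintype X], IsFlat n X → TauTendstoZero n X) :
    ∀ (X : Type) [MetricSpace X] [Fintype X],
      IsFlat (m + n) X → TauTendstoZero (m + n) X := by
  intro X _ _ hflat ε hε
  classical
  obtain ⟨f, hf⟩ := hflat
  set g : X → EuclideanSpace ℝ (Fin m) := fun x => eleft (f x) with hg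
  set h : X → EuclideanSpace ℝ (Fin n) := fun x => eright (f x) with hh
  haveI : Fintype (Set.range g) := (Set.finite_range g).fintype
  haveI : Fintype (Set.range h) := (Set.finite_range h).fintype
  obtain ⟨T₁, hT₁⟩ := hm (Set.range g) ⟨Subtype.val, isometry_subtype_coe⟩ (ε / 2) (by linarith)
  obtain ⟨T₂, hT₂⟩ := hn (Set.range h) ⟨Subtype.val, isometry_subtype_coe⟩ (ε / 2) (by linarith)
  refine ⟨max 0 (max T₁ T₂), fun t ht => ?_⟩
  have ht0 : 0 < t := lt_of_le_of_lt (le_max_left _ _) ht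
  obtain ⟨φ, hφd, hφl⟩ := hT₁ t (lt_of_le_of_lt ((le_max_left T₁ T₂).trans (le_max_right 0 _)) ht)
  obtain ⟨ψ, hψd, hψl⟩ := hT₂ t (lt_of_le_of_lt ((le_max_right T₁ T₂).trans (le_max_right 0 _)) ht)
  refine ⟨fun x => eapp (φ ⟨g x, ⟨x, rfl⟩⟩) (ψ ⟨h x, ⟨x, rfl⟩⟩), fun x y => ?_, fun x => ?_⟩
  · have key : dist (eapp (φ ⟨g x, ⟨x, rfl⟩⟩) (ψ ⟨h x, ⟨x, rfl⟩⟩))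
        (eapp (φ ⟨g y, ⟨y, rfl⟩⟩) (ψ ⟨h y, ⟨y, rfl⟩⟩)) ^ 2 = (t * dist x y) ^ 2 := by
      rw [dist_eapp_sq, hφd, hψd]
      have h1 : dist (⟨g x, ⟨x, rfl⟩⟩ : Set.range g) ⟨g y, ⟨y, rfl⟩⟩ = dist (g x) (g y) :=
        Subtype.dist_eq _ _
      have h2 : dist (⟨h x, ⟨x, rfl⟩⟩ : Set.range h) ⟨h y, ⟨y, rfl⟩⟩ = dist (h x) (h y) :=
        Subtype.dist_eq _ _
      have h3 : dist x y ^ 2 = dist (g x) (g y) ^ 2 + dist (h x) (h y) ^ 2 := by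
        rw [← hf.dist_eq x y]
        exact dist_split_sq (f x) (f y)
      rw [h1, h2]
      ring_nf
      nlinarith [h3]
    have d1 : (0:ℝ) ≤ dist (eapp (φ ⟨g x, ⟨x, rfl⟩⟩) (ψ ⟨h x, ⟨x, rfl⟩⟩))
        (eapp (φ ⟨g y, ⟨y, rfl⟩⟩) (ψ ⟨h y, ⟨y, rfl⟩⟩)) := dist_nonneg
    have d2 : (0:ℝ) ≤ t * dist x y := mul_nonneg ht0.le dist_nonneg
    nlinarith [key]
  · obtain ⟨u, hu, hdu⟩ := (Metric.infDist_lt_iff (lattice_nonempty m)).mp (hφl ⟨g x, ⟨x, rfl⟩⟩)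
    obtain ⟨v, hv, hdv⟩ := (Metric.infDist_lt_iff (lattice_nonempty n)).mp (hψl ⟨h x, ⟨x, rfl⟩⟩)
    have hw : eapp u v ∈ intLattice (m + n) := eapp_mem_lattice hu hv
    have hdist : dist (eapp (φ ⟨g x, ⟨x, rfl⟩⟩) (ψ ⟨h x, ⟨x, rfl⟩⟩)) (eapp u v) < ε := by
      have hsq := dist_eapp_sq (φ ⟨g x, ⟨x, rfl⟩⟩) u (ψ ⟨h x, ⟨x, rfl⟩⟩) v
      nlinarith [dist_nonneg (x := eapp (φ ⟨g x, ⟨x, rfl⟩⟩) (ψ ⟨h x, ⟨x, rfl⟩⟩)) (y := eapp u v),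
        dist_nonneg (x := φ ⟨g x, ⟨x, rfl⟩⟩) (y := u), dist_nonneg (x := ψ ⟨h x, ⟨x, rfl⟩⟩) (y := v)]
    exact (Metric.infDist_le_dist_of_mem hw).trans_lt hdist
end
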